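/- arXiv:0901.1283 — 4 statements merged into one kernel-verified Lean document; each statement's English description precedes it below -/
import Mathlib

section
/- Under hypotheses (a1)–(a5), let M = max_{x ∈ [0,K]} f(x) and m = min_{x ∈ [K,M]} f(x), and suppose M > K. Let x_max be the greatest point of [0,K] at which f attains the value M and x_min the least point of [K,M] at which f attains the value m, and assume m = f(x_min) < x_max < K. Then [m, M] is an attracting interval: every solution x of the initial value problem for the distributed-delay equation satisfies m ≤ liminf_{t→∞} x(t) and limsup_{t→∞} x(t) ≤ M. -/
open MeasureTheory Filter Set Topology

set_option maxHeartbeats 4000000 in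
theorem distributed_delay_attracting_interval
    (f : ℝ → ℝ) (L K : ℝ) (hL : 0 ≤ L) (hK : 0 < K)
    (h r : ℝ → ℝ) (μ : ℝ → Measure ℝ) (φ : ℝ → ℝ)
    (hf_cont : Continuous f)
    (hf_nonneg : ∀ y : ℝ, 0 ≤ y → 0 ≤ f y)
    (hf_lip : ∀ u v : ℝ, 0 ≤ u → 0 ≤ v → |f u - f v| ≤ L * |u - v|)
    (hf_zero : f 0 = 0)
    (hf_below : ∀ y : ℝ, 0 < y → y < K → y < f y)
    (hf_above : ∀ y : ℝ, K < y → 0 < f y ∧ f y < y)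
    (hh_meas : Measurable h)
    (hh_le : ∀ t : ℝ, 0 ≤ t → h t ≤ t)
    (hh_tend : Tendsto h atTop atTop)
    (hr_meas : Measurable r)
    (hr_nonneg : ∀ t : ℝ, 0 ≤ r t)
    (hr_bdd : ∃ C : ℝ, ∀ᵐ t ∂volume, r t ≤ C)
    (hr_div : ¬ IntegrableOn r (Ici (0 : ℝ)))
    (hμ_prob : ∀ t : ℝ, 0 ≤ t → IsProbabilityMeasure (μ t))
    (hμ_supp : ∀ t : ℝ, 0 ≤ t → μ t (Icc (h t) t)ᶜ = 0)
    (hμ_meas : ∀ g : ℝ → ℝ, Measurable g → (∃ C : ℝ, ∀ y : ℝ, |g y| ≤ C) →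
      Measurable (fun t => ∫ s, g s ∂(μ t)))
    (hφ_cont : ContinuousOn φ (Iic (0 : ℝ)))
    (hφ_bdd : ∃ C : ℝ, ∀ t : ℝ, t ≤ 0 → |φ t| ≤ C)
    (hφ_nonneg : ∀ t : ℝ, t ≤ 0 → 0 ≤ φ t)
    (hφ_pos : 0 < φ 0)
    (M m xmax xmin : ℝ)
    (hM : M = sSup (f '' Icc (0 : ℝ) K))
    (hm : m = sInf (f '' Icc K M))
    (hMK : K < M)
    (hxmax_mem : xmax ∈ Icc (0 : ℝ) K) (hxmax_val : f xmax = M)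
    (hxmax_greatest : ∀ y ∈ Icc (0 : ℝ) K, f y = M → y ≤ xmax)
    (hxmin_mem : xmin ∈ Icc K M) (hxmin_val : f xmin = m)
    (hxmin_least : ∀ y ∈ Icc K M, f y = m → xmin ≤ y)
    (hm_lt : m < xmax) (hxmax_lt : xmax < K)
    (x : ℝ → ℝ)
    (hx_cont : Continuous x)
    (hx_init : ∀ t : ℝ, t ≤ 0 → x t = φ t)
    (hx_sol : ∀ t : ℝ, 0 ≤ t →
      x t = φ 0 + ∫ u in (0:ℝ)..t, r u * ((∫ s, f (x s) ∂(μ u)) - x u))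
    :
    m ≤ liminf x atTop ∧ limsup x atTop ≤ M := by
  classical
  obtain ⟨C0, hC0⟩ := hr_bdd
  obtain ⟨Φ, hΦ⟩ := hφ_bdd
  set C : ℝ := max C0 1 with hCdef
  have hC1 : (1:ℝ) ≤ C := le_max_right _ _
  have hCpos : (0:ℝ) < C := lt_of_lt_of_le one_pos hC1
  have hCr : ∀ᵐ t ∂volume, r t ≤ C := hC0.mono fun t ht => ht.trans (le_max_left _ _)
  have hΦ0 : 0 ≤ Φ := (abs_nonneg _).trans (hΦ 0 le_rfl)
  set F : ℝ → ℝ := fun u => ∫ s, f (x s) ∂(μ u) with hF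
  set G : ℝ → ℝ := fun u => r u * (F u - x u) with hG
  have hx_sol' : ∀ t : ℝ, 0 ≤ t → x t = φ 0 + ∫ u in (0:ℝ)..t, G u := by
    intro t ht
    simp only [hG, hF]
    exact hx_sol t ht
  have hx0 : x 0 = φ 0 := hx_init 0 le_rfl
  -- bound for x on (-∞, b]
  have hxbd : ∀ b : ℝ, 0 ≤ b → ∃ A : ℝ, 0 ≤ A ∧ ∀ s : ℝ, s ≤ b → |x s| ≤ A := by
    intro b hb
    obtain ⟨A1, hA1⟩ := (isCompact_Icc (a := (0:ℝ)) (b := b)).exists_bound_of_continuousOn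
      hx_cont.continuousOn
    refine ⟨max Φ A1, le_trans hΦ0 (le_max_left _ _), ?_⟩
    intro s hs
    rcases le_or_gt s 0 with h0 | h0
    · rw [hx_init s h0]; exact (hΦ s h0).trans (le_max_left _ _)
    · have := hA1 s ⟨h0.le, hs⟩
      rw [Real.norm_eq_abs] at this
      exact this.trans (le_max_right _ _)
  -- support a.e.
  have hsupp_ae : ∀ u : ℝ, 0 ≤ u → ∀ᵐ s ∂(μ u), s ∈ Icc (h u) u := by
    intro u hu
    rw [ae_iff]
    exact hμ_supp u hu
  -- integrability of f ∘ x against μ u, with bound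
  have hint_f : ∀ u : ℝ, 0 ≤ u → Integrable (fun s => f (x s)) (μ u) := by
    intro u hu
    haveI := hμ_prob u hu
    obtain ⟨A, hA0, hA⟩ := hxbd u hu
    obtain ⟨D, hD⟩ := (isCompact_Icc (a := -A) (b := A)).exists_bound_of_continuousOn
      hf_cont.continuousOn
    refine Integrable.mono' (integrable_const D) ((hf_cont.comp hx_cont).aestronglyMeasurable) ?_
    filter_upwards [hsupp_ae u hu] with s hs
    exact hD (x s) (Set.mem_Icc.2 (abs_le.1 (hA s hs.2)))
  have hF_le : ∀ u : ℝ, 0 ≤ u → ∀ d : ℝ, (∀ s ∈ Icc (h u) u, f (x s) ≤ d) → F u ≤ d := by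
    intro u hu d hd
    haveI := hμ_prob u hu
    have h1 : F u ≤ ∫ _, d ∂(μ u) := by
      simp only [hF]
      refine integral_mono_ae (hint_f u hu) (integrable_const d) ?_
      filter_upwards [hsupp_ae u hu] with s hs using hd s hs
    simpa [integral_const, measure_univ] using h1
  have hF_ge : ∀ u : ℝ, 0 ≤ u → ∀ c : ℝ, (∀ s ∈ Icc (h u) u, c ≤ f (x s)) → c ≤ F u := by
    intro u hu c hc
    haveI := hμ_prob u hu
    have h1 : (∫ _, c ∂(μ u)) ≤ F u := by
      simp only [hF]
      refine integral_mono_ae (integrable_const c) (hint_f u hu) ?_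
      filter_upwards [hsupp_ae u hu] with s hs using hc s hs
    simpa [integral_const, measure_univ] using h1
  -- integrability of G
  have hGb : ∀ b : ℝ, 0 ≤ b → IntegrableOn G (Ioc 0 b) volume := by
    intro b hb
    obtain ⟨A, hA0, hA⟩ := hxbd b hb
    obtain ⟨D, hD⟩ := (isCompact_Icc (a := -A) (b := A)).exists_bound_of_continuousOn
      hf_cont.continuousOn
    have hDA : ∀ s : ℝ, s ≤ b → ‖f (x s)‖ ≤ D := fun s hs =>
      hD (x s) (Set.mem_Icc.2 (abs_le.1 (hA s hs)))
    have hgc : Continuous (fun s : ℝ => f (x (min s b))) :=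
      hf_cont.comp (hx_cont.comp (continuous_id.min continuous_const))
    have hgb : ∀ y : ℝ, |f (x (min y b))| ≤ D := by
      intro y
      have := hDA (min y b) (min_le_right _ _)
      rwa [Real.norm_eq_abs] at this
    have hFb : Measurable (fun u => ∫ s, f (x (min s b)) ∂(μ u)) :=
      hμ_meas _ hgc.measurable ⟨D, hgb⟩
    have hFeq : ∀ u ∈ Ioc (0:ℝ) b, F u = ∫ s, f (x (min s b)) ∂(μ u) := by
      intro u hu
      simp only [hF]
      refine integral_congr_ae ?_
      filter_upwards [hsupp_ae u hu.1.le] with s hs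
      rw [min_eq_left (hs.2.trans hu.2)]
    have hFbd : ∀ u ∈ Ioc (0:ℝ) b, |F u| ≤ D := by
      intro u hu
      haveI := hμ_prob u hu.1.le
      have h2 : ‖∫ s, f (x s) ∂(μ u)‖ ≤ D * ((μ u) univ).toReal := by
        refine norm_integral_le_of_norm_le_const ?_
        filter_upwards [hsupp_ae u hu.1.le] with s hs
        exact hDA s (hs.2.trans hu.2)
      simp only [measure_univ, ENNReal.toReal_one, mul_one, Real.norm_eq_abs] at h2
      simpa only [hF] using h2
    have hGm : AEStronglyMeasurable G (volume.restrict (Ioc 0 b)) := by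
      have hmeas : Measurable (fun u => r u * ((∫ s, f (x (min s b)) ∂(μ u)) - x u)) :=
        hr_meas.mul (hFb.sub hx_cont.measurable)
      refine hmeas.aestronglyMeasurable.congr ?_
      rw [Filter.EventuallyEq, ae_restrict_iff' measurableSet_Ioc]
      refine Eventually.of_forall fun u hu => ?_
      simp only [hG]
      rw [hFeq u hu]
    refine Integrable.mono' (integrable_const (C * (D + A))) hGm ?_
    filter_upwards [ae_restrict_of_ae hCr, ae_restrict_mem measurableSet_Ioc] with u hu1 hu2
    simp only [hG, Real.norm_eq_abs, abs_mul, abs_of_nonneg (hr_nonneg u)]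
    have h1 : |F u - x u| ≤ D + A := by
      have h2 : |F u - x u| ≤ |F u| + |x u| := abs_sub _ _
      have h3 := hFbd u hu2
      have h4 := hA u hu2.2
      linarith
    exact mul_le_mul hu1 h1 (abs_nonneg _) hCpos.le
  have hG_ii : ∀ a b : ℝ, 0 ≤ a → a ≤ b → IntervalIntegrable G volume a b := by
    intro a b ha hab
    constructor
    · exact (hGb b (ha.trans hab)).mono_set (Ioc_subset_Ioc ha le_rfl)
    · rw [Ioc_eq_empty (not_lt.2 hab)]
      exact integrableOn_empty
  have hstep : ∀ T t : ℝ, 0 ≤ T → T ≤ t → x t = x T + ∫ u in T..t, G u := by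
    intro T t hT ht
    have e2 := hx_sol' t (hT.trans ht)
    have e1 := hx_sol' T hT
    rw [← intervalIntegral.integral_add_adjacent_intervals (hG_ii 0 T le_rfl hT)
      (hG_ii T t hT ht)] at e2
    linarith
  -- integral comparison helpers
  have hint_le : ∀ a b : ℝ, 0 ≤ a → a ≤ b → ∀ c : ℝ,
      (∀ᵐ u ∂(volume.restrict (Ioc a b)), G u ≤ c) → (∫ u in a..b, G u) ≤ c * (b - a) := by
    intro a b ha hab c hc
    rw [intervalIntegral.integral_of_le hab]
    have h1 : (∫ u in Ioc a b, G u) ≤ ∫ _ in Ioc a b, c := by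
      refine setIntegral_mono_ae_restrict
        ((hGb b (ha.trans hab)).mono_set (Ioc_subset_Ioc ha le_rfl))
        (integrableOn_const (by rw [Real.volume_Ioc]; exact ENNReal.ofReal_ne_top)) hc
    rw [setIntegral_const, Real.volume_real_Ioc_of_le hab, smul_eq_mul] at h1
    linarith [h1]
  have hint_ge : ∀ a b : ℝ, 0 ≤ a → a ≤ b → ∀ c : ℝ,
      (∀ᵐ u ∂(volume.restrict (Ioc a b)), c ≤ G u) → c * (b - a) ≤ ∫ u in a..b, G u := by
    intro a b ha hab c hc
    rw [intervalIntegral.integral_of_le hab]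
    have h1 : (∫ _ in Ioc a b, c) ≤ ∫ u in Ioc a b, G u := by
      refine setIntegral_mono_ae_restrict (integrableOn_const (by rw [Real.volume_Ioc]; exact ENNReal.ofReal_ne_top))
        ((hGb b (ha.trans hab)).mono_set (Ioc_subset_Ioc ha le_rfl)) hc
    rw [setIntegral_const, Real.volume_real_Ioc_of_le hab, smul_eq_mul] at h1
    linarith [h1]
  -- divergence of ∫ r
  have hr_loc : ∀ a b : ℝ, IntegrableOn r (Ioc a b) volume := by
    intro a b
    refine Integrable.mono' (integrable_const C) hr_meas.aestronglyMeasurable ?_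
    filter_upwards [ae_restrict_of_ae hCr] with t ht
    rw [Real.norm_eq_abs, abs_of_nonneg (hr_nonneg t)]; exact ht
  have hrii : ∀ a b : ℝ, IntervalIntegrable r volume a b := fun a b => ⟨hr_loc a b, hr_loc b a⟩
  have hRT : ∀ T : ℝ, 0 ≤ T → Tendsto (fun t => ∫ u in T..t, r u) atTop atTop := by
    have hmono : Monotone (fun t : ℝ => ∫ u in (0:ℝ)..(max t 0), r u) := by
      intro s t hst
      have hadd := intervalIntegral.integral_add_adjacent_intervals
        (hrii 0 (max s 0)) (hrii (max s 0) (max t 0))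
      have h2 : 0 ≤ ∫ u in (max s 0)..(max t 0), r u :=
        intervalIntegral.integral_nonneg (max_le_max hst le_rfl) (fun u _ => hr_nonneg u)
      simp only
      linarith
    have hnb : ¬ BddAbove (range (fun t : ℝ => ∫ u in (0:ℝ)..(max t 0), r u)) := by
      rintro ⟨I, hI⟩
      apply hr_div
      rw [integrableOn_Ici_iff_integrableOn_Ioi]
      refine integrableOn_Ioi_of_intervalIntegral_norm_bounded I 0
        (fun i : ℝ => hr_loc 0 i) tendsto_id ?_
      filter_upwards [eventually_ge_atTop (0:ℝ)] with i hi
      have he : (∫ u in (0:ℝ)..i, ‖r u‖) = ∫ u in (0:ℝ)..(max i 0), r u := by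
        rw [max_eq_left hi]
        refine intervalIntegral.integral_congr fun u _ => ?_
        rw [Real.norm_eq_abs, abs_of_nonneg (hr_nonneg u)]
      rw [he]
      exact hI ⟨i, rfl⟩
    have h0 : Tendsto (fun t : ℝ => ∫ u in (0:ℝ)..(max t 0), r u) atTop atTop :=
      tendsto_atTop_atTop_of_monotone' hmono hnb
    intro T hT
    have h1 : Tendsto (fun t : ℝ => (∫ u in (0:ℝ)..(max t 0), r u) +
        (-(∫ u in (0:ℝ)..T, r u))) atTop atTop :=
      tendsto_atTop_add_const_right _ _ h0
    refine h1.congr' ?_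
    filter_upwards [eventually_ge_atTop T, eventually_ge_atTop (0:ℝ)] with t h1t h2t
    have hadd := intervalIntegral.integral_add_adjacent_intervals (hrii 0 T) (hrii T t)
    rw [max_eq_left h2t]
    linarith
  -- positivity
  have hx_pos : ∀ t : ℝ, 0 ≤ t → 0 < x t := by
    by_contra hcon
    push_neg at hcon
    obtain ⟨tb, htb0, htb⟩ := hcon
    have hzero : ∃ t0 : ℝ, 0 ≤ t0 ∧ x t0 = 0 := by
      rcases eq_or_lt_of_le htb with he | hlt
      · exact ⟨tb, htb0, he⟩
      · obtain ⟨t0, ht0m, ht0⟩ := intermediate_value_Icc' htb0 hx_cont.continuousOn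
          (⟨hlt.le, by rw [hx0]; exact hφ_pos.le⟩ : (0:ℝ) ∈ Icc (x tb) (x 0))
        exact ⟨t0, ht0m.1, ht0⟩
    have hS0c : IsClosed (Ici (0:ℝ) ∩ {t | x t = 0}) :=
      isClosed_Ici.inter (isClosed_eq hx_cont continuous_const)
    have hS0ne : (Ici (0:ℝ) ∩ {t | x t = 0}).Nonempty :=
      ⟨hzero.choose, hzero.choose_spec.1, hzero.choose_spec.2⟩
    have hS0bb : BddBelow (Ici (0:ℝ) ∩ {t | x t = 0}) := ⟨0, fun t ht => ht.1⟩
    set t0 : ℝ := sInf (Ici (0:ℝ) ∩ {t | x t = 0}) with ht0def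
    have ht0S : t0 ∈ Ici (0:ℝ) ∩ {t | x t = 0} := hS0c.csInf_mem hS0ne hS0bb
    have ht00 : 0 ≤ t0 := ht0S.1
    have ht0z : x t0 = 0 := ht0S.2
    have hbefore : ∀ s : ℝ, 0 ≤ s → s < t0 → 0 < x s := by
      intro s hs0 hst
      by_contra hxs
      push_neg at hxs
      rcases eq_or_lt_of_le hxs with he | hlt
      · exact absurd (csInf_le hS0bb ⟨hs0, he⟩) (not_le.2 hst)
      · obtain ⟨t1, ht1m, ht1⟩ := intermediate_value_Icc' hs0 hx_cont.continuousOn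
          (⟨hlt.le, by rw [hx0]; exact hφ_pos.le⟩ : (0:ℝ) ∈ Icc (x s) (x 0))
        exact absurd (csInf_le hS0bb ⟨ht1m.1, ht1⟩) (not_le.2 (lt_of_le_of_lt ht1m.2 hst))
    have ht0pos : 0 < t0 := by
      rcases eq_or_lt_of_le ht00 with he | hlt
      · exfalso; rw [← he, hx0] at ht0z; linarith
      · exact hlt
    have hFnn : ∀ u : ℝ, 0 ≤ u → u ≤ t0 → 0 ≤ F u := by
      intro u hu hut
      refine hF_ge u hu 0 ?_
      intro s hs
      refine hf_nonneg (x s) ?_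
      rcases le_or_gt s 0 with h1 | h1
      · rw [hx_init s h1]; exact hφ_nonneg s h1
      · rcases lt_or_ge s t0 with h2 | h2
        · exact (hbefore s h1.le h2).le
        · have hse : s = t0 := le_antisymm (hs.2.trans hut) h2
          rw [hse, ht0z]
    set t' : ℝ := max (t0 - 1/(2*C)) 0 with ht'def
    have ht'0 : 0 ≤ t' := le_max_right _ _
    have ht'lt : t' < t0 := by
      rw [ht'def, max_lt_iff]
      have hpos : 0 < 1/(2*C) := by positivity
      exact ⟨by linarith, ht0pos⟩
    obtain ⟨smin, hsmin_mem, hsmin⟩ := isCompact_Icc.exists_isMinOn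
      (nonempty_Icc.2 ht'0) hx_cont.continuousOn
    set δ : ℝ := x smin / 2 with hδdef
    have hδpos : 0 < δ := by
      have := hbefore smin hsmin_mem.1 (lt_of_le_of_lt hsmin_mem.2 ht'lt)
      rw [hδdef]; linarith
    have hS1c : IsClosed (Icc 0 t0 ∩ {t | δ ≤ x t}) :=
      isClosed_Icc.inter (isClosed_le continuous_const hx_cont)
    have hS1ne : (Icc 0 t0 ∩ {t | δ ≤ x t}).Nonempty := by
      refine ⟨0, ⟨le_rfl, ht00⟩, ?_⟩
      simp only [mem_setOf_eq]
      have := isMinOn_iff.1 hsmin 0 ⟨le_rfl, ht'0⟩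
      rw [hδdef]; linarith
    have hS1bdd : BddAbove (Icc 0 t0 ∩ {t | δ ≤ x t}) := bddAbove_Icc.mono inter_subset_left
    set t2 : ℝ := sSup (Icc 0 t0 ∩ {t | δ ≤ x t}) with ht2def
    have ht2S : t2 ∈ Icc 0 t0 ∩ {t | δ ≤ x t} := hS1c.csSup_mem hS1ne hS1bdd
    have ht2mem : t2 ∈ Icc (0:ℝ) t0 := ht2S.1
    have ht2x : δ ≤ x t2 := ht2S.2
    have ht2t' : t' ≤ t2 := by
      refine le_csSup hS1bdd ⟨⟨ht'0, ht'lt.le⟩, ?_⟩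
      simp only [mem_setOf_eq]
      have := isMinOn_iff.1 hsmin t' ⟨ht'0, le_rfl⟩
      rw [hδdef]; linarith
    have hsmall : ∀ u : ℝ, u ∈ Ioc t2 t0 → x u < δ := by
      intro u hu
      by_contra hge
      push_neg at hge
      exact absurd (le_csSup hS1bdd ⟨⟨ht2mem.1.trans hu.1.le, hu.2⟩, hge⟩) (not_le.2 hu.1)
    have hxge : ∀ u : ℝ, u ∈ Ioc t2 t0 → 0 ≤ x u := by
      intro u hu
      rcases lt_or_ge u t0 with h2 | h2
      · exact (hbefore u (ht2mem.1.trans hu.1.le) h2).le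
      · have hue : u = t0 := le_antisymm hu.2 h2
        rw [hue, ht0z]
    have hbd : ∀ᵐ u ∂(volume.restrict (Ioc t2 t0)), -(C * δ) ≤ G u := by
      filter_upwards [ae_restrict_of_ae hCr, ae_restrict_mem measurableSet_Ioc] with u hu1 hu2
      have h1 : 0 ≤ F u := hFnn u (ht2mem.1.trans hu2.1.le) hu2.2
      have h2 : x u < δ := hsmall u hu2
      have h3 : 0 ≤ x u := hxge u hu2
      have h5 : r u * x u ≤ C * δ := mul_le_mul hu1 h2.le h3 hCpos.le
      simp only [hG]
      have h6 : r u * (0 - x u) ≤ r u * (F u - x u) :=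
        mul_le_mul_of_nonneg_left (by linarith) (hr_nonneg u)
      have h7 : r u * (0 - x u) = -(r u * x u) := by ring
      linarith
    have hlow := hint_ge t2 t0 ht2mem.1 ht2mem.2 (-(C * δ)) hbd
    have hxeq := hstep t2 t0 ht2mem.1 ht2mem.2
    have htdiff : t0 - t2 ≤ 1/(2*C) := by
      have : t0 - 1/(2*C) ≤ t' := le_max_left _ _
      linarith
    have h8 : (C * δ) * (t0 - t2) ≤ (C * δ) * (1/(2*C)) :=
      mul_le_mul_of_nonneg_left htdiff (mul_nonneg hCpos.le hδpos.le)
    have h9 : (C * δ) * (1/(2*C)) = δ/2 := by field_simp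
    have hfin : δ/2 ≤ x t0 := by nlinarith
    rw [ht0z] at hfin; linarith
  have hx_nonneg : ∀ t : ℝ, 0 ≤ x t := by
    intro t
    rcases le_or_gt t 0 with ht | ht
    · rw [hx_init t ht]; exact hφ_nonneg t ht
    · exact (hx_pos t ht.le).le
  have hfmax : ∀ y : ℝ, 0 ≤ y → f y ≤ max M y := by
    intro y hy
    rcases le_or_gt y K with h1 | h1
    · have hyM : f y ≤ M := by
        rw [hM]
        exact le_csSup ((isCompact_Icc.image hf_cont).bddAbove) (mem_image_of_mem f ⟨hy, h1⟩)
      exact hyM.trans (le_max_left _ _)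
    · exact (hf_above y h1).2.le.trans (le_max_right _ _)
  -- global upper bound
  set B : ℝ := max (max M Φ) (φ 0) + 1 with hBdef
  have hBM : M < B := by
    have : M ≤ max (max M Φ) (φ 0) := le_max_of_le_left (le_max_left _ _)
    rw [hBdef]; linarith
  have hBΦ : Φ ≤ B - 1 := by
    have : Φ ≤ max (max M Φ) (φ 0) := le_max_of_le_left (le_max_right _ _)
    rw [hBdef]; linarith
  have hBφ0 : φ 0 ≤ B - 1 := by
    have : φ 0 ≤ max (max M Φ) (φ 0) := le_max_right _ _
    rw [hBdef]; linarith
  have hxB : ∀ t : ℝ, x t ≤ B := by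
    intro t
    rcases le_or_gt t 0 with ht | ht
    · rw [hx_init t ht]
      have := (le_abs_self (φ t)).trans (hΦ t ht)
      linarith
    by_contra hxt
    push_neg at hxt
    obtain ⟨cm, hcm_mem, hcm⟩ := isCompact_Icc.exists_isMaxOn
      (nonempty_Icc.2 ht.le) hx_cont.continuousOn
    set c : ℝ := x cm with hcdef
    have hcB : B < c := lt_of_lt_of_le hxt (isMaxOn_iff.1 hcm t ⟨ht.le, le_rfl⟩)
    have hSbb : BddBelow (Icc 0 t ∩ {s | x s = c}) := ⟨0, fun s hs => hs.1.1⟩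
    have hSc : IsClosed (Icc 0 t ∩ {s | x s = c}) :=
      isClosed_Icc.inter (isClosed_eq hx_cont continuous_const)
    have hSne : (Icc 0 t ∩ {s | x s = c}).Nonempty := ⟨cm, hcm_mem, rfl⟩
    set ts : ℝ := sInf (Icc 0 t ∩ {s | x s = c}) with htsdef
    have htsS : ts ∈ Icc 0 t ∩ {s | x s = c} := hSc.csInf_mem hSne hSbb
    have hts0 : 0 ≤ ts := htsS.1.1
    have htsc : x ts = c := htsS.2
    have hlt_before : ∀ s : ℝ, 0 ≤ s → s < ts → x s < c := by
      intro s hs0 hst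
      have hsle : x s ≤ c := isMaxOn_iff.1 hcm s ⟨hs0, hst.le.trans htsS.1.2⟩
      rcases eq_or_lt_of_le hsle with he | hlt
      · exact absurd (csInf_le hSbb ⟨⟨hs0, hst.le.trans htsS.1.2⟩, he⟩) (not_le.2 hst)
      · exact hlt
    have hts_pos : 0 < ts := by
      rcases eq_or_lt_of_le hts0 with he | hlt
      · exfalso
        rw [← he, hx0] at htsc
        linarith
      · exact hlt
    have hpast : ∀ s : ℝ, s ≤ ts → x s ≤ c := by
      intro s hs
      rcases le_or_gt s 0 with h1 | h1
      · rw [hx_init s h1]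
        have := (le_abs_self (φ s)).trans (hΦ s h1)
        linarith
      · rcases lt_or_ge s ts with h2 | h2
        · exact (hlt_before s h1.le h2).le
        · have hse : s = ts := le_antisymm hs h2
          rw [hse, htsc]
    have hMc : M < c := hBM.trans hcB
    have hFle : ∀ u : ℝ, 0 ≤ u → u ≤ ts → F u ≤ c := by
      intro u hu hut
      refine hF_le u hu c ?_
      intro s hs
      have hxs : x s ≤ c := hpast s (hs.2.trans hut)
      calc f (x s) ≤ max M (x s) := hfmax (x s) (hx_nonneg s)
      _ ≤ c := max_le hMc.le hxs
    set t'' : ℝ := max (ts - 1/(2*C)) 0 with ht''def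
    have ht''0 : 0 ≤ t'' := le_max_right _ _
    have ht''lt : t'' < ts := by
      rw [ht''def, max_lt_iff]
      have hpos : 0 < 1/(2*C) := by positivity
      exact ⟨by linarith, hts_pos⟩
    obtain ⟨smax, hsmax_mem, hsmax⟩ := isCompact_Icc.exists_isMaxOn
      (nonempty_Icc.2 ht''0) hx_cont.continuousOn
    set c' : ℝ := x smax with hc'def
    have hc'c : c' < c := hlt_before smax hsmax_mem.1 (lt_of_le_of_lt hsmax_mem.2 ht''lt)
    set l : ℝ := max (max c' M) (φ 0) with hldef
    have hlc : l < c := by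
      rw [hldef]
      exact max_lt (max_lt hc'c hMc) (by linarith)
    have hS2c : IsClosed (Icc 0 ts ∩ {s | x s ≤ l}) :=
      isClosed_Icc.inter (isClosed_le hx_cont continuous_const)
    have hS2ne : (Icc 0 ts ∩ {s | x s ≤ l}).Nonempty := by
      refine ⟨0, ⟨le_rfl, hts0⟩, ?_⟩
      simp only [mem_setOf_eq]
      rw [hx0, hldef]
      exact le_max_right _ _
    have hS2bdd : BddAbove (Icc 0 ts ∩ {s | x s ≤ l}) := bddAbove_Icc.mono inter_subset_left
    set t2 : ℝ := sSup (Icc 0 ts ∩ {s | x s ≤ l}) with ht2def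
    have ht2S : t2 ∈ Icc 0 ts ∩ {s | x s ≤ l} := hS2c.csSup_mem hS2ne hS2bdd
    have ht2t'' : t'' ≤ t2 := by
      refine le_csSup hS2bdd ⟨⟨ht''0, ht''lt.le⟩, ?_⟩
      simp only [mem_setOf_eq]
      have h1 : x t'' ≤ c' := isMaxOn_iff.1 hsmax t'' ⟨ht''0, le_rfl⟩
      have h2 : c' ≤ l := by rw [hldef]; exact le_max_of_le_left (le_max_left _ _)
      linarith
    have hbig : ∀ u : ℝ, u ∈ Ioc t2 ts → l < x u := by
      intro u hu
      by_contra hle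
      push_neg at hle
      exact absurd (le_csSup hS2bdd ⟨⟨ht2S.1.1.trans hu.1.le, hu.2⟩, hle⟩) (not_le.2 hu.1)
    have hbd : ∀ᵐ u ∂(volume.restrict (Ioc t2 ts)), G u ≤ C * (c - l) := by
      filter_upwards [ae_restrict_of_ae hCr, ae_restrict_mem measurableSet_Ioc] with u hu1 hu2
      have hu0 : 0 ≤ u := ht2S.1.1.trans hu2.1.le
      have h1 : F u ≤ c := hFle u hu0 hu2.2
      have h2 : l < x u := hbig u hu2
      have h3 : x u ≤ c := hpast u hu2.2
      simp only [hG]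
      have h4 : r u * (F u - x u) ≤ r u * (c - x u) :=
        mul_le_mul_of_nonneg_left (by linarith) (hr_nonneg u)
      have h5 : r u * (c - x u) ≤ C * (c - x u) := mul_le_mul_of_nonneg_right hu1 (by linarith)
      have h6 : C * (c - x u) ≤ C * (c - l) := mul_le_mul_of_nonneg_left (by linarith) hCpos.le
      linarith
    have hup := hint_le t2 ts ht2S.1.1 ht2S.1.2 (C * (c - l)) hbd
    have hxeq := hstep t2 ts ht2S.1.1 ht2S.1.2
    have htdiff : ts - t2 ≤ 1/(2*C) := by
      have : ts - 1/(2*C) ≤ t'' := le_max_left _ _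
      linarith
    have h8 : (C * (c - l)) * (ts - t2) ≤ (C * (c - l)) * (1/(2*C)) :=
      mul_le_mul_of_nonneg_left htdiff (mul_nonneg hCpos.le (by linarith))
    have h9 : (C * (c - l)) * (1/(2*C)) = (c - l)/2 := by field_simp
    have hxt2 : x t2 ≤ l := ht2S.2
    have : c ≤ l + (c - l)/2 := by
      rw [← htsc, hxeq]
      linarith
    linarith
  have hbu : IsBoundedUnder (· ≤ ·) atTop x := isBoundedUnder_of ⟨B, fun t => hxB t⟩
  have hbl : IsBoundedUnder (· ≥ ·) atTop x := isBoundedUnder_of ⟨0, fun t => hx_nonneg t⟩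
  -- attraction lemmas
  have hupper : ∀ d T : ℝ, 0 ≤ T → (∀ u : ℝ, T ≤ u → F u ≤ d) → limsup x atTop ≤ d := by
    intro d T hT hd
    have hev : ∀ d' : ℝ, d < d' → ∀ᶠ t in atTop, x t ≤ d' := by
      intro d' hdd'
      have hex : ∃ t1 : ℝ, T ≤ t1 ∧ x t1 ≤ d' := by
        by_contra hno
        push_neg at hno
        have hkey : ∀ t : ℝ, T ≤ t → x t ≤ x T + (d - d') * ∫ u in T..t, r u := by
          intro t htt
          have hxeq := hstep T t hT htt
          have hcomp : (∫ u in T..t, G u) ≤ ∫ u in T..t, (d - d') * r u := by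
            rw [intervalIntegral.integral_of_le htt, intervalIntegral.integral_of_le htt]
            refine setIntegral_mono_ae_restrict
              ((hGb t (hT.trans htt)).mono_set (Ioc_subset_Ioc hT le_rfl))
              ((hr_loc T t).const_mul _) ?_
            filter_upwards [ae_restrict_mem measurableSet_Ioc] with u hu
            have h1 : F u ≤ d := hd u hu.1.le
            have h2 : d' < x u := hno u hu.1.le
            simp only [hG]
            have h4 : r u * (F u - x u) ≤ r u * (d - d') :=
              mul_le_mul_of_nonneg_left (by linarith) (hr_nonneg u)
            linarith
          rw [intervalIntegral.integral_const_mul] at hcomp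
          linarith
        have hBot : Tendsto (fun t => x T + (d - d') * ∫ u in T..t, r u) atTop atBot := by
          apply tendsto_atBot_add_const_left
          exact (tendsto_const_mul_atBot_of_neg (by linarith)).2 (hRT T hT)
        obtain ⟨t1, ht1⟩ :=
          ((hBot.eventually (eventually_le_atBot (d' - 1))).and (eventually_ge_atTop T)).exists
        have hk := hkey t1 ht1.2
        have hn := hno t1 ht1.2
        linarith [ht1.1]
      obtain ⟨t1, ht1T, ht1x⟩ := hex
      rw [eventually_atTop]
      refine ⟨t1, fun t3 ht3 => ?_⟩
      by_contra hgt
      push_neg at hgt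
      have hS2c : IsClosed (Icc t1 t3 ∩ {s | x s ≤ d'}) :=
        isClosed_Icc.inter (isClosed_le hx_cont continuous_const)
      have hS2ne : (Icc t1 t3 ∩ {s | x s ≤ d'}).Nonempty := ⟨t1, ⟨le_rfl, ht3⟩, ht1x⟩
      have hS2bdd : BddAbove (Icc t1 t3 ∩ {s | x s ≤ d'}) := bddAbove_Icc.mono inter_subset_left
      set t2 : ℝ := sSup (Icc t1 t3 ∩ {s | x s ≤ d'}) with ht2def
      have ht2S : t2 ∈ Icc t1 t3 ∩ {s | x s ≤ d'} := hS2c.csSup_mem hS2ne hS2bdd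
      have ht20 : 0 ≤ t2 := hT.trans (ht1T.trans ht2S.1.1)
      have hbig : ∀ u : ℝ, u ∈ Ioc t2 t3 → d' < x u := by
        intro u hu
        by_contra hle
        push_neg at hle
        exact absurd (le_csSup hS2bdd ⟨⟨ht2S.1.1.trans hu.1.le, hu.2⟩, hle⟩) (not_le.2 hu.1)
      have hbd : ∀ᵐ u ∂(volume.restrict (Ioc t2 t3)), G u ≤ 0 := by
        filter_upwards [ae_restrict_mem measurableSet_Ioc] with u hu
        have h1 : F u ≤ d := hd u (ht1T.trans (ht2S.1.1.trans hu.1.le))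
        have h2 : d' < x u := hbig u hu
        simp only [hG]
        exact mul_nonpos_of_nonneg_of_nonpos (hr_nonneg u) (by linarith)
      have hup := hint_le t2 t3 ht20 ht2S.1.2 0 hbd
      have hxeq := hstep t2 t3 ht20 ht2S.1.2
      have hxt2 : x t2 ≤ d' := ht2S.2
      rw [zero_mul] at hup
      linarith
    by_contra hgt
    push_neg at hgt
    have h1 := hev ((d + limsup x atTop)/2) (by linarith)
    have h2 : limsup x atTop ≤ (d + limsup x atTop)/2 :=
      limsup_le_of_le hbl.isCoboundedUnder_le h1
    linarith
  have hlower : ∀ c T : ℝ, 0 ≤ T → (∀ u : ℝ, T ≤ u → c ≤ F u) → c ≤ liminf x atTop := by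
    intro c T hT hc
    have hev : ∀ c' : ℝ, c' < c → ∀ᶠ t in atTop, c' ≤ x t := by
      intro c' hcc'
      have hex : ∃ t1 : ℝ, T ≤ t1 ∧ c' ≤ x t1 := by
        by_contra hno
        push_neg at hno
        have hkey : ∀ t : ℝ, T ≤ t → x T + (c - c') * (∫ u in T..t, r u) ≤ x t := by
          intro t htt
          have hxeq := hstep T t hT htt
          have hcomp : (∫ u in T..t, (c - c') * r u) ≤ ∫ u in T..t, G u := by
            rw [intervalIntegral.integral_of_le htt, intervalIntegral.integral_of_le htt]
            refine setIntegral_mono_ae_restrict ((hr_loc T t).const_mul _)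
              ((hGb t (hT.trans htt)).mono_set (Ioc_subset_Ioc hT le_rfl)) ?_
            filter_upwards [ae_restrict_mem measurableSet_Ioc] with u hu
            have h1 : c ≤ F u := hc u hu.1.le
            have h2 : x u < c' := hno u hu.1.le
            simp only [hG]
            have h4 : r u * (c - c') ≤ r u * (F u - x u) :=
              mul_le_mul_of_nonneg_left (by linarith) (hr_nonneg u)
            linarith
          rw [intervalIntegral.integral_const_mul] at hcomp
          linarith
        have hTop : Tendsto (fun t => x T + (c - c') * ∫ u in T..t, r u) atTop atTop := by
          apply tendsto_atTop_add_const_left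
          exact (hRT T hT).const_mul_atTop (by linarith)
        obtain ⟨t1, ht1⟩ :=
          ((hTop.eventually (eventually_ge_atTop c')).and (eventually_ge_atTop T)).exists
        have hk := hkey t1 ht1.2
        have hn := hno t1 ht1.2
        linarith [ht1.1]
      obtain ⟨t1, ht1T, ht1x⟩ := hex
      rw [eventually_atTop]
      refine ⟨t1, fun t3 ht3 => ?_⟩
      by_contra hlt
      push_neg at hlt
      have hS2c : IsClosed (Icc t1 t3 ∩ {s | c' ≤ x s}) :=
        isClosed_Icc.inter (isClosed_le continuous_const hx_cont)
      have hS2ne : (Icc t1 t3 ∩ {s | c' ≤ x s}).Nonempty := ⟨t1, ⟨le_rfl, ht3⟩, ht1x⟩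
      have hS2bdd : BddAbove (Icc t1 t3 ∩ {s | c' ≤ x s}) := bddAbove_Icc.mono inter_subset_left
      set t2 : ℝ := sSup (Icc t1 t3 ∩ {s | c' ≤ x s}) with ht2def
      have ht2S : t2 ∈ Icc t1 t3 ∩ {s | c' ≤ x s} := hS2c.csSup_mem hS2ne hS2bdd
      have ht20 : 0 ≤ t2 := hT.trans (ht1T.trans ht2S.1.1)
      have hsmall : ∀ u : ℝ, u ∈ Ioc t2 t3 → x u < c' := by
        intro u hu
        by_contra hle
        push_neg at hle
        exact absurd (le_csSup hS2bdd ⟨⟨ht2S.1.1.trans hu.1.le, hu.2⟩, hle⟩) (not_le.2 hu.1)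
      have hbd : ∀ᵐ u ∂(volume.restrict (Ioc t2 t3)), 0 ≤ G u := by
        filter_upwards [ae_restrict_mem measurableSet_Ioc] with u hu
        have h1 : c ≤ F u := hc u (ht1T.trans (ht2S.1.1.trans hu.1.le))
        have h2 : x u < c' := hsmall u hu
        simp only [hG]
        exact mul_nonneg (hr_nonneg u) (by linarith)
      have hlo := hint_ge t2 t3 ht20 ht2S.1.2 0 hbd
      have hxeq := hstep t2 t3 ht20 ht2S.1.2
      have hxt2 : c' ≤ x t2 := ht2S.2
      rw [zero_mul] at hlo
      linarith
    by_contra hgt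
    push_neg at hgt
    have h1 := hev ((liminf x atTop + c)/2) (by linarith)
    have h2 : (liminf x atTop + c)/2 ≤ liminf x atTop :=
      le_liminf_of_le hbu.isCoboundedUnder_ge h1
    linarith
  have hliminf0 : 0 ≤ liminf x atTop :=
    le_liminf_of_le hbu.isCoboundedUnder_ge (Eventually.of_forall hx_nonneg)
  have hll : liminf x atTop ≤ limsup x atTop := liminf_le_limsup hbu hbl
  -- STEP 1 : limsup ≤ M
  have hlimsupM : limsup x atTop ≤ M := by
    by_contra hgt
    push_neg at hgt
    have hl0 : 0 ≤ limsup x atTop := hliminf0.trans hll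
    have hld : ∀ ε : ℝ, 0 < ε → limsup x atTop ≤ sSup (f '' Icc 0 (limsup x atTop + ε)) := by
      intro ε hε
      have h1 : ∀ᶠ t in atTop, x t < limsup x atTop + ε :=
        eventually_lt_of_limsup_lt (by linarith) hbu
      obtain ⟨T0', hT0'⟩ := eventually_atTop.1 h1
      obtain ⟨T1', hT1'⟩ := eventually_atTop.1 (hh_tend.eventually_ge_atTop (max T0' 0))
      refine hupper _ (max T1' 0) (le_max_right _ _) ?_
      intro u hu
      refine hF_le u ((le_max_right _ _).trans hu) _ ?_
      intro s hs
      have hsT0 : max T0' 0 ≤ s := (hT1' u ((le_max_left _ _).trans hu)).trans hs.1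
      have hxs : x s < limsup x atTop + ε := hT0' s ((le_max_left _ _).trans hsT0)
      exact le_csSup ((isCompact_Icc.image hf_cont).bddAbove)
        (mem_image_of_mem f ⟨hx_nonneg s, hxs.le⟩)
    have hd0 : ∀ ε : ℝ, 0 < ε → limsup x atTop ≤ sSup (f '' Icc 0 (limsup x atTop)) + L * ε := by
      intro ε hε
      refine (hld ε hε).trans ?_
      refine csSup_le ((nonempty_Icc.2 (by linarith)).image f) ?_
      rintro y ⟨z, hz, rfl⟩
      have hzc : min z (limsup x atTop) ∈ Icc (0:ℝ) (limsup x atTop) :=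
        ⟨le_min hz.1 hl0, min_le_right _ _⟩
      have h3 : f (min z (limsup x atTop)) ≤ sSup (f '' Icc 0 (limsup x atTop)) :=
        le_csSup ((isCompact_Icc.image hf_cont).bddAbove) (mem_image_of_mem f hzc)
      have h4 : |f z - f (min z (limsup x atTop))| ≤ L * |z - min z (limsup x atTop)| :=
        hf_lip z _ hz.1 hzc.1
      have h5 : |z - min z (limsup x atTop)| ≤ ε := by
        rcases le_or_gt z (limsup x atTop) with h6 | h6
        · rw [min_eq_left h6, sub_self, abs_zero]; exact hε.le
        · rw [min_eq_right h6.le, abs_of_nonneg (by linarith)]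
          linarith [hz.2]
      have h7 := abs_le.1 h4
      have h8 : L * |z - min z (limsup x atTop)| ≤ L * ε := mul_le_mul_of_nonneg_left h5 hL
      linarith
    have hle : limsup x atTop ≤ sSup (f '' Icc 0 (limsup x atTop)) := by
      by_contra hno
      push_neg at hno
      have hL1 : (0:ℝ) < L + 1 := by linarith
      set D : ℝ := limsup x atTop - sSup (f '' Icc 0 (limsup x atTop)) with hDdef
      have hD : 0 < D := by rw [hDdef]; linarith
      set e : ℝ := D/(2*(L+1)) with hedef
      have hepos : 0 < e := div_pos hD (by linarith)
      have he : e * (2*(L+1)) = D := by rw [hedef]; field_simp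
      have hd := hd0 e hepos
      have he2 : 2*(L*e) + 2*e = D := by rw [← he]; ring
      have hLe : 0 ≤ L*e := mul_nonneg hL hepos.le
      linarith
    obtain ⟨y0, hy0_mem, hy0⟩ := isCompact_Icc.exists_isMaxOn (nonempty_Icc.2 hl0)
      hf_cont.continuousOn
    have hsup_le : sSup (f '' Icc 0 (limsup x atTop)) ≤ f y0 := by
      refine csSup_le ((nonempty_Icc.2 hl0).image f) ?_
      rintro y ⟨z, hz, rfl⟩
      exact isMaxOn_iff.1 hy0 z hz
    have hlfy0 : limsup x atTop ≤ f y0 := hle.trans hsup_le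
    rcases le_or_gt y0 K with h1 | h1
    · have h2 : f y0 ≤ M := by
        rw [hM]
        exact le_csSup ((isCompact_Icc.image hf_cont).bddAbove)
          (mem_image_of_mem f ⟨hy0_mem.1, h1⟩)
      linarith
    · have h2 := (hf_above y0 h1).2
      linarith [hy0_mem.2]
  refine ⟨?_, hlimsupM⟩
  -- f K ≥ K
  have hfK : K ≤ f K := by
    have h1 : Tendsto f (𝓝[<] K) (𝓝 (f K)) := (hf_cont.tendsto K).mono_left nhdsWithin_le_nhds
    have h2 : Tendsto (fun y : ℝ => y) (𝓝[<] K) (𝓝 K) :=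
      (continuous_id.tendsto K).mono_left nhdsWithin_le_nhds
    have h3 : ∀ᶠ y in 𝓝[<] K, y ≤ f y := by
      filter_upwards [Ioo_mem_nhdsLT_of_mem (⟨hK, le_rfl⟩ : K ∈ Ioc (0:ℝ) K)] with y hy
      exact (hf_below y hy.1 hy.2).le
    exact le_of_tendsto_of_tendsto h2 h1 h3
  -- STEP 2 : persistence
  obtain ⟨a, ha_pos, ha_ev⟩ : ∃ a : ℝ, 0 < a ∧ ∀ᶠ t in atTop, a ≤ x t := by
    have hKB : K ≤ B := by linarith
    obtain ⟨yK, hyK_mem, hyK⟩ := isCompact_Icc.exists_isMinOn (nonempty_Icc.2 hKB)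
      hf_cont.continuousOn
    have hlamK_pos : 0 < f yK := by
      rcases eq_or_lt_of_le hyK_mem.1 with he | hlt
      · rw [← he]; linarith
      · exact (hf_above yK hlt).1
    obtain ⟨T1', hT1'⟩ := eventually_atTop.1 (hh_tend.eventually_ge_atTop 0)
    have hT10 : (0:ℝ) ≤ max T1' 0 := le_max_right _ _
    obtain ⟨s0, hs0_mem, hs0min⟩ := isCompact_Icc.exists_isMinOn (nonempty_Icc.2 hT10)
      hx_cont.continuousOn
    have hm0_pos : 0 < x s0 := hx_pos s0 hs0_mem.1
    set a' : ℝ := min (f yK) (x s0) / 2 with ha'def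
    have hmin_pos : 0 < min (f yK) (x s0) := lt_min hlamK_pos hm0_pos
    have ha'_pos : 0 < a' := by rw [ha'def]; linarith
    have ha'_lamK : a' < f yK := by
      rw [ha'def]; have := min_le_left (f yK) (x s0); linarith
    have ha'_m0 : a' < x s0 := by
      rw [ha'def]; have := min_le_right (f yK) (x s0); linarith
    have ha'B : a' ≤ B := by linarith [hxB s0]
    obtain ⟨y1, hy1_mem, hy1⟩ := isCompact_Icc.exists_isMinOn (nonempty_Icc.2 ha'B)
      hf_cont.continuousOn
    have hlam' : a' < f y1 := by
      rcases lt_or_ge y1 K with h1 | h1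
      · have h2 : y1 < f y1 := hf_below y1 (lt_of_lt_of_le ha'_pos hy1_mem.1) h1
        linarith [hy1_mem.1]
      · have h2 : f yK ≤ f y1 := isMinOn_iff.1 hyK y1 ⟨h1, hy1_mem.2⟩
        linarith
    refine ⟨a', ha'_pos, ?_⟩
    rw [eventually_atTop]
    refine ⟨max T1' 0, fun t1 ht1 => ?_⟩
    by_contra hlt
    push_neg at hlt
    have hSc : IsClosed (Icc (max T1' 0) t1 ∩ {s | x s ≤ a'}) :=
      isClosed_Icc.inter (isClosed_le hx_cont continuous_const)
    have hSne : (Icc (max T1' 0) t1 ∩ {s | x s ≤ a'}).Nonempty := ⟨t1, ⟨ht1, le_rfl⟩, hlt.le⟩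
    have hSbb : BddBelow (Icc (max T1' 0) t1 ∩ {s | x s ≤ a'}) :=
      ⟨max T1' 0, fun s hs => hs.1.1⟩
    set ts : ℝ := sInf (Icc (max T1' 0) t1 ∩ {s | x s ≤ a'}) with htsdef
    have htsS : ts ∈ Icc (max T1' 0) t1 ∩ {s | x s ≤ a'} := hSc.csInf_mem hSne hSbb
    have htsT1 : max T1' 0 ≤ ts := htsS.1.1
    have hts0 : (0:ℝ) ≤ ts := hT10.trans htsT1
    have htsx : x ts ≤ a' := htsS.2
    have hbefore2 : ∀ s : ℝ, max T1' 0 ≤ s → s < ts → a' < x s := by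
      intro s hsT hst
      by_contra hle
      push_neg at hle
      exact absurd (csInf_le hSbb ⟨⟨hsT, hst.le.trans htsS.1.2⟩, hle⟩) (not_le.2 hst)
    have hxT1 : a' < x (max T1' 0) := by
      have := isMinOn_iff.1 hs0min (max T1' 0) ⟨hT10, le_rfl⟩
      linarith
    have htsx_ge : a' ≤ x ts := by
      by_contra hno
      push_neg at hno
      obtain ⟨s, hs_mem, hs_eq⟩ := intermediate_value_Icc' htsT1 hx_cont.continuousOn
        (⟨hno.le, hxT1.le⟩ : a' ∈ Icc (x ts) (x (max T1' 0)))
      rcases eq_or_lt_of_le hs_mem.2 with he | hlt2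
      · rw [he] at hs_eq; linarith
      · have := hbefore2 s hs_mem.1 hlt2; linarith
    have hwin : ∀ s : ℝ, 0 ≤ s → s ≤ ts → a' ≤ x s := by
      intro s hsnn hsts
      rcases lt_or_ge s (max T1' 0) with h1 | h1
      · have := isMinOn_iff.1 hs0min s ⟨hsnn, h1.le⟩
        linarith
      · rcases lt_or_ge s ts with h2 | h2
        · exact (hbefore2 s h1 h2).le
        · have hse : s = ts := le_antisymm hsts h2
          rw [hse]; exact htsx_ge
    have hFge : ∀ u : ℝ, max T1' 0 ≤ u → u ≤ ts → f y1 ≤ F u := by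
      intro u hu hut
      refine hF_ge u (hT10.trans hu) _ ?_
      intro s hs
      have hsh : 0 ≤ s := (hT1' u ((le_max_left _ _).trans hu)).trans hs.1
      have h1 : a' ≤ x s := hwin s hsh (hs.2.trans hut)
      exact isMinOn_iff.1 hy1 (x s) ⟨h1, hxB s⟩
    have hS2c : IsClosed (Icc (max T1' 0) ts ∩ {s | min (f y1) (x s0) ≤ x s}) :=
      isClosed_Icc.inter (isClosed_le continuous_const hx_cont)
    have hS2ne : (Icc (max T1' 0) ts ∩ {s | min (f y1) (x s0) ≤ x s}).Nonempty := by
      refine ⟨max T1' 0, ⟨le_rfl, htsT1⟩, ?_⟩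
      simp only [mem_setOf_eq]
      have := isMinOn_iff.1 hs0min (max T1' 0) ⟨hT10, le_rfl⟩
      exact le_trans (min_le_right _ _) this
    have hS2bdd : BddAbove (Icc (max T1' 0) ts ∩ {s | min (f y1) (x s0) ≤ x s}) :=
      bddAbove_Icc.mono inter_subset_left
    set t2 : ℝ := sSup (Icc (max T1' 0) ts ∩ {s | min (f y1) (x s0) ≤ x s}) with ht2def
    have ht2S : t2 ∈ Icc (max T1' 0) ts ∩ {s | min (f y1) (x s0) ≤ x s} :=
      hS2c.csSup_mem hS2ne hS2bdd
    have ht20 : (0:ℝ) ≤ t2 := hT10.trans ht2S.1.1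
    have hsmall2 : ∀ u : ℝ, u ∈ Ioc t2 ts → x u < min (f y1) (x s0) := by
      intro u hu
      by_contra hle
      push_neg at hle
      exact absurd (le_csSup hS2bdd ⟨⟨ht2S.1.1.trans hu.1.le, hu.2⟩, hle⟩) (not_le.2 hu.1)
    have hbd : ∀ᵐ u ∂(volume.restrict (Ioc t2 ts)), 0 ≤ G u := by
      filter_upwards [ae_restrict_mem measurableSet_Ioc] with u hu
      have h1 : f y1 ≤ F u := hFge u (ht2S.1.1.trans hu.1.le) hu.2
      have h2 : x u < min (f y1) (x s0) := hsmall2 u hu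
      have h3 : min (f y1) (x s0) ≤ f y1 := min_le_left _ _
      simp only [hG]
      exact mul_nonneg (hr_nonneg u) (by linarith)
    have hlo := hint_ge t2 ts ht20 ht2S.1.2 0 hbd
    have hxeq := hstep t2 ts ht20 ht2S.1.2
    have hxt2 : min (f y1) (x s0) ≤ x t2 := ht2S.2
    rw [zero_mul] at hlo
    have hlev_a' : a' < min (f y1) (x s0) := lt_min hlam' ha'_m0
    linarith
  -- STEP 3 : liminf ≥ m
  have hal_a : a ≤ liminf x atTop := le_liminf_of_le hbu.isCoboundedUnder_ge ha_ev
  have hal_pos : 0 < liminf x atTop := lt_of_lt_of_le ha_pos hal_a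
  have halM : liminf x atTop ≤ M := hll.trans hlimsupM
  have hbddKM : BddBelow (f '' Icc (liminf x atTop) M) := by
    refine ⟨0, ?_⟩
    rintro y ⟨w, hw, rfl⟩
    exact hf_nonneg w (by linarith [hw.1])
  have hstep3 : ∀ ε : ℝ, 0 < ε → ε < liminf x atTop →
      sInf (f '' Icc (liminf x atTop - ε) (M + ε)) ≤ liminf x atTop := by
    intro ε hε hεal
    have h1 : ∀ᶠ t in atTop, liminf x atTop - ε < x t :=
      eventually_lt_of_lt_liminf (by linarith) hbl
    have h2 : ∀ᶠ t in atTop, x t < M + ε := eventually_lt_of_limsup_lt (by linarith) hbu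
    obtain ⟨T0', hT0'⟩ := eventually_atTop.1 (h1.and h2)
    obtain ⟨T1', hT1'⟩ := eventually_atTop.1 (hh_tend.eventually_ge_atTop (max T0' 0))
    refine hlower _ (max T1' 0) (le_max_right _ _) ?_
    intro u hu
    refine hF_ge u ((le_max_right _ _).trans hu) _ ?_
    intro s hs
    have hsT0 : max T0' 0 ≤ s := (hT1' u ((le_max_left _ _).trans hu)).trans hs.1
    have hx1 := (hT0' s ((le_max_left _ _).trans hsT0)).1
    have hx2 := (hT0' s ((le_max_left _ _).trans hsT0)).2
    refine csInf_le ?_ (mem_image_of_mem f ⟨hx1.le, hx2.le⟩)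
    refine ⟨0, ?_⟩
    rintro y ⟨z, hz, rfl⟩
    exact hf_nonneg z (by linarith [hz.1])
  have hc0 : sInf (f '' Icc (liminf x atTop) M) ≤ liminf x atTop := by
    by_contra hno
    push_neg at hno
    have hL1 : (0:ℝ) < L + 1 := by linarith
    set c0 : ℝ := sInf (f '' Icc (liminf x atTop) M) with hc0def
    set ε : ℝ := min (liminf x atTop / 2) ((c0 - liminf x atTop)/(2*(L+1))) with hεdef
    have hε_pos : 0 < ε := by
      refine lt_min (by linarith) ?_
      have : 0 < c0 - liminf x atTop := by linarith
      positivity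
    have hε_al : ε < liminf x atTop := by
      have h1 : ε ≤ liminf x atTop / 2 := min_le_left _ _
      linarith
    have h3 := hstep3 ε hε_pos hε_al
    have h4 : c0 - L * ε ≤ sInf (f '' Icc (liminf x atTop - ε) (M + ε)) := by
      refine le_csInf ((nonempty_Icc.2 (by linarith)).image f) ?_
      rintro y ⟨z, hz, rfl⟩
      have hz0 : 0 ≤ z := by linarith [hz.1]
      have hzc_mem : max (liminf x atTop) (min z M) ∈ Icc (liminf x atTop) M :=
        ⟨le_max_left _ _, max_le halM (min_le_right _ _)⟩
      have h5 : c0 ≤ f (max (liminf x atTop) (min z M)) :=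
        csInf_le hbddKM (mem_image_of_mem f hzc_mem)
      have h6 : |f z - f (max (liminf x atTop) (min z M))| ≤
          L * |z - max (liminf x atTop) (min z M)| :=
        hf_lip z _ hz0 (by linarith [hzc_mem.1])
      have h7 : |z - max (liminf x atTop) (min z M)| ≤ ε := by
        rcases lt_or_ge z (liminf x atTop) with hzal | hzal
        · rw [min_eq_left (by linarith : z ≤ M), max_eq_left hzal.le,
            abs_of_nonpos (by linarith)]
          linarith [hz.1]
        · rcases le_or_gt z M with hzM | hzM
          · rw [min_eq_left hzM, max_eq_right hzal, sub_self, abs_zero]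
            exact hε_pos.le
          · rw [min_eq_right hzM.le, max_eq_right halM, abs_of_nonneg (by linarith)]
            linarith [hz.2]
      have h8 := abs_le.1 h6
      have h9 : L * |z - max (liminf x atTop) (min z M)| ≤ L * ε :=
        mul_le_mul_of_nonneg_left h7 hL
      linarith
    have h10 : L * ε ≤ (c0 - liminf x atTop)/2 := by
      have h11 : ε ≤ (c0 - liminf x atTop)/(2*(L+1)) := min_le_right _ _
      have h12 : L * ε ≤ L * ((c0 - liminf x atTop)/(2*(L+1))) :=
        mul_le_mul_of_nonneg_left h11 hL
      have h13 : L * ((c0 - liminf x atTop)/(2*(L+1))) ≤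
          (L+1) * ((c0 - liminf x atTop)/(2*(L+1))) := by
        refine mul_le_mul_of_nonneg_right (by linarith) ?_
        have : 0 < c0 - liminf x atTop := by linarith
        positivity
      have h14 : (L+1) * ((c0 - liminf x atTop)/(2*(L+1))) = (c0 - liminf x atTop)/2 := by
        field_simp
      linarith
    linarith
  obtain ⟨z0, hz0_mem, hz0⟩ := isCompact_Icc.exists_isMinOn (nonempty_Icc.2 halM)
    hf_cont.continuousOn
  have hc0z : f z0 ≤ liminf x atTop := by
    refine le_trans ?_ hc0
    exact le_csInf ((nonempty_Icc.2 halM).image f)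
      (by rintro y ⟨z, hz, rfl⟩; exact isMinOn_iff.1 hz0 z hz)
  rcases lt_or_ge z0 K with h1 | h1
  · exfalso
    have h2 : z0 < f z0 := hf_below z0 (lt_of_lt_of_le hal_pos hz0_mem.1) h1
    linarith [hz0_mem.1]
  · have h4 : m ≤ f z0 := by
      rw [hm]
      refine csInf_le ⟨0, ?_⟩ (mem_image_of_mem f ⟨h1, hz0_mem.2⟩)
      rintro y ⟨w, hw, rfl⟩
      exact hf_nonneg w (by linarith [hw.1])
    linarith
end

section
/- Suppose f satisfies hypothesis (a1) and, with M = max_{x ∈ [0,K]} f(x) > K, m = min_{x ∈ [K,M]} f(x), x_max the greatest point of [0,K] where f attains M, and x_min the least point of [K,M] where f attains m, assume m = f(x_min) < x_max < K. Then for every a ∈ (m, x_max) and every b ∈ (K, M) with min_{x ∈ [K,b]} f(x) < a, there exist a constant r > 0, a Lebesgue measurable function h : [0,∞) → ℝ with h(t) ≤ t and h(t) → ∞ as t → ∞, a continuous bounded function φ : (−∞,0] → [0,∞) with φ(0) > 0, and a continuous x : ℝ → ℝ with x(t) = φ(t) for t ≤ 0 and x(t) = φ(0) + ∫_0^t r·(f(x(h(u)))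 − x(u)) du for all t ≥ 0, such that liminf_{t→∞} x(t) = a and limsup_{t→∞} x(t) = b. -/
open MeasureTheory Filter Set

open scoped Real

/-- A measurable (in fact antitone) right inverse of a continuous function on an
interval, taking values in `[α, β]`, inverting `f` on `[f β, f α]`. -/
lemma meas_inverse_aux (f : ℝ → ℝ) (hf : Continuous f) (α β : ℝ) (hαβ : α ≤ β) :
    ∃ y : ℝ → ℝ, Antitone y ∧ (∀ w, y w ∈ Set.Icc α β) ∧
      ∀ w, f β ≤ w → w ≤ f α → f (y w) = w := by
  set S : ℝ → Set ℝ := fun w => {u | u ∈ Set.Icc α β ∧ f u ≤ w} ∪ {β} with hS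
  have hne : ∀ w, (S w).Nonempty := fun w => ⟨β, Or.inr rfl⟩
  have hsub : ∀ w, S w ⊆ Set.Icc α β := by
    intro w u hu
    rcases hu with ⟨h1, _⟩ | h
    · exact h1
    · rw [Set.mem_singleton_iff] at h; subst h; exact ⟨hαβ, le_rfl⟩
  have hbdd : ∀ w, BddBelow (S w) := fun w => bddBelow_Icc.mono (hsub w)
  have hcl : ∀ w, IsClosed (S w) := by
    intro w
    apply IsClosed.union
    · have : {u | u ∈ Set.Icc α β ∧ f u ≤ w} = Set.Icc α β ∩ f ⁻¹' Set.Iic w := rfl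
      rw [this]
      exact isClosed_Icc.inter (isClosed_Iic.preimage hf)
    · exact isClosed_singleton
  have hmem : ∀ w, sInf (S w) ∈ S w := fun w => (hcl w).csInf_mem (hne w) (hbdd w)
  refine ⟨fun w => sInf (S w), ?_, ?_, ?_⟩
  · intro w1 w2 h12
    show sInf (S w2) ≤ sInf (S w1)
    apply csInf_le_csInf (hbdd w2) (hne w1)
    intro u hu
    rcases hu with ⟨h1, h2⟩ | h
    · exact Or.inl ⟨h1, h2.trans h12⟩
    · exact Or.inr h
  · intro w; exact hsub w (hmem w)
  · intro w hw1 hw2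
    have hy := hmem w
    have hyI := hsub w hy
    have hle : f (sInf (S w)) ≤ w := by
      rcases hy with ⟨_, h2⟩ | h
      · exact h2
      · rw [Set.mem_singleton_iff] at h; rw [h]; exact hw1
    have hge : w ≤ f (sInf (S w)) := by
      rcases eq_or_lt_of_le hyI.1 with heq | hlt
      · rw [← heq]; exact hw2
      · have hev : ∀ᶠ u in nhdsWithin (sInf (S w)) (Set.Iio (sInf (S w))), w ≤ f u := by
          filter_upwards [Ioo_mem_nhdsLT_of_mem
            (⟨hlt, le_rfl⟩ : sInf (S w) ∈ Set.Ioc α (sInf (S w)))] with u hu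
          by_contra hcon
          push_neg at hcon
          have humem : u ∈ S w := Or.inl ⟨⟨hu.1.le, hu.2.le.trans hyI.2⟩, hcon.le⟩
          exact absurd (csInf_le (hbdd w) humem) (not_le.mpr hu.2)
        exact ge_of_tendsto (hf.continuousWithinAt) hev
    exact le_antisymm hle hge

set_option maxHeartbeats 1000000 in
theorem distributed_delay_attracting_set_sharp
    (f : ℝ → ℝ) (L K : ℝ) (hL : 0 ≤ L) (hK : 0 < K)
    (hf_cont : Continuous f)
    (hf_nonneg : ∀ y : ℝ, 0 ≤ y → 0 ≤ f y)
    (hf_lip : ∀ u v : ℝ, 0 ≤ u → 0 ≤ v → |f u - f v| ≤ L * |u - v|)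
    (hf_zero : f 0 = 0)
    (hf_below : ∀ y : ℝ, 0 < y → y < K → y < f y)
    (hf_above : ∀ y : ℝ, K < y → 0 < f y ∧ f y < y)
    (M m xmax xmin : ℝ)
    (hM : M = sSup (f '' Icc (0 : ℝ) K))
    (hm : m = sInf (f '' Icc K M))
    (hMK : K < M)
    (hxmax_mem : xmax ∈ Icc (0 : ℝ) K) (hxmax_val : f xmax = M)
    (hxmax_greatest : ∀ y ∈ Icc (0 : ℝ) K, f y = M → y ≤ xmax)
    (hxmin_mem : xmin ∈ Icc K M) (hxmin_val : f xmin = m)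
    (hxmin_least : ∀ y ∈ Icc K M, f y = m → xmin ≤ y)
    (hm_lt : m < xmax) (hxmax_lt : xmax < K)
    :
    ∀ a b : ℝ, m < a → a < xmax → K < b → b < M → sInf (f '' Icc K b) < a →
      ∃ r : ℝ, 0 < r ∧
      ∃ h : ℝ → ℝ, Measurable h ∧ (∀ t : ℝ, 0 ≤ t → h t ≤ t) ∧
        Tendsto h atTop atTop ∧
      ∃ φ : ℝ → ℝ, ContinuousOn φ (Iic (0 : ℝ)) ∧
        (∃ C : ℝ, ∀ t : ℝ, t ≤ 0 → |φ t| ≤ C) ∧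
        (∀ t : ℝ, t ≤ 0 → 0 ≤ φ t) ∧ 0 < φ 0 ∧
      ∃ x : ℝ → ℝ, Continuous x ∧ (∀ t : ℝ, t ≤ 0 → x t = φ t) ∧
        (∀ t : ℝ, 0 ≤ t →
          x t = φ 0 + ∫ u in (0:ℝ)..t, r * (f (x (h u)) - x u)) ∧
        liminf x atTop = a ∧ limsup x atTop = b := by
  intro a b ham hax hKb hbM hinf
  have hπ : (0:ℝ) < π := Real.pi_pos
  have hab : a < b := lt_trans (lt_trans hax hxmax_lt) hKb
  have hm0 : 0 ≤ m := by
    rw [hm]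
    apply Real.sInf_nonneg
    rintro w ⟨u, hu, rfl⟩
    exact hf_nonneg u (hK.le.trans hu.1)
  have ha0 : 0 < a := lt_of_le_of_lt hm0 ham
  obtain ⟨z, hzmem, hzval'⟩ :=
    isCompact_Icc.exists_sInf_image_eq (s := Icc K b) (nonempty_Icc.mpr hKb.le)
      hf_cont.continuousOn
  have hzval : f z = sInf (f '' Icc K b) := hzval'.symm
  set c := sInf (f '' Icc K b) with hcdef
  have hca : c < a := hinf
  have hxz : xmax ≤ z := hxmax_lt.le.trans hzmem.1
  obtain ⟨y, hy_anti, hy_mem, hy_eq⟩ := meas_inverse_aux f hf_cont xmax z hxz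
  set p := (a + b) / 2 with hp
  set q := (b - a) / 2 with hqdef
  have hq : 0 < q := by rw [hqdef]; linarith
  set d := min (a - c) (M - b) with hd
  have hd0 : 0 < d := lt_min (by linarith) (by linarith)
  set r := 2 * q / d with hrdef
  have hr : 0 < r := div_pos (by linarith) hd0
  have hqr : q / r = d / 2 := by
    rw [hrdef]
    field_simp
  have hd1 : d ≤ a - c := min_le_left _ _
  have hd2 : d ≤ M - b := min_le_right _ _
  set v : ℝ → ℝ := fun t => p + q * Real.sin t + q / r * Real.cos t with hvdef
  have hvmem : ∀ t : ℝ, c ≤ v t ∧ v t ≤ M := by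
    intro t
    have hs1 := Real.neg_one_le_sin t
    have hs2 := Real.sin_le_one t
    have hc1 := Real.neg_one_le_cos t
    have hc2 := Real.cos_le_one t
    simp only [hvdef, hqr]
    constructor <;> nlinarith
  set x : ℝ → ℝ := fun t => p + q * Real.sin t with hxdef
  set h : ℝ → ℝ := fun t =>
    Real.arcsin ((y (v t) - p) / q) + (⌊(t - π / 2) / (2 * π)⌋ : ℤ) * (2 * π) with hhdef
  have hxb : ∀ t, a ≤ x t ∧ x t ≤ b := by
    intro t
    have hs1 := Real.neg_one_le_sin t
    have hs2 := Real.sin_le_one t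
    simp only [hxdef]
    constructor <;> nlinarith
  have hymem : ∀ t, a ≤ y (v t) ∧ y (v t) ≤ b := fun t =>
    ⟨hax.le.trans (hy_mem (v t)).1, (hy_mem (v t)).2.trans hzmem.2⟩
  have hxh : ∀ t, x (h t) = y (v t) := by
    intro t
    have h1 : -1 ≤ (y (v t) - p) / q := by
      rw [le_div_iff₀ hq]
      nlinarith [(hymem t).1]
    have h2 : (y (v t) - p) / q ≤ 1 := by
      rw [div_le_one hq]
      nlinarith [(hymem t).2]
    simp only [hxdef, hhdef]
    rw [Real.sin_add_int_mul_two_pi, Real.sin_arcsin h1 h2]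
    field_simp
    ring
  have hfxh : ∀ t, f (x (h t)) = v t := by
    intro t
    rw [hxh t]
    exact hy_eq (v t) (by rw [hzval]; exact (hvmem t).1)
      (by rw [hxmax_val]; exact (hvmem t).2)
  have hint : ∀ u : ℝ, r * (f (x (h u)) - x u) = q * Real.cos u := by
    intro u
    rw [hfxh u]
    simp only [hvdef, hxdef]
    field_simp
    ring
  have hv_cont : Continuous v := by
    rw [hvdef]; fun_prop
  have hx_cont : Continuous x := by
    rw [hxdef]; fun_prop
  have hhm : Measurable h := by
    rw [hhdef]
    apply Measurable.add
    · exact Real.continuous_arcsin.measurable.comp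
        (((hy_anti.measurable.comp hv_cont.measurable).sub measurable_const).div_const q)
    · apply Measurable.mul _ measurable_const
      exact measurable_from_top.comp
        ((measurable_id.sub measurable_const).div_const (2 * π)).floor
  have hht : ∀ t : ℝ, h t ≤ t := by
    intro t
    have h1 : Real.arcsin ((y (v t) - p) / q) ≤ π / 2 := Real.arcsin_le_pi_div_two _
    have h3 : (0:ℝ) < 2 * π := by linarith
    have h2 : (⌊(t - π / 2) / (2 * π)⌋ : ℝ) ≤ (t - π / 2) / (2 * π) := Int.floor_le _
    have h4 : (⌊(t - π / 2) / (2 * π)⌋ : ℝ) * (2 * π) ≤ t - π / 2 := by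
      calc (⌊(t - π / 2) / (2 * π)⌋ : ℝ) * (2 * π)
          ≤ ((t - π / 2) / (2 * π)) * (2 * π) := by nlinarith
        _ = t - π / 2 := by field_simp
    simp only [hhdef]
    linarith
  have hlow : ∀ t : ℝ, t + -(3 * π) ≤ h t := by
    intro t
    have h1 : -(π / 2) ≤ Real.arcsin ((y (v t) - p) / q) := Real.neg_pi_div_two_le_arcsin _
    have h3 : (0:ℝ) < 2 * π := by linarith
    have h2 : (t - π / 2) / (2 * π) - 1 < (⌊(t - π / 2) / (2 * π)⌋ : ℝ) :=
      Int.sub_one_lt_floor _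
    have h4 : t - π / 2 - 2 * π ≤ (⌊(t - π / 2) / (2 * π)⌋ : ℝ) * (2 * π) := by
      have h5 := mul_le_mul_of_nonneg_right h2.le h3.le
      calc t - π / 2 - 2 * π = ((t - π / 2) / (2 * π) - 1) * (2 * π) := by
            field_simp
        _ ≤ _ := h5
    simp only [hhdef]
    linarith
  have hhtop : Tendsto h atTop atTop :=
    tendsto_atTop_mono hlow (tendsto_atTop_add_const_right atTop (-(3 * π)) tendsto_id)
  have hpeak : ∀ t0 : ℝ, ∃ t ≥ t0, x t = b := by
    intro t0
    set n : ℤ := max ⌈t0 / (2 * π)⌉ 0 with hn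
    refine ⟨π / 2 + (n : ℝ) * (2 * π), ?_, ?_⟩
    · have h1 : t0 / (2 * π) ≤ (⌈t0 / (2 * π)⌉ : ℝ) := Int.le_ceil _
      have h2 : (⌈t0 / (2 * π)⌉ : ℝ) ≤ (n : ℝ) := by exact_mod_cast le_max_left _ _
      have h3 : (0:ℝ) < 2 * π := by linarith
      have h4 : t0 ≤ (n : ℝ) * (2 * π) := by
        calc t0 = (t0 / (2 * π)) * (2 * π) := by field_simp
          _ ≤ (n : ℝ) * (2 * π) := by nlinarith
      linarith
    · simp only [hxdef]
      rw [Real.sin_add_int_mul_two_pi, Real.sin_pi_div_two]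
      rw [hp, hqdef]; ring
  have htrough : ∀ t0 : ℝ, ∃ t ≥ t0, x t = a := by
    intro t0
    set n : ℤ := max ⌈(t0 + π / 2) / (2 * π)⌉ 0 with hn
    refine ⟨-(π / 2) + (n : ℝ) * (2 * π), ?_, ?_⟩
    · have h1 : (t0 + π / 2) / (2 * π) ≤ (⌈(t0 + π / 2) / (2 * π)⌉ : ℝ) := Int.le_ceil _
      have h2 : (⌈(t0 + π / 2) / (2 * π)⌉ : ℝ) ≤ (n : ℝ) := by exact_mod_cast le_max_left _ _
      have h3 : (0:ℝ) < 2 * π := by linarith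
      have h4 : t0 + π / 2 ≤ (n : ℝ) * (2 * π) := by
        calc t0 + π / 2 = ((t0 + π / 2) / (2 * π)) * (2 * π) := by field_simp
          _ ≤ (n : ℝ) * (2 * π) := by nlinarith
      linarith
    · simp only [hxdef]
      rw [Real.sin_add_int_mul_two_pi]
      rw [Real.sin_neg, Real.sin_pi_div_two]
      rw [hp, hqdef]; ring
  have hxlb : ∀ t, a ≤ x t := fun t => (hxb t).1
  have hxub : ∀ t, x t ≤ b := fun t => (hxb t).2
  have hlimsup : limsup x atTop = b := by
    apply le_antisymm
    · exact limsup_le_of_le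
        (isCoboundedUnder_le_of_eventually_le atTop (Eventually.of_forall hxlb))
        (Eventually.of_forall hxub)
    · refine le_limsup_of_frequently_le ?_ (isBoundedUnder_of ⟨b, hxub⟩)
      rw [frequently_atTop]
      intro t0
      obtain ⟨t, ht0, ht⟩ := hpeak t0
      exact ⟨t, ht0, ht.ge⟩
  have hliminf : liminf x atTop = a := by
    apply le_antisymm
    · refine liminf_le_of_frequently_le ?_ (isBoundedUnder_of ⟨a, hxlb⟩)
      rw [frequently_atTop]
      intro t0
      obtain ⟨t, ht0, ht⟩ := htrough t0
      exact ⟨t, ht0, ht.le⟩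
    · exact le_liminf_of_le
        (isCoboundedUnder_ge_of_eventually_le atTop (Eventually.of_forall hxub))
        (Eventually.of_forall hxlb)
  have hx0 : x 0 = p := by simp [hxdef]
  refine ⟨r, hr, h, hhm, fun t _ => hht t, hhtop, x, hx_cont.continuousOn,
    ⟨b, fun t _ => ?_⟩, fun t _ => ha0.le.trans (hxlb t), ?_, x, hx_cont,
    fun t _ => rfl, ?_, hliminf, hlimsup⟩
  · rw [abs_le]
    constructor
    · linarith [hxlb t]
    · exact hxub t
  · rw [hx0]; linarith
  · intro t ht
    have hint2 : (∫ u in (0:ℝ)..t, r * (f (x (h u)) - x u)) = ∫ u in (0:ℝ)..t, q * Real.cos u := by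
      simp only [hint]
    rw [hint2, intervalIntegral.integral_const_mul, integral_cos]
    rw [hx0]
    simp only [hxdef]
    rw [Real.sin_zero]
    ring
end

section
/- Suppose hypotheses (a1)–(a5) hold, f is three times continuously differentiable on (0,∞), f has exactly one critical point x₀ > 0 in (0,∞) (a maximum, so f'(x) > 0 for 0 < x < x₀ and f'(x) < 0 for x > x₀), the Schwarzian derivative (Sf)(x) = f'''(x)/f'(x) − (3/2)·(f''(x)/f'(x))² is negative for every x > 0 with x ≠ x₀, and |f'(K)| ≤ 1. Then every solution x of the initial value problem for the distributed-delay equation satisfies lim_{t→∞} x(t) = K. -/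
open MeasureTheory Filter Set

lemma aux_min_principle (G1 G2 G3 : ℝ → ℝ) (a b c : ℝ) (hab : a < b) (hc : c ∈ Ioo a b)
    (hG1 : ∀ v ∈ Icc a b, 0 < G1 v)
    (hD1 : ∀ v ∈ Icc a b, HasDerivAt G1 (G2 v) v)
    (hD2 : ∀ v ∈ Icc a b, HasDerivAt G2 (G3 v) v)
    (hS : ∀ v ∈ Icc a b, G3 v / G1 v - (3/2) * (G2 v / G1 v)^2 < 0) :
    min (G1 a) (G1 b) < G1 c := by
  set H : ℝ → ℝ := fun v => (Real.sqrt (G1 v))⁻¹ with hHdef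
  set H1 : ℝ → ℝ := fun v => -(G2 v) * (2 * Real.sqrt (G1 v) * G1 v)⁻¹ with hH1def
  set H2 : ℝ → ℝ := fun v =>
    -(1/2) * (Real.sqrt (G1 v))⁻¹ * (G3 v / G1 v - (3/2) * (G2 v / G1 v)^2) with hH2def
  have hsq : ∀ v ∈ Icc a b, Real.sqrt (G1 v) * Real.sqrt (G1 v) = G1 v :=
    fun v hv => Real.mul_self_sqrt (hG1 v hv).le
  have hspos : ∀ v ∈ Icc a b, 0 < Real.sqrt (G1 v) :=
    fun v hv => Real.sqrt_pos.2 (hG1 v hv)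
  have hHd : ∀ v ∈ Icc a b, HasDerivAt H (H1 v) v := by
    intro v hv
    have h1 : HasDerivAt (fun w => Real.sqrt (G1 w))
        (1 / (2 * Real.sqrt (G1 v)) * G2 v) v :=
      (Real.hasDerivAt_sqrt (ne_of_gt (hG1 v hv))).comp v (hD1 v hv)
    have h2 := h1.inv (ne_of_gt (hspos v hv))
    refine h2.congr_deriv ?_
    simp only [hH1def]
    have s0 := (hspos v hv).ne'
    have g0 := (hG1 v hv).ne'
    have hsq2 : (Real.sqrt (G1 v))^2 = G1 v := Real.sq_sqrt (hG1 v hv).le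
    rw [hsq2]
    field_simp
  have hH1d : ∀ v ∈ Icc a b, HasDerivAt H1 (H2 v) v := by
    intro v hv
    have s0 := (hspos v hv).ne'
    have g0 := (hG1 v hv).ne'
    have hsqrt : HasDerivAt (fun w => Real.sqrt (G1 w))
        (1 / (2 * Real.sqrt (G1 v)) * G2 v) v :=
      (Real.hasDerivAt_sqrt (ne_of_gt (hG1 v hv))).comp v (hD1 v hv)
    have hinner : HasDerivAt (fun w => 2 * Real.sqrt (G1 w) * G1 w)
        ((2 * (1 / (2 * Real.sqrt (G1 v)) * G2 v)) * G1 v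
          + (2 * Real.sqrt (G1 v)) * G2 v) v :=
      (hsqrt.const_mul 2).mul (hD1 v hv)
    have hinner0 : 2 * Real.sqrt (G1 v) * G1 v ≠ 0 := by positivity
    have hinv := hinner.inv hinner0
    have hprod := ((hD2 v hv).neg).mul hinv
    refine hprod.congr_deriv ?_
    simp only [hH2def, Pi.inv_apply, Pi.neg_apply]
    have hsq2 : G1 v = (Real.sqrt (G1 v))^2 := (Real.sq_sqrt (hG1 v hv).le).symm
    rw [hsq2]
    field_simp
    rw [Real.sq_sqrt (sq_nonneg _)]
    ring
  have hH2pos : ∀ v ∈ Icc a b, 0 < H2 v := by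
    intro v hv
    have := hS v hv
    have hs := hspos v hv
    simp only [hH2def]
    have : 0 < -(G3 v / G1 v - 3 / 2 * (G2 v / G1 v) ^ 2) := by linarith
    have h2 : 0 < (Real.sqrt (G1 v))⁻¹ := inv_pos.2 hs
    nlinarith
  have hHcont : ContinuousOn H (Icc a b) :=
    fun v hv => (hHd v hv).differentiableAt.continuousAt.continuousWithinAt
  have hH1cont : ContinuousOn H1 (Icc a b) :=
    fun v hv => (hH1d v hv).differentiableAt.continuousAt.continuousWithinAt
  have hH1mono : StrictMonoOn H1 (Icc a b) := by
    apply strictMonoOn_of_deriv_pos (convex_Icc a b) hH1cont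
    intro v hv
    rw [interior_Icc] at hv
    rw [(hH1d v (Ioo_subset_Icc_self hv)).deriv]
    exact hH2pos v (Ioo_subset_Icc_self hv)
  by_contra hcon
  push_neg at hcon
  have hIccA : a ∈ Icc a b := left_mem_Icc.2 hab.le
  have hIccB : b ∈ Icc a b := right_mem_Icc.2 hab.le
  have hIccC : c ∈ Icc a b := Ioo_subset_Icc_self hc
  have key : ∀ p ∈ Icc a b, ∀ q ∈ Icc a b, G1 p ≤ G1 q → H q ≤ H p := by
    intro p hp q hq hpq
    simp only [hHdef]
    exact inv_anti₀ (hspos p hp) (Real.sqrt_le_sqrt hpq)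
  have hHaC : H a ≤ H c := key c hIccC a hIccA (hcon.trans (min_le_left _ _))
  have hHbC : H b ≤ H c := key c hIccC b hIccB (hcon.trans (min_le_right _ _))
  obtain ⟨c₀, hc₀, hc₀max⟩ :=
    isCompact_Icc.exists_isMaxOn (nonempty_Icc.2 hab.le) hHcont
  have hmaxC : ∃ c₁ ∈ Ioo a b, IsMaxOn H (Icc a b) c₁ := by
    rcases eq_or_lt_of_le hc₀.1 with h1 | h1
    · exact ⟨c, hc, fun v hv => le_trans (hc₀max hv) (h1 ▸ hHaC)⟩
    rcases eq_or_lt_of_le hc₀.2 with h2 | h2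
    · exact ⟨c, hc, fun v hv => le_trans (hc₀max hv) (h2 ▸ hHbC)⟩
    exact ⟨c₀, ⟨h1, h2⟩, hc₀max⟩
  obtain ⟨c₁, hc₁, hc₁max⟩ := hmaxC
  have hc₁I : c₁ ∈ Icc a b := Ioo_subset_Icc_self hc₁
  have hloc : IsLocalMax H c₁ :=
    hc₁max.isLocalMax (Icc_mem_nhds hc₁.1 hc₁.2)
  have h10 : H1 c₁ = 0 := by
    have := hloc.deriv_eq_zero
    rwa [(hHd c₁ hc₁I).deriv] at this
  have hmono2 : StrictMonoOn H (Icc c₁ b) := by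
    apply strictMonoOn_of_deriv_pos (convex_Icc c₁ b)
      (hHcont.mono (Icc_subset_Icc hc₁I.1 le_rfl))
    intro v hv
    rw [interior_Icc] at hv
    have hvI : v ∈ Icc a b := ⟨hc₁I.1.trans hv.1.le, hv.2.le⟩
    rw [(hHd v hvI).deriv]
    have := hH1mono hc₁I hvI hv.1
    linarith [h10]
  have hfin : H c₁ < H b :=
    hmono2 (left_mem_Icc.2 hc₁.2.le) (right_mem_Icc.2 hc₁.2.le) hc₁.2
  exact absurd (hc₁max hIccB) (not_le.2 hfin)

section OneD
variable (f f' f'' f''' : ℝ → ℝ) (K x₀ : ℝ)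

lemma aux_fK (hK : 0 < K) (hf_cont : Continuous f)
    (hf_below : ∀ y : ℝ, 0 < y → y < K → y < f y)
    (hf_above : ∀ y : ℝ, K < y → 0 < f y ∧ f y < y) : f K = K := by
  rcases lt_trichotomy (f K) K with hlt | heq | hgt
  · exfalso
    obtain ⟨δ, hδ, hball⟩ := Metric.continuousAt_iff.1 (hf_cont.continuousAt (x := K))
      ((K - f K)/2) (by linarith)
    have hm0 : 0 < min (δ/2) (min (K/2) ((K - f K)/4)) :=
      lt_min (by linarith) (lt_min (by linarith) (by linarith))
    have hm1 : min (δ/2) (min (K/2) ((K - f K)/4)) ≤ δ/2 := min_le_left _ _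
    have hm2 : min (δ/2) (min (K/2) ((K - f K)/4)) ≤ K/2 :=
      le_trans (min_le_right _ _) (min_le_left _ _)
    have hm3 : min (δ/2) (min (K/2) ((K - f K)/4)) ≤ (K - f K)/4 :=
      le_trans (min_le_right _ _) (min_le_right _ _)
    have hdist : dist (K - min (δ/2) (min (K/2) ((K - f K)/4))) K < δ := by
      rw [Real.dist_eq, abs_of_nonpos (by linarith)]; linarith
    have hfy := hball hdist
    rw [Real.dist_eq] at hfy
    have h2 := (abs_lt.1 hfy).2
    have h3 := hf_below (K - min (δ/2) (min (K/2) ((K - f K)/4)))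
      (by linarith) (by linarith)
    linarith
  · exact heq
  · exfalso
    obtain ⟨δ, hδ, hball⟩ := Metric.continuousAt_iff.1 (hf_cont.continuousAt (x := K))
      ((f K - K)/2) (by linarith)
    have hm0 : 0 < min (δ/2) ((f K - K)/4) := lt_min (by linarith) (by linarith)
    have hm1 : min (δ/2) ((f K - K)/4) ≤ δ/2 := min_le_left _ _
    have hm3 : min (δ/2) ((f K - K)/4) ≤ (f K - K)/4 := min_le_right _ _
    have hdist : dist (K + min (δ/2) ((f K - K)/4)) K < δ := by
      rw [Real.dist_eq, abs_of_nonneg (by linarith)]; linarith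
    have hfy := hball hdist
    rw [Real.dist_eq] at hfy
    have h2 := (abs_lt.1 hfy).1
    have h3 := (hf_above (K + min (δ/2) ((f K - K)/4)) (by linarith)).2
    linarith

lemma aux_fpos (hK : 0 < K) (hf_cont : Continuous f)
    (hf_below : ∀ y : ℝ, 0 < y → y < K → y < f y)
    (hf_above : ∀ y : ℝ, K < y → 0 < f y ∧ f y < y) :
    ∀ v : ℝ, 0 < v → 0 < f v := by
  intro v hv
  rcases lt_trichotomy v K with h | h | h
  · linarith [hf_below v hv h]
  · rw [h, aux_fK f K hK hf_cont hf_below hf_above]; exact hK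
  · exact (hf_above v h).1

lemma aux_fmono (hx₀ : 0 < x₀) (hf_cont : Continuous f)
    (hd1 : ∀ y : ℝ, 0 < y → HasDerivAt f (f' y) y)
    (hincr : ∀ y : ℝ, 0 < y → y < x₀ → 0 < f' y) :
    StrictMonoOn f (Icc 0 x₀) := by
  apply strictMonoOn_of_deriv_pos (convex_Icc 0 x₀) hf_cont.continuousOn
  intro v hv
  rw [interior_Icc] at hv
  rw [(hd1 v hv.1).deriv]
  exact hincr v hv.1 hv.2

lemma aux_fanti (hx₀ : 0 < x₀) (hf_cont : Continuous f)
    (hd1 : ∀ y : ℝ, 0 < y → HasDerivAt f (f' y) y)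
    (hdecr : ∀ y : ℝ, x₀ < y → f' y < 0) :
    StrictAntiOn f (Ici x₀) := by
  apply strictAntiOn_of_deriv_neg (convex_Ici x₀) hf_cont.continuousOn
  intro v hv
  rw [interior_Ici] at hv
  rw [(hd1 v (hx₀.trans hv)).deriv]
  exact hdecr v hv

lemma aux_fmax (hx₀ : 0 < x₀) (hf_cont : Continuous f) (hf_zero : f 0 = 0)
    (hK : 0 < K)
    (hf_below : ∀ y : ℝ, 0 < y → y < K → y < f y)
    (hf_above : ∀ y : ℝ, K < y → 0 < f y ∧ f y < y)
    (hd1 : ∀ y : ℝ, 0 < y → HasDerivAt f (f' y) y)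
    (hincr : ∀ y : ℝ, 0 < y → y < x₀ → 0 < f' y)
    (hdecr : ∀ y : ℝ, x₀ < y → f' y < 0) :
    ∀ v : ℝ, 0 ≤ v → f v ≤ f x₀ := by
  intro v hv
  rcases le_or_gt v x₀ with h | h
  · exact (aux_fmono f f' x₀ hx₀ hf_cont hd1 hincr).monotoneOn ⟨hv, h⟩
      ⟨hx₀.le, le_rfl⟩ h
  · exact ((aux_fanti f f' x₀ hx₀ hf_cont hd1 hdecr) (le_refl x₀ : x₀ ∈ Ici x₀)
      (le_of_lt h : v ∈ Ici x₀) h).le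

lemma aux_no2 (hK : 0 < K) (hx₀ : 0 < x₀) (hf_cont : Continuous f)
    (hf_below : ∀ y : ℝ, 0 < y → y < K → y < f y)
    (hf_above : ∀ y : ℝ, K < y → 0 < f y ∧ f y < y)
    (hd1 : ∀ y : ℝ, 0 < y → HasDerivAt f (f' y) y)
    (hd2 : ∀ y : ℝ, 0 < y → HasDerivAt f' (f'' y) y)
    (hd3 : ∀ y : ℝ, 0 < y → HasDerivAt f'' (f''' y) y)
    (hincr : ∀ y : ℝ, 0 < y → y < x₀ → 0 < f' y)
    (hdecr : ∀ y : ℝ, x₀ < y → f' y < 0)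
    (hSchwarz : ∀ y : ℝ, 0 < y → y ≠ x₀ →
      f''' y / f' y - (3 / 2) * (f'' y / f' y) ^ 2 < 0)
    (hKderiv : |f' K| ≤ 1)
    (p q : ℝ) (hp : 0 < p) (hpK : p < K) (hKq : K < q)
    (hfp : f p = q) (hfq : f q = p) : False := by
  have fK : f K = K := aux_fK f K hK hf_cont hf_below hf_above
  have fpos : ∀ v : ℝ, 0 < v → 0 < f v := aux_fpos f K hK hf_cont hf_below hf_above
  have fmono : StrictMonoOn f (Icc 0 x₀) := aux_fmono f f' x₀ hx₀ hf_cont hd1 hincr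
  have fanti : StrictAntiOn f (Ici x₀) := aux_fanti f f' x₀ hx₀ hf_cont hd1 hdecr
  have fmax : ∀ v : ℝ, 0 ≤ v → f v ≤ f x₀ := fun v hv => by
    rcases le_or_gt v x₀ with hle | hlt
    · exact fmono.monotoneOn ⟨hv, hle⟩ ⟨hx₀.le, le_rfl⟩ hle
    · exact (fanti (le_refl x₀) hlt.le hlt).le
  have hq0 : 0 < q := hK.trans hKq
  have hpq : p < q := hpK.trans hKq
  have hgd : ∀ v : ℝ, 0 < v → HasDerivAt (fun w => f (f w)) (f' (f v) * f' v) v :=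
    fun v hv => (hd1 (f v) (fpos v hv)).comp v (hd1 v hv)
  have hgcont : Continuous (fun w => f (f w)) := hf_cont.comp hf_cont
  set G1 : ℝ → ℝ := fun v => f' v * f' (f v) with hG1def
  set G2 : ℝ → ℝ := fun v => f'' v * f' (f v) + f' v * (f'' (f v) * f' v) with hG2def
  set G3 : ℝ → ℝ := fun v => (f''' v * f' (f v) + f'' v * (f'' (f v) * f' v)) +
    (f'' v * (f'' (f v) * f' v) + f' v * ((f''' (f v) * f' v) * f' v + f'' (f v) * f'' v))
    with hG3def
  have hGd1 : ∀ v : ℝ, 0 < v → 0 < f v → HasDerivAt G1 (G2 v) v := fun v hv hfv =>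
    (hd2 v hv).mul (((hd2 (f v) hfv)).comp v (hd1 v hv))
  have hGd2 : ∀ v : ℝ, 0 < v → 0 < f v → HasDerivAt G2 (G3 v) v := fun v hv hfv =>
    ((hd3 v hv).mul ((hd2 (f v) hfv).comp v (hd1 v hv))).add
      ((hd2 v hv).mul (((hd3 (f v) hfv).comp v (hd1 v hv)).mul (hd2 v hv)))
  have hSg : ∀ v : ℝ, 0 < v → 0 < f v → v ≠ x₀ → f v ≠ x₀ → 0 < G1 v →
      G3 v / G1 v - (3/2) * (G2 v / G1 v)^2 < 0 := by
    intro v hv hfv hne hfne hpos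
    have h1 : f' v ≠ 0 := by
      intro h0; rw [hG1def] at hpos; simp only [h0, zero_mul] at hpos; exact lt_irrefl 0 hpos
    have h2 : f' (f v) ≠ 0 := by
      intro h0; rw [hG1def] at hpos; simp only [h0, mul_zero] at hpos; exact lt_irrefl 0 hpos
    have e : G3 v / G1 v - (3/2) * (G2 v / G1 v)^2 =
        (f''' v / f' v - (3/2) * (f'' v / f' v)^2) +
        (f' v)^2 * (f''' (f v) / f' (f v) - (3/2) * (f'' (f v) / f' (f v))^2) := by
      rw [hG1def, hG2def, hG3def]; field_simp; ring
    rw [e]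
    have s1 := hSchwarz v hv hne
    have s2 := hSchwarz (f v) hfv hfne
    have hp2 : 0 < (f' v)^2 := lt_of_le_of_ne (sq_nonneg _) (Ne.symm (pow_ne_zero 2 h1))
    nlinarith
  have happly : ∀ a b : ℝ, a < b → K ∈ Ioo a b →
      (∀ v, v ∈ Icc a b → 0 < v ∧ 0 < f v ∧ v ≠ x₀ ∧ f v ≠ x₀ ∧ 0 < G1 v) →
      1 ≤ G1 a → 1 ≤ G1 b → False := by
    intro a b hab hKm hside h1a h1b
    have key := aux_min_principle G1 G2 G3 a b K hab hKm
      (fun v hv => (hside v hv).2.2.2.2)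
      (fun v hv => hGd1 v (hside v hv).1 (hside v hv).2.1)
      (fun v hv => hGd2 v (hside v hv).1 (hside v hv).2.1)
      (fun v hv => hSg v (hside v hv).1 (hside v hv).2.1 (hside v hv).2.2.1
        (hside v hv).2.2.2.1 (hside v hv).2.2.2.2)
    have hGK : G1 K ≤ 1 := by
      rw [hG1def]; simp only; rw [fK]
      have := abs_le.1 hKderiv
      nlinarith [this.1, this.2]
    have hmin : 1 ≤ min (G1 a) (G1 b) := le_min h1a h1b
    linarith
  have hx₀q : x₀ < q := by
    by_contra hle
    push_neg at hle
    have := fmono ⟨hp.le, hpq.le.trans hle⟩ ⟨hq0.le, hle⟩ hpq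
    rw [hfp, hfq] at this
    linarith
  rcases le_or_gt x₀ p with hA | hC
  · -- Case A : x₀ ≤ p
    have hfacts : ∀ v : ℝ, p < v → v < q → 0 < v ∧ 0 < f v ∧ v ≠ x₀ ∧ f v ≠ x₀ ∧ 0 < G1 v := by
      intro v hv1 hv2
      have hv0 : 0 < v := hp.trans hv1
      have hx₀v : x₀ < v := lt_of_le_of_lt hA hv1
      have hfvp : p < f v := by
        have := fanti (hA.trans hv1.le : v ∈ Ici x₀) ((hA.trans hpq.le : q ∈ Ici x₀)) hv2
        rw [hfq] at this; exact this
      have hx₀fv : x₀ < f v := lt_of_le_of_lt hA hfvp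
      refine ⟨hv0, hp.trans hfvp, hx₀v.ne', hx₀fv.ne', ?_⟩
      exact mul_pos_of_neg_of_neg (hdecr v hx₀v) (hdecr (f v) hx₀fv)
    obtain ⟨a, ha, haeq⟩ := exists_hasDerivAt_eq_slope (fun w => f (f w))
      (fun v => f' (f v) * f' v) hpK hgcont.continuousOn
      (fun v hv => hgd v (hp.trans hv.1))
    obtain ⟨b, hb, hbeq⟩ := exists_hasDerivAt_eq_slope (fun w => f (f w))
      (fun v => f' (f v) * f' v) hKq hgcont.continuousOn
      (fun v hv => hgd v (hK.trans hv.1))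
    simp only [fK, hfp, hfq] at haeq hbeq
    rw [div_self (by linarith : K - p ≠ 0)] at haeq
    rw [div_self (by linarith : q - K ≠ 0)] at hbeq
    refine happly a b (ha.2.trans hb.1) ⟨ha.2, hb.1⟩ ?_ ?_ ?_
    · intro v hv
      exact hfacts v (lt_of_lt_of_le ha.1 hv.1) (lt_of_le_of_lt hv.2 hb.2)
    · rw [hG1def]; simp only; rw [mul_comm]; rw [haeq]
    · rw [hG1def]; simp only; rw [mul_comm]; rw [hbeq]
  · -- Case C : p < x₀
    have hgIoc : ∀ v : ℝ, p ≤ v → v ≤ x₀ → f (f v) ≤ p := by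
      intro v hv1 hv2
      have hv0 : 0 ≤ v := le_trans hp.le hv1
      have h1 : q ≤ f v := by
        rw [← hfp]
        exact fmono.monotoneOn ⟨hp.le, hC.le⟩ ⟨hv0, hv2⟩ hv1
      have h2 : f (f v) ≤ f q :=
        fanti.antitoneOn (hx₀q.le : q ∈ Ici x₀) (le_trans hx₀q.le h1 : f v ∈ Ici x₀) h1
      rw [hfq] at h2; exact h2
    have hx₀K : x₀ < K := by
      by_contra hle
      push_neg at hle
      have := hgIoc K hpK.le hle
      rw [fK, fK] at this
      linarith
    have hSne : ({v : ℝ | v ∈ Icc x₀ q ∧ f v ≤ x₀}).Nonempty :=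
      ⟨q, ⟨⟨hx₀q.le, le_rfl⟩, by rw [hfq]; exact hC.le⟩⟩
    have hSbdd : BddBelow {v : ℝ | v ∈ Icc x₀ q ∧ f v ≤ x₀} :=
      ⟨x₀, fun v hv => hv.1.1⟩
    have hSclosed : IsClosed {v : ℝ | v ∈ Icc x₀ q ∧ f v ≤ x₀} := by
      have : {v : ℝ | v ∈ Icc x₀ q ∧ f v ≤ x₀} = Icc x₀ q ∩ f ⁻¹' (Iic x₀) := by
        ext v; simp [Set.mem_inter_iff, Set.mem_preimage, Set.mem_Iic]
      rw [this]
      exact isClosed_Icc.inter (isClosed_Iic.preimage hf_cont)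
    obtain ⟨⟨hv₁x₀, hv₁q⟩, hfv₁le⟩ := hSclosed.csInf_mem hSne hSbdd
    set v₁ := sInf {v : ℝ | v ∈ Icc x₀ q ∧ f v ≤ x₀} with hv₁def
    have hfx₀q : q ≤ f x₀ := by rw [← hfp]; exact fmax p hp.le
    have hx₀v₁ : x₀ < v₁ := by
      rcases eq_or_lt_of_le hv₁x₀ with he | h
      · exfalso; rw [← he] at hfv₁le; linarith
      · exact h
    have hnotS : ∀ v : ℝ, x₀ ≤ v → v < v₁ → x₀ < f v := by
      intro v h1 h2
      by_contra hle
      push_neg at hle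
      have hmem : v ∈ {v : ℝ | v ∈ Icc x₀ q ∧ f v ≤ x₀} :=
        ⟨⟨h1, le_trans h2.le hv₁q⟩, hle⟩
      have := csInf_le hSbdd hmem
      rw [← hv₁def] at this
      linarith
    have hfv₁ : f v₁ = x₀ := by
      rcases eq_or_lt_of_le hfv₁le with he | hlt
      · exact he
      exfalso
      obtain ⟨δ, hδ, hball⟩ := Metric.continuousAt_iff.1 (hf_cont.continuousAt (x := v₁))
        ((x₀ - f v₁)/2) (by linarith)
      have hm0 : 0 < min (δ/2) ((v₁ - x₀)/2) := lt_min (by linarith) (by linarith)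
      have hm1 : min (δ/2) ((v₁ - x₀)/2) ≤ δ/2 := min_le_left _ _
      have hm2 : min (δ/2) ((v₁ - x₀)/2) ≤ (v₁ - x₀)/2 := min_le_right _ _
      have hdist : dist (v₁ - min (δ/2) ((v₁ - x₀)/2)) v₁ < δ := by
        rw [Real.dist_eq, abs_of_nonpos (by linarith)]; linarith
      have hfy := hball hdist
      rw [Real.dist_eq] at hfy
      have h2 := (abs_lt.1 hfy).2
      have h3 := hnotS (v₁ - min (δ/2) ((v₁ - x₀)/2)) (by linarith) (by linarith)
      linarith
    have hv₁q' : v₁ < q := by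
      rcases eq_or_lt_of_le hv₁q with he | h
      · exfalso; rw [he, hfq] at hfv₁; linarith
      · exact h
    rcases lt_trichotomy K v₁ with hKv | hKv | hKv
    · -- K < v₁ : min principle on [a,b] ⊆ (x₀, v₁)
      have hgx₀ : f (f x₀) ≤ p := by
        have h2 : f (f x₀) ≤ f q :=
          fanti.antitoneOn (hx₀q.le : q ∈ Ici x₀)
            (le_trans hx₀q.le hfx₀q : f x₀ ∈ Ici x₀) hfx₀q
        rw [hfq] at h2; exact h2
      have hfacts : ∀ v : ℝ, x₀ < v → v < v₁ → 0 < v ∧ 0 < f v ∧ v ≠ x₀ ∧ f v ≠ x₀ ∧ 0 < G1 v := by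
        intro v hv1 hv2
        have hv0 : 0 < v := hx₀.trans hv1
        have hx₀fv : x₀ < f v := hnotS v hv1.le hv2
        refine ⟨hv0, hx₀.trans hx₀fv, hv1.ne', hx₀fv.ne', ?_⟩
        exact mul_pos_of_neg_of_neg (hdecr v hv1) (hdecr (f v) hx₀fv)
      obtain ⟨a, ha, haeq⟩ := exists_hasDerivAt_eq_slope (fun w => f (f w))
        (fun v => f' (f v) * f' v) hx₀K hgcont.continuousOn
        (fun v hv => hgd v (hx₀.trans hv.1))
      obtain ⟨b, hb, hbeq⟩ := exists_hasDerivAt_eq_slope (fun w => f (f w))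
        (fun v => f' (f v) * f' v) hKv hgcont.continuousOn
        (fun v hv => hgd v (hK.trans hv.1))
      simp only [fK, hfv₁] at haeq hbeq
      have ha1 : 1 < f' (f a) * f' a := by
        rw [haeq]
        rw [lt_div_iff₀ (by linarith : (0:ℝ) < K - x₀)]
        linarith
      have hb1 : 1 < f' (f b) * f' b := by
        rw [hbeq]
        rw [lt_div_iff₀ (by linarith : (0:ℝ) < v₁ - K)]
        linarith
      refine happly a b (ha.2.trans hb.1) ⟨ha.2, hb.1⟩ ?_ ?_ ?_
      · intro v hv
        exact hfacts v (lt_of_lt_of_le ha.1 hv.1) (lt_of_le_of_lt hv.2 hb.2)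
      · rw [hG1def]; simp only; rw [mul_comm]; exact ha1.le
      · rw [hG1def]; simp only; rw [mul_comm]; exact hb1.le
    · -- K = v₁
      rw [← hKv, fK] at hfv₁
      linarith
    · -- v₁ < K
      obtain ⟨c, hcm, hceq⟩ := exists_hasDerivAt_eq_slope (fun w => f (f w))
        (fun v => f' (f v) * f' v) hKq hgcont.continuousOn
        (fun v hv => hgd v (hK.trans hv.1))
      simp only [fK, hfq, hfp] at hceq
      rw [div_self (by linarith : q - K ≠ 0)] at hceq
      have hc0 : 0 < c := hK.trans hcm.1
      have hcv₁ : v₁ < c := hKv.trans hcm.1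
      have hfc : f c < x₀ := by
        have := fanti (hx₀v₁.le : v₁ ∈ Ici x₀) ((hx₀v₁.trans hcv₁).le : c ∈ Ici x₀) hcv₁
        rw [hfv₁] at this; exact this
      have h1 : f' c < 0 := hdecr c (hx₀v₁.trans hcv₁)
      have h2 : 0 < f' (f c) := hincr (f c) (fpos c hc0) hfc
      nlinarith [hceq]
  done

lemma aux_ffgt (hK : 0 < K) (hx₀ : 0 < x₀) (hf_cont : Continuous f)
    (hf_zero : f 0 = 0)
    (hf_below : ∀ y : ℝ, 0 < y → y < K → y < f y)
    (hf_above : ∀ y : ℝ, K < y → 0 < f y ∧ f y < y)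
    (hd1 : ∀ y : ℝ, 0 < y → HasDerivAt f (f' y) y)
    (hd2 : ∀ y : ℝ, 0 < y → HasDerivAt f' (f'' y) y)
    (hd3 : ∀ y : ℝ, 0 < y → HasDerivAt f'' (f''' y) y)
    (hincr : ∀ y : ℝ, 0 < y → y < x₀ → 0 < f' y)
    (hdecr : ∀ y : ℝ, x₀ < y → f' y < 0)
    (hSchwarz : ∀ y : ℝ, 0 < y → y ≠ x₀ →
      f''' y / f' y - (3 / 2) * (f'' y / f' y) ^ 2 < 0)
    (hKderiv : |f' K| ≤ 1) :
    ∀ v : ℝ, 0 < v → v < K → v < f (f v) := by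
  have fK : f K = K := aux_fK f K hK hf_cont hf_below hf_above
  have hnofix : ∀ w : ℝ, 0 < w → w < K → f (f w) ≠ w := by
    intro w hw0 hwK heq
    have hq : w < f w := hf_below w hw0 hwK
    rcases lt_trichotomy (f w) K with h | h | h
    · have := hf_below (f w) (hw0.trans hq) h
      rw [heq] at this
      linarith
    · rw [h, fK] at heq; linarith
    · exact aux_no2 f f' f'' f''' K x₀ hK hx₀ hf_cont hf_below hf_above hd1 hd2 hd3
        hincr hdecr hSchwarz hKderiv w (f w) hw0 hwK h rfl heq
  intro v hv0 hvK
  obtain ⟨δ, hδ, hball⟩ := Metric.continuousAt_iff.1 (hf_cont.continuousAt (x := 0)) K hK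
  have hsmall : ∀ w : ℝ, 0 < w → w < δ → f w < K := by
    intro w h1 h2
    have hd : dist w 0 < δ := by rw [Real.dist_eq, sub_zero, abs_of_nonneg h1.le]; exact h2
    have := hball hd
    rw [Real.dist_eq, hf_zero, sub_zero] at this
    exact (abs_lt.1 this).2
  have hw₀pos : 0 < min (δ/2) v := lt_min (by linarith) hv0
  have hgw₀ : min (δ/2) v < f (f (min (δ/2) v)) := by
    have h1 : min (δ/2) v < f (min (δ/2) v) :=
      hf_below _ hw₀pos (lt_of_le_of_lt (min_le_right _ _) hvK)
    have h2 : f (min (δ/2) v) < K :=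
      hsmall _ hw₀pos (lt_of_le_of_lt (min_le_left _ _) (by linarith))
    have h3 : f (min (δ/2) v) < f (f (min (δ/2) v)) :=
      hf_below _ (hw₀pos.trans h1) h2
    linarith
  rcases lt_trichotomy v (f (f v)) with h | h | h
  · exact h
  · exact absurd h.symm (hnofix v hv0 hvK)
  · exfalso
    have hcont : ContinuousOn (fun w => f (f w) - w) (Icc (min (δ/2) v) v) :=
      ((hf_cont.comp hf_cont).sub continuous_id).continuousOn
    have hmem : (0:ℝ) ∈ Icc ((fun w => f (f w) - w) v) ((fun w => f (f w) - w) (min (δ/2) v)) :=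
      ⟨by simp only; linarith, by simp only; linarith⟩
    obtain ⟨z, hz, hz0⟩ := intermediate_value_Icc' (min_le_right (δ/2) v) hcont hmem
    simp only at hz0
    have hz0' : f (f z) = z := by linarith
    exact hnofix z (lt_of_lt_of_le hw₀pos hz.1) (lt_of_le_of_lt hz.2 hvK) hz0'

end OneD

set_option maxHeartbeats 2000000

theorem distributed_delay_schwarzian_stability
    (f : ℝ → ℝ) (L K : ℝ) (hL : 0 ≤ L) (hK : 0 < K)
    (h r : ℝ → ℝ) (μ : ℝ → Measure ℝ) (φ : ℝ → ℝ)
    (hf_cont : Continuous f)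
    (hf_nonneg : ∀ y : ℝ, 0 ≤ y → 0 ≤ f y)
    (hf_lip : ∀ u v : ℝ, 0 ≤ u → 0 ≤ v → |f u - f v| ≤ L * |u - v|)
    (hf_zero : f 0 = 0)
    (hf_below : ∀ y : ℝ, 0 < y → y < K → y < f y)
    (hf_above : ∀ y : ℝ, K < y → 0 < f y ∧ f y < y)
    (hh_meas : Measurable h)
    (hh_le : ∀ t : ℝ, 0 ≤ t → h t ≤ t)
    (hh_tend : Tendsto h atTop atTop)
    (hr_meas : Measurable r)
    (hr_nonneg : ∀ t : ℝ, 0 ≤ r t)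
    (hr_bdd : ∃ C : ℝ, ∀ᵐ t ∂volume, r t ≤ C)
    (hr_div : ¬ IntegrableOn r (Ici (0 : ℝ)))
    (hμ_prob : ∀ t : ℝ, 0 ≤ t → IsProbabilityMeasure (μ t))
    (hμ_supp : ∀ t : ℝ, 0 ≤ t → μ t (Icc (h t) t)ᶜ = 0)
    (hμ_meas : ∀ g : ℝ → ℝ, Measurable g → (∃ C : ℝ, ∀ y : ℝ, |g y| ≤ C) →
      Measurable (fun t => ∫ s, g s ∂(μ t)))
    (hφ_cont : ContinuousOn φ (Iic (0 : ℝ)))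
    (hφ_bdd : ∃ C : ℝ, ∀ t : ℝ, t ≤ 0 → |φ t| ≤ C)
    (hφ_nonneg : ∀ t : ℝ, t ≤ 0 → 0 ≤ φ t)
    (hφ_pos : 0 < φ 0)
    (f' f'' f''' : ℝ → ℝ) (x₀ : ℝ) (hx₀ : 0 < x₀)
    (hd1 : ∀ y : ℝ, 0 < y → HasDerivAt f (f' y) y)
    (hd2 : ∀ y : ℝ, 0 < y → HasDerivAt f' (f'' y) y)
    (hd3 : ∀ y : ℝ, 0 < y → HasDerivAt f'' (f''' y) y)
    (hd3_cont : ContinuousOn f''' (Ioi (0 : ℝ)))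
    (hcrit : f' x₀ = 0)
    (hincr : ∀ y : ℝ, 0 < y → y < x₀ → 0 < f' y)
    (hdecr : ∀ y : ℝ, x₀ < y → f' y < 0)
    (hSchwarz : ∀ y : ℝ, 0 < y → y ≠ x₀ →
      f''' y / f' y - (3 / 2) * (f'' y / f' y) ^ 2 < 0)
    (hKderiv : |f' K| ≤ 1)
    (x : ℝ → ℝ)
    (hx_cont : Continuous x)
    (hx_init : ∀ t : ℝ, t ≤ 0 → x t = φ t)
    (hx_sol : ∀ t : ℝ, 0 ≤ t →
      x t = φ 0 + ∫ u in (0:ℝ)..t, r u * ((∫ s, f (x s) ∂(μ u)) - x u))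
    :
    Tendsto x atTop (nhds K) := by
  classical
  -- ===== basic 1-D facts =====
  have fK : f K = K := aux_fK f K hK hf_cont hf_below hf_above
  have fpos : ∀ v : ℝ, 0 < v → 0 < f v := aux_fpos f K hK hf_cont hf_below hf_above
  have fmono : StrictMonoOn f (Icc 0 x₀) := aux_fmono f f' x₀ hx₀ hf_cont hd1 hincr
  have fanti : StrictAntiOn f (Ici x₀) := aux_fanti f f' x₀ hx₀ hf_cont hd1 hdecr
  have fmax : ∀ v : ℝ, 0 ≤ v → f v ≤ f x₀ := fun v hv => by
    rcases le_or_gt v x₀ with hle | hlt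
    · exact fmono.monotoneOn ⟨hv, hle⟩ ⟨hx₀.le, le_rfl⟩ hle
    · exact (fanti (le_refl x₀) hlt.le hlt).le
  have ffgt : ∀ v : ℝ, 0 < v → v < K → v < f (f v) :=
    aux_ffgt f f' f'' f''' K x₀ hK hx₀ hf_cont hf_zero hf_below hf_above hd1 hd2 hd3
      hincr hdecr hSchwarz hKderiv
  -- ===== r bound =====
  obtain ⟨C₀, hC₀⟩ := hr_bdd
  have hC1 : (0:ℝ) < max C₀ 1 := lt_of_lt_of_le one_pos (le_max_right _ _)
  have hrC : ∀ᵐ u ∂(volume : Measure ℝ), r u ≤ max C₀ 1 :=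
    hC₀.mono (fun u hu => le_trans hu (le_max_left _ _))
  set C : ℝ := max C₀ 1 with hCdef
  -- ===== boundedness of x on half-lines =====
  obtain ⟨Cφ, hCφ⟩ := hφ_bdd
  have hCφ0 : 0 ≤ Cφ := le_trans (abs_nonneg _) (hCφ 0 le_rfl)
  have xbdd : ∀ T : ℝ, ∃ B : ℝ, 0 < B ∧ ∀ s : ℝ, s ≤ T → |x s| ≤ B := by
    intro T
    obtain ⟨B₁, hB₁⟩ := (isCompact_Icc (a := (0:ℝ)) (b := max T 0)).exists_bound_of_continuousOn
      hx_cont.continuousOn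
    refine ⟨max Cφ B₁ + 1, by positivity, ?_⟩
    intro s hs
    rcases le_or_gt s 0 with hs0 | hs0
    · rw [hx_init s hs0]
      calc |φ s| ≤ Cφ := hCφ s hs0
        _ ≤ max Cφ B₁ + 1 := by linarith [le_max_left Cφ B₁]
    · have hmem : s ∈ Icc (0:ℝ) (max T 0) := ⟨hs0.le, le_trans hs (le_max_left _ _)⟩
      calc |x s| ≤ B₁ := hB₁ s hmem
        _ ≤ max Cφ B₁ + 1 := by linarith [le_max_right Cφ B₁]
  -- ===== bound for f ∘ x on half-lines =====
  have fxbdd : ∀ T : ℝ, ∃ D : ℝ, 0 < D ∧ ∀ s : ℝ, s ≤ T → |f (x s)| ≤ D := by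
    intro T
    obtain ⟨B, hB0, hB⟩ := xbdd T
    obtain ⟨D₁, hD₁⟩ := (isCompact_Icc (a := -B) (b := B)).exists_bound_of_continuousOn
      hf_cont.continuousOn
    refine ⟨|D₁| + 1, by positivity, ?_⟩
    intro s hs
    calc |f (x s)| = ‖f (x s)‖ := (Real.norm_eq_abs _).symm
      _ ≤ D₁ := hD₁ (x s) (abs_le.1 (hB s hs))
      _ ≤ |D₁| + 1 := by linarith [le_abs_self D₁]
  -- ===== support of μ =====
  have hae : ∀ u : ℝ, 0 ≤ u → ∀ᵐ s ∂(μ u), s ∈ Icc (h u) u := by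
    intro u hu
    rw [Filter.eventually_iff, mem_ae_iff]
    convert hμ_supp u hu using 2
    rfl
  -- ===== integrability of f ∘ x against μ u =====
  have hintfx : ∀ u : ℝ, 0 ≤ u → Integrable (fun s => f (x s)) (μ u) := by
    intro u hu
    haveI := hμ_prob u hu
    obtain ⟨D, hD0, hD⟩ := fxbdd u
    refine Integrable.mono' (integrable_const D)
      ((hf_cont.comp hx_cont).aestronglyMeasurable) ?_
    exact (hae u hu).mono (fun s hs => by
      rw [Real.norm_eq_abs]; exact hD s hs.2)
  -- ===== Y bounds =====
  have hYle : ∀ u : ℝ, 0 ≤ u → ∀ c : ℝ, (∀ s : ℝ, h u ≤ s → s ≤ u → f (x s) ≤ c) →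
      (∫ s, f (x s) ∂ μ u) ≤ c := by
    intro u hu c hc
    haveI := hμ_prob u hu
    calc (∫ s, f (x s) ∂ μ u) ≤ ∫ _, c ∂ μ u := by
          refine integral_mono_ae (hintfx u hu) (integrable_const c) ?_
          exact (hae u hu).mono (fun s hs => hc s hs.1 hs.2)
      _ = c := by simp
  have hYge : ∀ u : ℝ, 0 ≤ u → ∀ c : ℝ, (∀ s : ℝ, h u ≤ s → s ≤ u → c ≤ f (x s)) →
      c ≤ (∫ s, f (x s) ∂ μ u) := by
    intro u hu c hc
    haveI := hμ_prob u hu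
    calc c = ∫ _, c ∂ μ u := by simp
      _ ≤ ∫ s, f (x s) ∂ μ u := by
          refine integral_mono_ae (integrable_const c) (hintfx u hu) ?_
          exact (hae u hu).mono (fun s hs => hc s hs.1 hs.2)

  -- ===== Y is congruent to a measurable function on [0,T] =====
  have hYeq : ∀ T u : ℝ, 0 ≤ u → u ≤ T →
      (∫ s, f (x s) ∂ μ u) = ∫ s, f (x (min s T)) ∂ μ u := by
    intro T u hu huT
    refine integral_congr_ae ?_
    refine (hae u hu).mono (fun s hs => ?_)
    show f (x s) = f (x (min s T))
    rw [min_eq_left (le_trans hs.2 huT)]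
  have hmeasY : ∀ T : ℝ, Measurable (fun u => ∫ s, f (x (min s T)) ∂ μ u) := by
    intro T
    apply hμ_meas
    · exact (hf_cont.comp (hx_cont.comp (continuous_id.min continuous_const))).measurable
    · obtain ⟨D, hD0, hD⟩ := fxbdd T
      exact ⟨D, fun s => hD _ (min_le_right _ _)⟩
  -- ===== interval integrability of the integrand =====
  have hΦint : ∀ a b : ℝ, 0 ≤ a → a ≤ b → IntervalIntegrable
      (fun u => r u * ((∫ s, f (x s) ∂ μ u) - x u)) volume a b := by
    intro a b ha hab
    rw [intervalIntegrable_iff_integrableOn_Icc_of_le hab]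
    obtain ⟨D, hD0, hD⟩ := fxbdd b
    obtain ⟨B, hB0, hB⟩ := xbdd b
    have hYb : ∀ u : ℝ, 0 ≤ u → u ≤ b → |∫ s, f (x s) ∂ μ u| ≤ D := by
      intro u hu hub
      rw [abs_le]
      constructor
      · exact hYge u hu (-D) (fun s h1 h2 => (abs_le.1 (hD s (h2.trans hub))).1)
      · exact hYle u hu D (fun s h1 h2 => (abs_le.1 (hD s (h2.trans hub))).2)
    have hmeasΨ : Measurable (fun u => r u * ((∫ s, f (x (min s b)) ∂ μ u) - x u)) :=
      hr_meas.mul ((hmeasY b).sub hx_cont.measurable)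
    have hΨint : IntegrableOn (fun u => r u * ((∫ s, f (x (min s b)) ∂ μ u) - x u))
        (Icc a b) := by
      refine Integrable.mono' (integrable_const (C * (D + B)))
        hmeasΨ.aestronglyMeasurable.restrict ?_
      refine (ae_restrict_iff' measurableSet_Icc).2 (hrC.mono (fun u hu hmem => ?_))
      have h0u : 0 ≤ u := le_trans ha hmem.1
      have hY2 : |∫ s, f (x (min s b)) ∂ μ u| ≤ D := by
        rw [← hYeq b u h0u hmem.2]; exact hYb u h0u hmem.2
      rw [Real.norm_eq_abs, abs_mul]
      have h1 : |r u| ≤ C := by rw [abs_of_nonneg (hr_nonneg u)]; exact hu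
      have h2 : |(∫ s, f (x (min s b)) ∂ μ u) - x u| ≤ D + B := by
        have e1 := abs_le.1 hY2
        have e2 := abs_le.1 (hB u hmem.2)
        rw [abs_le]; constructor <;> [linarith [e1.1, e2.2]; linarith [e1.2, e2.1]]
      exact mul_le_mul h1 h2 (abs_nonneg _) hC1.le
    refine hΨint.congr_fun ?_ measurableSet_Icc
    intro u hu
    simp only
    rw [← hYeq b u (le_trans ha hu.1) hu.2]
  -- ===== the integrated equation as a difference =====
  have hxdiff : ∀ a b : ℝ, 0 ≤ a → a ≤ b →
      x b - x a = ∫ u in a..b, r u * ((∫ s, f (x s) ∂ μ u) - x u) := by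
    intro a b ha hab
    have h1 := hx_sol a ha
    have h2 := hx_sol b (ha.trans hab)
    have h3 := intervalIntegral.integral_add_adjacent_intervals
      (hΦint 0 a le_rfl ha) (hΦint a b ha hab)
    rw [h1, h2]
    linarith [h3]
  -- ===== r is interval integrable; growth of its primitive =====
  have hrint : ∀ a b : ℝ, a ≤ b → IntervalIntegrable r volume a b := by
    intro a b hab
    rw [intervalIntegrable_iff_integrableOn_Icc_of_le hab]
    refine Integrable.mono' (integrable_const C) hr_meas.aestronglyMeasurable.restrict ?_
    refine (ae_restrict_iff' measurableSet_Icc).2 (hrC.mono (fun u hu _ => ?_))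
    rw [Real.norm_eq_abs, abs_of_nonneg (hr_nonneg u)]; exact hu
  have hRdiff : ∀ a b : ℝ, 0 ≤ a → a ≤ b →
      (∫ u in (0:ℝ)..b, r u) - (∫ u in (0:ℝ)..a, r u) = ∫ u in a..b, r u := by
    intro a b ha hab
    have h3 := intervalIntegral.integral_add_adjacent_intervals
      (hrint 0 a ha) (hrint a b hab)
    linarith [h3]

  -- ===== comparison workhorses =====
  have W2 : ∀ a b κ : ℝ, 0 ≤ a → a ≤ b →
      (∀ u : ℝ, a < u → u ≤ b → (∫ s, f (x s) ∂ μ u) - x u ≤ κ) →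
      x b - x a ≤ κ * ∫ u in a..b, r u := by
    intro a b κ ha hab hcond
    rw [hxdiff a b ha hab, ← intervalIntegral.integral_const_mul]
    refine intervalIntegral.integral_mono_ae_restrict hab (hΦint a b ha hab)
      ((hrint a b hab).const_mul κ) ?_
    refine (ae_restrict_iff' measurableSet_Icc).2 ?_
    rw [ae_iff]
    refine measure_mono_null (fun u hu => ?_) (measure_singleton a)
    rw [Set.mem_setOf_eq] at hu
    push_neg at hu
    obtain ⟨hmem, hP⟩ := hu
    rw [Set.mem_singleton_iff]
    by_contra hne
    have hua : a < u := lt_of_le_of_ne hmem.1 (Ne.symm hne)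
    have hle : r u * ((∫ s, f (x s) ∂ μ u) - x u) ≤ κ * r u := by
      calc r u * ((∫ s, f (x s) ∂ μ u) - x u) ≤ r u * κ :=
            mul_le_mul_of_nonneg_left (hcond u hua hmem.2) (hr_nonneg u)
        _ = κ * r u := mul_comm _ _
    exact absurd hP (not_lt.2 hle)
  have W1 : ∀ a b κ : ℝ, 0 ≤ a → a ≤ b →
      (∀ u : ℝ, a < u → u ≤ b → κ ≤ (∫ s, f (x s) ∂ μ u) - x u) →
      κ * (∫ u in a..b, r u) ≤ x b - x a := by
    intro a b κ ha hab hcond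
    rw [hxdiff a b ha hab, ← intervalIntegral.integral_const_mul]
    refine intervalIntegral.integral_mono_ae_restrict hab
      ((hrint a b hab).const_mul κ) (hΦint a b ha hab) ?_
    refine (ae_restrict_iff' measurableSet_Icc).2 ?_
    rw [ae_iff]
    refine measure_mono_null (fun u hu => ?_) (measure_singleton a)
    rw [Set.mem_setOf_eq] at hu
    push_neg at hu
    obtain ⟨hmem, hP⟩ := hu
    rw [Set.mem_singleton_iff]
    by_contra hne
    have hua : a < u := lt_of_le_of_ne hmem.1 (Ne.symm hne)
    have hle : κ * r u ≤ r u * ((∫ s, f (x s) ∂ μ u) - x u) := by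
      calc κ * r u = r u * κ := mul_comm _ _
        _ ≤ r u * ((∫ s, f (x s) ∂ μ u) - x u) :=
            mul_le_mul_of_nonneg_left (hcond u hua hmem.2) (hr_nonneg u)
    exact absurd hP (not_lt.2 hle)
  -- ===== facts about the primitive of r =====
  have hRnonneg : ∀ a b : ℝ, a ≤ b → 0 ≤ ∫ u in a..b, r u := by
    intro a b hab
    exact intervalIntegral.integral_nonneg hab (fun u _ => hr_nonneg u)
  have hRle : ∀ a b : ℝ, a ≤ b → (∫ u in a..b, r u) ≤ C * (b - a) := by
    intro a b hab
    have h1 := intervalIntegral.integral_mono_ae_restrict hab (hrint a b hab)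
      (intervalIntegrable_const (c := C)) (ae_restrict_of_ae hrC)
    have h2 : (∫ _ in a..b, C) = (b - a) * C := by
      simp [intervalIntegral.integral_const, smul_eq_mul]
    rw [h2] at h1
    linarith
  have hrint' : ∀ a b : ℝ, IntervalIntegrable r volume a b := by
    intro a b
    rcases le_total a b with hle | hle
    · exact hrint a b hle
    · exact (hrint b a hle).symm
  have hRdiffAll : ∀ a b : ℝ,
      (∫ u in (0:ℝ)..b, r u) - (∫ u in (0:ℝ)..a, r u) = ∫ u in a..b, r u := by
    intro a b
    have h3 := intervalIntegral.integral_add_adjacent_intervals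
      (hrint' 0 a) (hrint' a b)
    linarith
  have hRmono : Monotone (fun t => ∫ u in (0:ℝ)..t, r u) := by
    intro s t hst
    have h1 := hRnonneg s t hst
    have h2 := hRdiffAll s t
    simp only
    linarith
  have hRtend : Tendsto (fun t => ∫ u in (0:ℝ)..t, r u) atTop atTop := by
    refine tendsto_atTop_atTop_of_monotone hRmono ?_
    by_contra hbd
    push_neg at hbd
    obtain ⟨M, hM⟩ := hbd
    apply hr_div
    rw [integrableOn_Ici_iff_integrableOn_Ioi]
    refine integrableOn_Ioi_of_intervalIntegral_norm_bounded M 0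
      (f := r) (b := fun i : ℝ => i) (l := atTop) ?_ tendsto_id ?_
    · intro i
      rcases le_total 0 i with h0 | h0
      · exact ((hrint 0 i h0).1)
      · rw [Set.Ioc_eq_empty (not_lt.2 h0)]
        exact integrableOn_empty
    · filter_upwards [eventually_ge_atTop (0:ℝ)] with i hi
      have he : (∫ u in (0:ℝ)..i, ‖r u‖) = ∫ u in (0:ℝ)..i, r u := by
        refine intervalIntegral.integral_congr (fun u _ => ?_)
        rw [Real.norm_eq_abs, abs_of_nonneg (hr_nonneg u)]
      rw [he]
      exact (hM i).le

  -- ===== nonnegativity and positivity of x =====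
  have xnonneg_neg : ∀ t : ℝ, t ≤ 0 → 0 ≤ x t := fun t ht => by
    rw [hx_init t ht]; exact hφ_nonneg t ht
  have xφ0 : x 0 = φ 0 := hx_init 0 le_rfl
  have xpos : ∀ t : ℝ, 0 ≤ t → 0 < x t := by
    by_contra hcon
    push_neg at hcon
    obtain ⟨t₂, ht₂0, ht₂⟩ := hcon
    have hZne : {t : ℝ | 0 ≤ t ∧ x t ≤ 0}.Nonempty := ⟨t₂, ht₂0, ht₂⟩
    have hZbdd : BddBelow {t : ℝ | 0 ≤ t ∧ x t ≤ 0} := ⟨0, fun t ht => ht.1⟩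
    have hZcl : IsClosed {t : ℝ | 0 ≤ t ∧ x t ≤ 0} := by
      have he : {t : ℝ | 0 ≤ t ∧ x t ≤ 0} = Ici 0 ∩ x ⁻¹' (Iic 0) := by
        ext t; simp [Set.mem_setOf_eq, Set.mem_inter_iff]
      rw [he]; exact isClosed_Ici.inter (isClosed_Iic.preimage hx_cont)
    obtain ⟨ht₁0, ht₁x⟩ := hZcl.csInf_mem hZne hZbdd
    set t₁ := sInf {t : ℝ | 0 ≤ t ∧ x t ≤ 0} with ht₁def
    have hxpos_before : ∀ s : ℝ, 0 ≤ s → s < t₁ → 0 < x s := by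
      intro s hs0 hst
      by_contra hle; push_neg at hle
      have : t₁ ≤ s := csInf_le hZbdd ⟨hs0, hle⟩
      linarith
    have ht₁pos : 0 < t₁ := by
      rcases eq_or_lt_of_le ht₁0 with he | hlt
      · exfalso; rw [← he, xφ0] at ht₁x; linarith
      · exact hlt
    have hxt₁0 : 0 ≤ x t₁ := by
      by_contra hneg; push_neg at hneg
      obtain ⟨δ, hδ, hball⟩ := Metric.continuousAt_iff.1 (hx_cont.continuousAt (x := t₁))
        (-(x t₁)/2) (by linarith)
      have hm1 : min (δ/2) (t₁/2) ≤ δ/2 := min_le_left _ _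
      have hm2 : min (δ/2) (t₁/2) ≤ t₁/2 := min_le_right _ _
      have hm0 : 0 < min (δ/2) (t₁/2) := lt_min (by linarith) (by linarith)
      have hd : dist (t₁ - min (δ/2) (t₁/2)) t₁ < δ := by
        rw [Real.dist_eq, abs_of_nonpos (by linarith)]; linarith
      have hb := hball hd
      rw [Real.dist_eq] at hb
      have h2 := (abs_lt.1 hb).2
      have h3 := hxpos_before (t₁ - min (δ/2) (t₁/2)) (by linarith) (by linarith)
      linarith
    have hxnn : ∀ s : ℝ, s ≤ t₁ → 0 ≤ x s := by
      intro s hs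
      rcases le_or_gt s 0 with h0 | h0
      · exact xnonneg_neg s h0
      rcases lt_or_eq_of_le hs with h1 | h1
      · exact (hxpos_before s h0.le h1).le
      · rw [h1]; exact hxt₁0
    set a := max 0 (t₁ - 1/(3*C)) with hadef
    have ha0 : (0:ℝ) ≤ a := le_max_left _ _
    have h3C : 0 < 1/(3*C) := by positivity
    have hat₁ : a < t₁ := max_lt ht₁pos (by linarith)
    have hxa : 0 < x a := hxpos_before a ha0 hat₁
    have hra : (∫ u in a..t₁, r u) ≤ 1/3 := by
      have h1 := hRle a t₁ hat₁.le
      have h2 : t₁ - a ≤ 1/(3*C) := by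
        have := le_max_right 0 (t₁ - 1/(3*C)); rw [← hadef] at this; linarith
      calc (∫ u in a..t₁, r u) ≤ C * (t₁ - a) := h1
        _ ≤ C * (1/(3*C)) := mul_le_mul_of_nonneg_left h2 hC1.le
        _ = 1/3 := by field_simp
    obtain ⟨ρ, hρmem, hρmax⟩ := isCompact_Icc.exists_isMaxOn
      (nonempty_Icc.2 hat₁.le) hx_cont.continuousOn
    have hS0 : 0 < x ρ := lt_of_lt_of_le hxa (hρmax (left_mem_Icc.2 hat₁.le))
    have hcond : ∀ u : ℝ, ρ < u → u ≤ t₁ → -(x ρ) ≤ (∫ s, f (x s) ∂ μ u) - x u := by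
      intro u h1 h2
      have hu0 : 0 ≤ u := le_trans (le_trans ha0 hρmem.1) h1.le
      have h3 : (0:ℝ) ≤ ∫ s, f (x s) ∂ μ u :=
        hYge u hu0 0 (fun s hs1 hs2 => hf_nonneg (x s) (hxnn s (hs2.trans h2)))
      have h4 : x u ≤ x ρ := hρmax (⟨le_trans hρmem.1 h1.le, h2⟩ : u ∈ Icc a t₁)
      linarith
    have hW := W1 ρ t₁ (-(x ρ)) (le_trans ha0 hρmem.1) hρmem.2 hcond
    have hRρ : (∫ u in ρ..t₁, r u) ≤ 1/3 := by
      have e1 := hRdiffAll ρ t₁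
      have e2 := hRdiffAll a t₁
      have e3 := hRdiffAll a ρ
      have h5 := hRnonneg a ρ hρmem.1
      linarith
    have hRρ0 : (0:ℝ) ≤ ∫ u in ρ..t₁, r u := hRnonneg ρ t₁ hρmem.2
    have hfin : -(x ρ) * (1/3) ≤ x t₁ - x ρ := by
      have hmul : -(x ρ) * (1/3) ≤ -(x ρ) * (∫ u in ρ..t₁, r u) :=
        mul_le_mul_of_nonpos_left hRρ (by linarith)
      linarith
    have h6 : x ρ ≤ x t₁ * 3 := by linarith
    linarith
  have xnn : ∀ s : ℝ, 0 ≤ x s := fun s => by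
    rcases le_or_gt s 0 with h0 | h0
    · exact xnonneg_neg s h0
    · exact (xpos s h0.le).le
  -- ===== upper bound =====
  have hYleF : ∀ u : ℝ, 0 ≤ u → (∫ s, f (x s) ∂ μ u) ≤ f x₀ :=
    fun u hu => hYle u hu (f x₀) (fun s _ _ => fmax (x s) (xnn s))
  have xleB : ∀ t : ℝ, 0 ≤ t → x t ≤ max (φ 0) (f x₀) := by
    intro t ht
    by_contra hgt; push_neg at hgt
    have hne : {s : ℝ | s ∈ Icc 0 t ∧ x s ≤ max (φ 0) (f x₀)}.Nonempty :=
      ⟨0, ⟨le_rfl, ht⟩, by rw [xφ0]; exact le_max_left _ _⟩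
    have hbdd : BddAbove {s : ℝ | s ∈ Icc 0 t ∧ x s ≤ max (φ 0) (f x₀)} :=
      ⟨t, fun s hs => hs.1.2⟩
    have hcl : IsClosed {s : ℝ | s ∈ Icc 0 t ∧ x s ≤ max (φ 0) (f x₀)} := by
      have he : {s : ℝ | s ∈ Icc 0 t ∧ x s ≤ max (φ 0) (f x₀)} =
          Icc 0 t ∩ x ⁻¹' (Iic (max (φ 0) (f x₀))) := by
        ext s; simp [Set.mem_setOf_eq, Set.mem_inter_iff]
      rw [he]; exact isClosed_Icc.inter (isClosed_Iic.preimage hx_cont)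
    obtain ⟨⟨hσmem, hσx⟩⟩ := And.intro (hcl.csSup_mem hne hbdd) trivial
    set σ := sSup {s : ℝ | s ∈ Icc 0 t ∧ x s ≤ max (φ 0) (f x₀)} with hσdef
    have hσlt : σ < t := lt_of_le_of_ne hσmem.2 (fun he => by rw [he] at hσx; linarith)
    have habove : ∀ u : ℝ, σ < u → u ≤ t → max (φ 0) (f x₀) < x u := by
      intro u h1 h2
      by_contra hle; push_neg at hle
      have : u ≤ σ := le_csSup hbdd ⟨⟨le_trans hσmem.1 h1.le, h2⟩, hle⟩
      linarith
    have hcond : ∀ u : ℝ, σ < u → u ≤ t → (∫ s, f (x s) ∂ μ u) - x u ≤ 0 := by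
      intro u h1 h2
      have h3 := hYleF u (le_trans hσmem.1 h1.le)
      have h4 := habove u h1 h2
      have h5 : f x₀ ≤ max (φ 0) (f x₀) := le_max_right _ _
      linarith
    have hw := W2 σ t 0 hσmem.1 hσlt.le hcond
    rw [zero_mul] at hw
    linarith

  -- ===== persistence =====
  obtain ⟨τ₀, hτ₀⟩ := eventually_atTop.1 (hh_tend.eventually_ge_atTop 0)
  obtain ⟨ρ₀, hρ₀mem, hρ₀min⟩ := isCompact_Icc.exists_isMinOn
    (nonempty_Icc.2 (le_max_right τ₀ 0)) hx_cont.continuousOn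
  have hρ₀min' : ∀ s : ℝ, s ∈ Icc 0 (max τ₀ 0) → x ρ₀ ≤ x s := fun s hs => hρ₀min hs
  have hc₀ : 0 < x ρ₀ := xpos ρ₀ hρ₀mem.1
  have hBpos : 0 < max (φ 0) (f x₀) := lt_of_lt_of_le hφ_pos (le_max_left _ _)
  have hfB : 0 < f (max (φ 0) (f x₀)) := fpos _ hBpos
  obtain ⟨δ, hδ, hball⟩ := Metric.continuousAt_iff.1 (hf_cont.continuousAt (x := 0))
    (f (max (φ 0) (f x₀))) hfB
  have hε0 : 0 < min (min (δ/2) (K/2)) (x ρ₀/2) :=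
    lt_min (lt_min (by linarith) (by linarith)) (by linarith)
  set ε := min (min (δ/2) (K/2)) (x ρ₀/2) with hεdef
  have hεδ : ε ≤ δ/2 := le_trans (min_le_left _ _) (min_le_left _ _)
  have hεK : ε ≤ K/2 := le_trans (min_le_left _ _) (min_le_right _ _)
  have hερ : ε ≤ x ρ₀/2 := min_le_right _ _
  have hfεB : f ε < f (max (φ 0) (f x₀)) := by
    have hd : dist ε 0 < δ := by rw [Real.dist_eq, sub_zero, abs_of_nonneg hε0.le]; linarith
    have hb := hball hd
    rw [Real.dist_eq, hf_zero, sub_zero] at hb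
    exact lt_of_le_of_lt (le_abs_self _) hb
  have hεfε : ε < f ε := hf_below _ hε0 (by linarith)
  have infLemma : ∀ α β v : ℝ, 0 < α → α ≤ v → v ≤ β → min (f α) (f β) ≤ f v := by
    intro α β v hα h1 h2
    rcases le_or_gt v x₀ with hvx | hvx
    · refine le_trans (min_le_left _ _) (fmono.monotoneOn ⟨hα.le, h1.trans hvx⟩
        ⟨(hα.trans_le h1).le, hvx⟩ h1)
    · refine le_trans (min_le_right _ _)
        (fanti.antitoneOn (hvx.le : v ∈ Ici x₀) (le_trans hvx.le h2 : β ∈ Ici x₀) h2)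
  have hpers : ∀ t : ℝ, 0 ≤ t → ε < x t := by
    by_contra hcon
    push_neg at hcon
    obtain ⟨t₂, ht₂0, ht₂⟩ := hcon
    have hτt₂ : max τ₀ 0 ≤ t₂ := by
      by_contra hlt; push_neg at hlt
      have := hρ₀min' t₂ (⟨ht₂0, hlt.le⟩ : t₂ ∈ Icc 0 (max τ₀ 0))
      linarith
    have hZne : {t : ℝ | max τ₀ 0 ≤ t ∧ x t ≤ ε}.Nonempty := ⟨t₂, hτt₂, ht₂⟩
    have hZbdd : BddBelow {t : ℝ | max τ₀ 0 ≤ t ∧ x t ≤ ε} := ⟨max τ₀ 0, fun t ht => ht.1⟩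
    have hZcl : IsClosed {t : ℝ | max τ₀ 0 ≤ t ∧ x t ≤ ε} := by
      have he : {t : ℝ | max τ₀ 0 ≤ t ∧ x t ≤ ε} = Ici (max τ₀ 0) ∩ x ⁻¹' (Iic ε) := by
        ext t; simp [Set.mem_setOf_eq, Set.mem_inter_iff]
      rw [he]; exact isClosed_Ici.inter (isClosed_Iic.preimage hx_cont)
    obtain ⟨ht₃τ, ht₃x⟩ := hZcl.csInf_mem hZne hZbdd
    set t₃ := sInf {t : ℝ | max τ₀ 0 ≤ t ∧ x t ≤ ε} with ht₃def
    have hxbefore : ∀ s : ℝ, max τ₀ 0 ≤ s → s < t₃ → ε < x s := by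
      intro s h1 h2
      by_contra hle; push_neg at hle
      have := csInf_le hZbdd ⟨h1, hle⟩
      linarith
    have hτt₃ : max τ₀ 0 < t₃ := by
      rcases eq_or_lt_of_le ht₃τ with he | hlt
      · exfalso
        have := hρ₀min' _ (right_mem_Icc.2 (le_max_right τ₀ 0))
        rw [← he] at ht₃x
        linarith
      · exact hlt
    have hxt₃ : ε ≤ x t₃ := by
      by_contra hneg; push_neg at hneg
      obtain ⟨δ', hδ', hball'⟩ := Metric.continuousAt_iff.1 (hx_cont.continuousAt (x := t₃))
        ((ε - x t₃)/2) (by linarith)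
      have hm1 : min (δ'/2) ((t₃ - max τ₀ 0)/2) ≤ δ'/2 := min_le_left _ _
      have hm2 : min (δ'/2) ((t₃ - max τ₀ 0)/2) ≤ (t₃ - max τ₀ 0)/2 := min_le_right _ _
      have hm0 : 0 < min (δ'/2) ((t₃ - max τ₀ 0)/2) := lt_min (by linarith) (by linarith)
      have hd : dist (t₃ - min (δ'/2) ((t₃ - max τ₀ 0)/2)) t₃ < δ' := by
        rw [Real.dist_eq, abs_of_nonpos (by linarith)]; linarith
      have hb := hball' hd
      rw [Real.dist_eq] at hb
      have h2 := (abs_lt.1 hb).2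
      have h3 := hxbefore (t₃ - min (δ'/2) ((t₃ - max τ₀ 0)/2)) (by linarith) (by linarith)
      linarith
    have hxget : ∀ s : ℝ, 0 ≤ s → s ≤ t₃ → ε ≤ x s := by
      intro s h1 h2
      rcases le_or_gt s (max τ₀ 0) with h3 | h3
      · have := hρ₀min' s (⟨h1, h3⟩ : s ∈ Icc 0 (max τ₀ 0))
        linarith
      rcases lt_or_eq_of_le h2 with h4 | h4
      · exact (hxbefore s h3.le h4).le
      · rw [h4]; exact hxt₃
    have ht₃0 : (0:ℝ) ≤ t₃ := le_trans (le_max_right τ₀ 0) ht₃τ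
    have hYfε : ∀ u : ℝ, max τ₀ 0 < u → u ≤ t₃ → f ε ≤ (∫ s, f (x s) ∂ μ u) := by
      intro u h1 h2
      have hu0 : 0 ≤ u := le_trans (le_max_right τ₀ 0) h1.le
      refine hYge u hu0 (f ε) (fun s hs1 hs2 => ?_)
      have hs0 : 0 ≤ s := le_trans (hτ₀ u (le_trans (le_max_left τ₀ 0) h1.le)) hs1
      have h4 : ε ≤ x s := hxget s hs0 (hs2.trans h2)
      have h5 : x s ≤ max (φ 0) (f x₀) := xleB s hs0
      have h6 := infLemma ε (max (φ 0) (f x₀)) (x s) hε0 h4 h5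
      rw [min_eq_left hfεB.le] at h6
      exact h6
    by_cases hcase : ∃ s : ℝ, (max τ₀ 0 ≤ s ∧ s ≤ t₃) ∧ f ε ≤ x s
    · have hS2ne : {s : ℝ | (max τ₀ 0 ≤ s ∧ s ≤ t₃) ∧ f ε ≤ x s}.Nonempty := hcase
      have hS2bdd : BddAbove {s : ℝ | (max τ₀ 0 ≤ s ∧ s ≤ t₃) ∧ f ε ≤ x s} :=
        ⟨t₃, fun s hs => hs.1.2⟩
      have hS2cl : IsClosed {s : ℝ | (max τ₀ 0 ≤ s ∧ s ≤ t₃) ∧ f ε ≤ x s} := by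
        have he : {s : ℝ | (max τ₀ 0 ≤ s ∧ s ≤ t₃) ∧ f ε ≤ x s} =
            Icc (max τ₀ 0) t₃ ∩ x ⁻¹' (Ici (f ε)) := by
          ext s; simp [Set.mem_setOf_eq, Set.mem_inter_iff, Set.mem_Icc]
        rw [he]; exact isClosed_Icc.inter (isClosed_Ici.preimage hx_cont)
      obtain ⟨⟨hσ1, hσ2⟩, hσ3⟩ := hS2cl.csSup_mem hS2ne hS2bdd
      set σ := sSup {s : ℝ | (max τ₀ 0 ≤ s ∧ s ≤ t₃) ∧ f ε ≤ x s} with hσdef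
      have hσt₃ : σ < t₃ :=
        lt_of_le_of_ne hσ2 (fun he => by rw [he] at hσ3; linarith)
      have habove : ∀ u : ℝ, σ < u → u ≤ t₃ → x u < f ε := by
        intro u h1 h2
        by_contra hle; push_neg at hle
        have : u ≤ σ := le_csSup hS2bdd ⟨⟨le_trans hσ1 h1.le, h2⟩, hle⟩
        linarith
      have hcond : ∀ u : ℝ, σ < u → u ≤ t₃ → (0:ℝ) ≤ (∫ s, f (x s) ∂ μ u) - x u := by
        intro u h1 h2
        have h3 := hYfε u (lt_of_le_of_lt hσ1 h1) h2
        have h4 := habove u h1 h2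
        linarith
      have hw := W1 σ t₃ 0 (le_trans (le_max_right τ₀ 0) hσ1) hσt₃.le hcond
      rw [zero_mul] at hw
      linarith
    · push_neg at hcase
      have hcond : ∀ u : ℝ, max τ₀ 0 < u → u ≤ t₃ → (0:ℝ) ≤ (∫ s, f (x s) ∂ μ u) - x u := by
        intro u h1 h2
        have h3 := hYfε u h1 h2
        have h4 := hcase u ⟨h1.le, h2⟩
        linarith
      have hw := W1 (max τ₀ 0) t₃ 0 (le_max_right τ₀ 0) hτt₃.le hcond
      rw [zero_mul] at hw
      have h5 := hρ₀min' _ (right_mem_Icc.2 (le_max_right τ₀ 0))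
      linarith

  -- ===== limsup / liminf machinery =====
  set U : Set ℝ := {b : ℝ | ∃ T : ℝ, 0 ≤ T ∧ ∀ t : ℝ, T ≤ t → x t ≤ b} with hUdef
  set Dn : Set ℝ := {a : ℝ | ∃ T : ℝ, 0 ≤ T ∧ ∀ t : ℝ, T ≤ t → a ≤ x t} with hDdef
  have hBU : max (φ 0) (f x₀) ∈ U := ⟨0, le_rfl, fun t ht => xleB t ht⟩
  have hεD : ε ∈ Dn := ⟨0, le_rfl, fun t ht => (hpers t ht).le⟩
  have hUD : ∀ a ∈ Dn, ∀ b ∈ U, a ≤ b := by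
    intro a ha b hb
    obtain ⟨T1, hT10, hT1⟩ := ha
    obtain ⟨T2, hT20, hT2⟩ := hb
    have h1 := hT1 (max T1 T2) (le_max_left _ _)
    have h2 := hT2 (max T1 T2) (le_max_right _ _)
    linarith
  have hUbdd : BddBelow U := ⟨ε, fun b hb => hUD ε hεD b hb⟩
  have hDbdd : BddAbove Dn := ⟨max (φ 0) (f x₀), fun a ha => hUD a ha _ hBU⟩
  set M : ℝ := sInf U with hMdef
  set m : ℝ := sSup Dn with hmdef
  have hmM : m ≤ M :=
    csSup_le ⟨ε, hεD⟩ (fun a ha => le_csInf ⟨_, hBU⟩ (fun b hb => hUD a ha b hb))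
  have hmε : ε ≤ m := le_csSup hDbdd hεD
  have hm0 : 0 < m := lt_of_lt_of_le hε0 hmε
  have hMB : M ≤ max (φ 0) (f x₀) := csInf_le hUbdd hBU
  have hMmem : ∀ η : ℝ, 0 < η → ∃ T : ℝ, 0 ≤ T ∧ ∀ t : ℝ, T ≤ t → x t ≤ M + η := by
    intro η hη
    obtain ⟨b, hbU, hblt⟩ := exists_lt_of_csInf_lt ⟨_, hBU⟩ (lt_add_of_pos_right M hη)
    obtain ⟨T, hT0, hT⟩ := hbU
    exact ⟨T, hT0, fun t ht => le_trans (hT t ht) hblt.le⟩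
  have hmmem : ∀ η : ℝ, 0 < η → ∃ T : ℝ, 0 ≤ T ∧ ∀ t : ℝ, T ≤ t → m - η ≤ x t := by
    intro η hη
    obtain ⟨a, haD, halt⟩ := exists_lt_of_lt_csSup ⟨ε, hεD⟩ (by linarith : m - η < m)
    obtain ⟨T, hT0, hT⟩ := haD
    exact ⟨T, hT0, fun t ht => le_trans halt.le (hT t ht)⟩
  -- ===== decay lemma =====
  have decay : ∀ b T₁ : ℝ, 0 ≤ T₁ → (∀ u : ℝ, T₁ ≤ u → (∫ s, f (x s) ∂ μ u) ≤ b) →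
      ∀ η : ℝ, 0 < η → M ≤ b + η := by
    intro b T₁ hT₁ hYb η hη
    have hstep1 : ∃ t₁ : ℝ, T₁ ≤ t₁ ∧ x t₁ ≤ b + η := by
      by_contra hno; push_neg at hno
      obtain ⟨t, htR, htT⟩ := ((hRtend.eventually_ge_atTop
        (x T₁/η + 1 + (∫ u in (0:ℝ)..T₁, r u))).and (eventually_ge_atTop T₁)).exists
      have hcond : ∀ u : ℝ, T₁ < u → u ≤ t → (∫ s, f (x s) ∂ μ u) - x u ≤ -η := by
        intro u h1 h2
        have h3 := hYb u h1.le
        have h4 := hno u h1.le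
        linarith
      have hw := W2 T₁ t (-η) hT₁ htT hcond
      have hR : x T₁/η + 1 ≤ ∫ u in T₁..t, r u := by
        have := hRdiffAll T₁ t
        linarith
      have hmul : (-η) * (∫ u in T₁..t, r u) ≤ (-η) * (x T₁/η + 1) :=
        mul_le_mul_of_nonpos_left hR (by linarith)
      have hkey : (-η) * (x T₁/η + 1) = -(x T₁) - η := by field_simp; ring
      have hxt := xnn t
      linarith
    obtain ⟨t₁, ht₁T, ht₁x⟩ := hstep1
    have hstep2 : ∀ t : ℝ, t₁ ≤ t → x t ≤ b + η := by
      intro t ht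
      by_contra hgt; push_neg at hgt
      have hne : {s : ℝ | s ∈ Icc t₁ t ∧ x s ≤ b + η}.Nonempty := ⟨t₁, ⟨le_rfl, ht⟩, ht₁x⟩
      have hbdd2 : BddAbove {s : ℝ | s ∈ Icc t₁ t ∧ x s ≤ b + η} := ⟨t, fun s hs => hs.1.2⟩
      have hcl2 : IsClosed {s : ℝ | s ∈ Icc t₁ t ∧ x s ≤ b + η} := by
        have he : {s : ℝ | s ∈ Icc t₁ t ∧ x s ≤ b + η} =
            Icc t₁ t ∩ x ⁻¹' (Iic (b + η)) := by
          ext s; simp [Set.mem_setOf_eq, Set.mem_inter_iff]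
        rw [he]; exact isClosed_Icc.inter (isClosed_Iic.preimage hx_cont)
      obtain ⟨hσmem, hσx⟩ := hcl2.csSup_mem hne hbdd2
      set σ := sSup {s : ℝ | s ∈ Icc t₁ t ∧ x s ≤ b + η} with hσdef
      have hσlt : σ < t := lt_of_le_of_ne hσmem.2 (fun he => by rw [he] at hσx; linarith)
      have habove : ∀ u : ℝ, σ < u → u ≤ t → b + η < x u := by
        intro u h1 h2
        by_contra hle; push_neg at hle
        have : u ≤ σ := le_csSup hbdd2 ⟨⟨le_trans hσmem.1 h1.le, h2⟩, hle⟩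
        linarith
      have hcond : ∀ u : ℝ, σ < u → u ≤ t → (∫ s, f (x s) ∂ μ u) - x u ≤ 0 := by
        intro u h1 h2
        have h3 := hYb u (le_trans (le_trans ht₁T hσmem.1) h1.le)
        have h4 := habove u h1 h2
        linarith
      have hw := W2 σ t 0 (le_trans (le_trans hT₁ ht₁T) hσmem.1) hσlt.le hcond
      rw [zero_mul] at hw
      linarith
    exact csInf_le hUbdd ⟨t₁, le_trans hT₁ ht₁T, hstep2⟩
  -- ===== growth lemma =====
  have grow : ∀ a T₁ : ℝ, 0 ≤ T₁ → (∀ u : ℝ, T₁ ≤ u → a ≤ (∫ s, f (x s) ∂ μ u)) →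
      ∀ η : ℝ, 0 < η → a - η ≤ m := by
    intro a T₁ hT₁ hYa η hη
    have hstep1 : ∃ t₁ : ℝ, T₁ ≤ t₁ ∧ a - η ≤ x t₁ := by
      by_contra hno; push_neg at hno
      obtain ⟨t, htR, htT⟩ := ((hRtend.eventually_ge_atTop
        ((max (φ 0) (f x₀) - x T₁)/η + 1 + (∫ u in (0:ℝ)..T₁, r u))).and
        (eventually_ge_atTop T₁)).exists
      have hcond : ∀ u : ℝ, T₁ < u → u ≤ t → η ≤ (∫ s, f (x s) ∂ μ u) - x u := by
        intro u h1 h2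
        have h3 := hYa u h1.le
        have h4 := hno u h1.le
        linarith
      have hw := W1 T₁ t η hT₁ htT hcond
      have hR : (max (φ 0) (f x₀) - x T₁)/η + 1 ≤ ∫ u in T₁..t, r u := by
        have := hRdiffAll T₁ t
        linarith
      have hmul : η * ((max (φ 0) (f x₀) - x T₁)/η + 1) ≤ η * (∫ u in T₁..t, r u) :=
        mul_le_mul_of_nonneg_left hR (by linarith)
      have hkey : η * ((max (φ 0) (f x₀) - x T₁)/η + 1) = max (φ 0) (f x₀) - x T₁ + η := by
        field_simp
      have hxt := xleB t (le_trans hT₁ htT)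
      linarith
    obtain ⟨t₁, ht₁T, ht₁x⟩ := hstep1
    have hstep2 : ∀ t : ℝ, t₁ ≤ t → a - η ≤ x t := by
      intro t ht
      by_contra hgt; push_neg at hgt
      have hne : {s : ℝ | s ∈ Icc t₁ t ∧ a - η ≤ x s}.Nonempty := ⟨t₁, ⟨le_rfl, ht⟩, ht₁x⟩
      have hbdd2 : BddAbove {s : ℝ | s ∈ Icc t₁ t ∧ a - η ≤ x s} := ⟨t, fun s hs => hs.1.2⟩
      have hcl2 : IsClosed {s : ℝ | s ∈ Icc t₁ t ∧ a - η ≤ x s} := by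
        have he : {s : ℝ | s ∈ Icc t₁ t ∧ a - η ≤ x s} =
            Icc t₁ t ∩ x ⁻¹' (Ici (a - η)) := by
          ext s; simp [Set.mem_setOf_eq, Set.mem_inter_iff]
        rw [he]; exact isClosed_Icc.inter (isClosed_Ici.preimage hx_cont)
      obtain ⟨hσmem, hσx⟩ := hcl2.csSup_mem hne hbdd2
      set σ := sSup {s : ℝ | s ∈ Icc t₁ t ∧ a - η ≤ x s} with hσdef
      have hσlt : σ < t := lt_of_le_of_ne hσmem.2 (fun he => by rw [he] at hσx; linarith)
      have hbelow : ∀ u : ℝ, σ < u → u ≤ t → x u < a - η := by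
        intro u h1 h2
        by_contra hle; push_neg at hle
        have : u ≤ σ := le_csSup hbdd2 ⟨⟨le_trans hσmem.1 h1.le, h2⟩, hle⟩
        linarith
      have hcond : ∀ u : ℝ, σ < u → u ≤ t → (0:ℝ) ≤ (∫ s, f (x s) ∂ μ u) - x u := by
        intro u h1 h2
        have h3 := hYa u (le_trans (le_trans ht₁T hσmem.1) h1.le)
        have h4 := hbelow u h1 h2
        linarith
      have hw := W1 σ t 0 (le_trans (le_trans hT₁ ht₁T) hσmem.1) hσlt.le hcond
      rw [zero_mul] at hw
      linarith
    exact le_csSup hDbdd ⟨t₁, le_trans hT₁ ht₁T, hstep2⟩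

  -- ===== eventual window containment =====
  have hwindow : ∀ η : ℝ, 0 < η → ∃ T : ℝ, 0 ≤ T ∧ ∀ u : ℝ, T ≤ u →
      ∀ s : ℝ, h u ≤ s → s ≤ u → (m - η ≤ x s ∧ x s ≤ M + η ∧ 0 ≤ s) := by
    intro η hη
    obtain ⟨T₂, hT₂0, hT₂⟩ := hMmem η hη
    obtain ⟨T₃, hT₃0, hT₃⟩ := hmmem η hη
    obtain ⟨T₄, hT₄⟩ := eventually_atTop.1
      (hh_tend.eventually_ge_atTop (max (max T₂ T₃) 0))
    refine ⟨max T₄ 0, le_max_right _ _, fun u hu s hs1 hs2 => ?_⟩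
    have hhu : max (max T₂ T₃) 0 ≤ h u := hT₄ u (le_trans (le_max_left T₄ 0) hu)
    have hs0 : 0 ≤ s := le_trans (le_trans (le_max_right _ 0) hhu) hs1
    have hsT₂ : T₂ ≤ s :=
      le_trans (le_trans (le_trans (le_max_left T₂ T₃) (le_max_left _ 0)) hhu) hs1
    have hsT₃ : T₃ ≤ s :=
      le_trans (le_trans (le_trans (le_max_right T₂ T₃) (le_max_left _ 0)) hhu) hs1
    exact ⟨hT₃ s hsT₃, hT₂ s hsT₂, hs0⟩
  -- ===== transfer lemmas =====
  have transferUp : ∀ b : ℝ, (∀ η : ℝ, 0 < η → ∃ η' : ℝ, 0 < η' ∧ ∀ v : ℝ, 0 ≤ v →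
      m - η' ≤ v → v ≤ M + η' → f v ≤ b + η) → M ≤ b := by
    intro b hb
    have hkey : ∀ η : ℝ, 0 < η → M ≤ b + 2*η := by
      intro η hη
      obtain ⟨η', hη'0, hη'⟩ := hb η hη
      obtain ⟨T, hT0, hTw⟩ := hwindow η' hη'0
      have hYb : ∀ u : ℝ, T ≤ u → (∫ s, f (x s) ∂ μ u) ≤ b + η := by
        intro u hu
        refine hYle u (le_trans hT0 hu) (b + η) (fun s hs1 hs2 => ?_)
        obtain ⟨hw1, hw2, hw3⟩ := hTw u hu s hs1 hs2
        exact hη' (x s) (xnn s) hw1 hw2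
      have := decay (b + η) T hT0 hYb η hη
      linarith
    by_contra hlt; push_neg at hlt
    have := hkey ((M - b)/3) (by linarith)
    linarith
  have transferLow : ∀ a : ℝ, (∀ η : ℝ, 0 < η → ∃ η' : ℝ, 0 < η' ∧ ∀ v : ℝ, 0 ≤ v →
      m - η' ≤ v → v ≤ M + η' → a - η ≤ f v) → a ≤ m := by
    intro a ha
    have hkey : ∀ η : ℝ, 0 < η → a - 2*η ≤ m := by
      intro η hη
      obtain ⟨η', hη'0, hη'⟩ := ha η hη
      obtain ⟨T, hT0, hTw⟩ := hwindow η' hη'0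
      have hYa : ∀ u : ℝ, T ≤ u → a - η ≤ (∫ s, f (x s) ∂ μ u) := by
        intro u hu
        refine hYge u (le_trans hT0 hu) (a - η) (fun s hs1 hs2 => ?_)
        obtain ⟨hw1, hw2, hw3⟩ := hTw u hu s hs1 hs2
        exact hη' (x s) (xnn s) hw1 hw2
      have := grow (a - η) T hT0 hYa η hη
      linarith
    by_contra hlt; push_neg at hlt
    have := hkey ((a - m)/3) (by linarith)
    linarith

  -- ===== the two transfer inequalities =====
  have ineq1 : min (f m) (f M) ≤ m := by
    apply transferLow
    intro η hη
    obtain ⟨δ₁, hδ₁, hb₁⟩ := Metric.continuousAt_iff.1 (hf_cont.continuousAt (x := m)) η hη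
    obtain ⟨δ₂, hδ₂, hb₂⟩ := Metric.continuousAt_iff.1 (hf_cont.continuousAt (x := M)) η hη
    have he0 : 0 < min (min (δ₁/2) (δ₂/2)) (m/2) :=
      lt_min (lt_min (by linarith) (by linarith)) (by linarith)
    have he1 : min (min (δ₁/2) (δ₂/2)) (m/2) ≤ δ₁/2 :=
      le_trans (min_le_left _ _) (min_le_left _ _)
    have he2 : min (min (δ₁/2) (δ₂/2)) (m/2) ≤ δ₂/2 :=
      le_trans (min_le_left _ _) (min_le_right _ _)
    have he3 : min (min (δ₁/2) (δ₂/2)) (m/2) ≤ m/2 := min_le_right _ _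
    refine ⟨min (min (δ₁/2) (δ₂/2)) (m/2), he0, fun v hv0 hv1 hv2 => ?_⟩
    have hfm : f m - η < f (m - min (min (δ₁/2) (δ₂/2)) (m/2)) := by
      have hd : dist (m - min (min (δ₁/2) (δ₂/2)) (m/2)) m < δ₁ := by
        rw [Real.dist_eq, abs_of_nonpos (by linarith)]; linarith
      have hb := hb₁ hd
      rw [Real.dist_eq] at hb
      linarith [(abs_lt.1 hb).1]
    have hfM : f M - η < f (M + min (min (δ₁/2) (δ₂/2)) (m/2)) := by
      have hd : dist (M + min (min (δ₁/2) (δ₂/2)) (m/2)) M < δ₂ := by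
        rw [Real.dist_eq, abs_of_nonneg (by linarith)]; linarith
      have hb := hb₂ hd
      rw [Real.dist_eq] at hb
      linarith [(abs_lt.1 hb).1]
    have hinf := infLemma (m - min (min (δ₁/2) (δ₂/2)) (m/2))
      (M + min (min (δ₁/2) (δ₂/2)) (m/2)) v (by linarith) hv1 hv2
    rcases le_total (f (m - min (min (δ₁/2) (δ₂/2)) (m/2)))
      (f (M + min (min (δ₁/2) (δ₂/2)) (m/2))) with hc | hc
    · rw [min_eq_left hc] at hinf
      linarith [min_le_left (f m) (f M)]
    · rw [min_eq_right hc] at hinf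
      linarith [min_le_right (f m) (f M)]
  have hUp1 : x₀ ≤ m → M ≤ f m := by
    intro hA
    apply transferUp
    intro η hη
    rcases eq_or_lt_of_le hA with he | hlt
    · refine ⟨1, one_pos, fun v hv0 _ _ => ?_⟩
      have hle := fmax v hv0
      rw [he] at hle
      linarith
    · obtain ⟨δ₁, hδ₁, hb₁⟩ := Metric.continuousAt_iff.1 (hf_cont.continuousAt (x := m)) η hη
      have he0 : 0 < min (δ₁/2) ((m - x₀)/2) := lt_min (by linarith) (by linarith)
      have he1 : min (δ₁/2) ((m - x₀)/2) ≤ δ₁/2 := min_le_left _ _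
      have he2 : min (δ₁/2) ((m - x₀)/2) ≤ (m - x₀)/2 := min_le_right _ _
      refine ⟨min (δ₁/2) ((m - x₀)/2), he0, fun v hv0 hv1 hv2 => ?_⟩
      have h1 : x₀ ≤ m - min (δ₁/2) ((m - x₀)/2) := by linarith
      have h2 : f v ≤ f (m - min (δ₁/2) ((m - x₀)/2)) :=
        fanti.antitoneOn (h1 : (m - min (δ₁/2) ((m - x₀)/2)) ∈ Ici x₀)
          (le_trans h1 hv1 : v ∈ Ici x₀) hv1
      have h3 : f (m - min (δ₁/2) ((m - x₀)/2)) < f m + η := by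
        have hd : dist (m - min (δ₁/2) ((m - x₀)/2)) m < δ₁ := by
          rw [Real.dist_eq, abs_of_nonpos (by linarith)]; linarith
        have hb := hb₁ hd
        rw [Real.dist_eq] at hb
        linarith [(abs_lt.1 hb).2]
      linarith
  have hUp2 : M ≤ x₀ → M ≤ f M := by
    intro hMx
    apply transferUp
    intro η hη
    rcases eq_or_lt_of_le hMx with he | hlt
    · refine ⟨1, one_pos, fun v hv0 _ _ => ?_⟩
      have hle := fmax v hv0
      rw [← he] at hle
      linarith
    · obtain ⟨δ₂, hδ₂, hb₂⟩ := Metric.continuousAt_iff.1 (hf_cont.continuousAt (x := M)) η hη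
      have he0 : 0 < min (δ₂/2) ((x₀ - M)/2) := lt_min (by linarith) (by linarith)
      have he1 : min (δ₂/2) ((x₀ - M)/2) ≤ δ₂/2 := min_le_left _ _
      have he2 : min (δ₂/2) ((x₀ - M)/2) ≤ (x₀ - M)/2 := min_le_right _ _
      refine ⟨min (δ₂/2) ((x₀ - M)/2), he0, fun v hv0 hv1 hv2 => ?_⟩
      have hM0 : 0 < M := lt_of_lt_of_le hm0 hmM
      have h2 : f v ≤ f (M + min (δ₂/2) ((x₀ - M)/2)) :=
        fmono.monotoneOn (⟨hv0, by linarith⟩ : v ∈ Icc 0 x₀)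
          (⟨by linarith, by linarith⟩ : (M + min (δ₂/2) ((x₀ - M)/2)) ∈ Icc 0 x₀) hv2
      have h3 : f (M + min (δ₂/2) ((x₀ - M)/2)) < f M + η := by
        have hd : dist (M + min (δ₂/2) ((x₀ - M)/2)) M < δ₂ := by
          rw [Real.dist_eq, abs_of_nonneg (by linarith)]; linarith
        have hb := hb₂ hd
        rw [Real.dist_eq] at hb
        linarith [(abs_lt.1 hb).2]
      linarith
  have hUp3 : M ≤ f x₀ :=
    transferUp _ (fun η hη => ⟨1, one_pos, fun v hv0 _ _ => by linarith [fmax v hv0]⟩)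
  -- ===== K between m and M =====
  have KleM : K ≤ M := by
    by_contra hlt; push_neg at hlt
    have h1 := hf_below m hm0 (lt_of_le_of_lt hmM hlt)
    have h2 := hf_below M (lt_of_lt_of_le hm0 hmM) hlt
    have hmin := ineq1
    rcases le_total (f m) (f M) with hc | hc
    · rw [min_eq_left hc] at hmin; linarith
    · rw [min_eq_right hc] at hmin; linarith
  have mleK : m ≤ K := by
    by_contra hlt; push_neg at hlt
    rcases le_or_gt x₀ m with hA | hB
    · have hMfm := hUp1 hA
      have := (hf_above m hlt).2
      linarith
    · rcases le_or_gt M x₀ with hMx | hMx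
      · have h1 := hUp2 hMx
        have := (hf_above M (lt_of_lt_of_le hlt hmM)).2
        linarith
      · have h1 := hUp3
        have := (hf_above x₀ (lt_trans hlt hB)).2
        linarith
  -- ===== m = K = M =====
  have main : m = K ∧ M = K := by
    rcases le_or_gt x₀ m with hA | hB
    · have hMfm := hUp1 hA
      rcases lt_trichotomy m K with h1 | h1 | h1
      · exfalso
        have hgm := ffgt m hm0 h1
        have h2 := hf_below m hm0 h1
        have hfMm : f M ≤ m := by
          have hmin := ineq1
          rcases le_total (f m) (f M) with hc | hc
          · rw [min_eq_left hc] at hmin; linarith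
          · rw [min_eq_right hc] at hmin; exact hmin
        have hMIci : M ∈ Ici x₀ := le_trans hA hmM
        have hfmIci : f m ∈ Ici x₀ := le_trans hMIci hMfm
        have h3 : f (f m) ≤ f M := fanti.antitoneOn hMIci hfmIci hMfm
        linarith
      · have hfmK : f m = K := by rw [h1, fK]
        exact ⟨h1, le_antisymm (by rw [← hfmK]; exact hMfm) KleM⟩
      · exact absurd h1 (not_lt.2 mleK)
    · rcases le_or_gt M x₀ with hMx | hMx
      · have hmK : m = K := by
          rcases lt_trichotomy m K with h1 | h1 | h1
          · exfalso
            have h2 := hf_below m hm0 h1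
            have hmin := ineq1
            have hfmfM : f m ≤ f M := fmono.monotoneOn
              (⟨hm0.le, le_trans hmM hMx⟩ : m ∈ Icc 0 x₀)
              (⟨(lt_of_lt_of_le hm0 hmM).le, hMx⟩ : M ∈ Icc 0 x₀) hmM
            rw [min_eq_left hfmfM] at hmin
            linarith
          · exact h1
          · exact absurd h1 (not_lt.2 mleK)
        have hMK : M = K := by
          have hMfM := hUp2 hMx
          rcases lt_trichotomy M K with h1 | h1 | h1
          · exact absurd h1 (not_lt.2 KleM)
          · exact h1
          · exfalso
            have := (hf_above M h1).2
            linarith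
        exact ⟨hmK, hMK⟩
      · have hMfx := hUp3
        rcases lt_trichotomy x₀ K with h1 | h1 | h1
        · exfalso
          have hmltK : m < K := lt_trans hB h1
          have h2 := hf_below m hm0 hmltK
          have hfMm : f M ≤ m := by
            have hmin := ineq1
            rcases le_total (f m) (f M) with hc | hc
            · rw [min_eq_left hc] at hmin; linarith
            · rw [min_eq_right hc] at hmin; exact hmin
          have hgx := ffgt x₀ hx₀ h1
          have hfx₀Ici : f x₀ ∈ Ici x₀ := le_trans hMx.le hMfx
          have h3 : f (f x₀) ≤ f M := fanti.antitoneOn (hMx.le : M ∈ Ici x₀) hfx₀Ici hMfx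
          linarith
        · exfalso
          rw [h1, fK] at hMfx
          linarith
        · exfalso
          have := (hf_above x₀ h1).2
          linarith
  obtain ⟨hmK, hMK⟩ := main
  -- ===== conclusion =====
  rw [Metric.tendsto_atTop]
  intro εf hεf
  obtain ⟨T₂, hT₂0, hT₂⟩ := hMmem (εf/2) (by linarith)
  obtain ⟨T₃, hT₃0, hT₃⟩ := hmmem (εf/2) (by linarith)
  refine ⟨max T₂ T₃, fun t ht => ?_⟩
  have h1 := hT₂ t (le_trans (le_max_left _ _) ht)
  have h2 := hT₃ t (le_trans (le_max_right _ _) ht)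
  rw [hMK] at h1
  rw [hmK] at h2
  rw [Real.dist_eq, abs_lt]
  constructor <;> linarith
end

section
/- Consider the Nicholson's blowflies equation with distributed delay under hypotheses (a2), (a4), (a5). If p ≤ δ, then every solution x with positive initial condition satisfies lim_{t→∞} x(t) = 0 (the population goes to extinction). -/
open MeasureTheory Filter Set

private lemma exp_deriv_integral (δ v t : ℝ) (hvt : v ≤ t) :
    ∫ u in Ioc v t, δ * Real.exp (δ * u) = Real.exp (δ * t) - Real.exp (δ * v) := by
  rw [← intervalIntegral.integral_of_le hvt]
  have : ∀ u ∈ uIcc v t, HasDerivAt (fun y => Real.exp (δ * y)) (δ * Real.exp (δ * u)) u := by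
    intro u _
    have h1 : HasDerivAt (fun y : ℝ => δ * y) δ u := by
      simpa using (hasDerivAt_id u).const_mul δ
    simpa [mul_comm] using h1.exp
  exact intervalIntegral.integral_eq_sub_of_hasDerivAt this
    (Continuous.intervalIntegrable (by continuity) _ _)

private lemma fubini_ibp {T t δ : ℝ} {q : ℝ → ℝ} (hq : Measurable q)
    (hqi : IntegrableOn q (Ioc T t)) :
    ∫ u in Ioc T t, (δ * Real.exp (δ * u)) * (∫ v in Ioc T u, q v)
      = ∫ v in Ioc T t, (Real.exp (δ * t) - Real.exp (δ * v)) * q v := by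
  set m : Measure ℝ := volume.restrict (Ioc T t) with hm
  set F : ℝ → ℝ → ℝ := fun u v => if v ≤ u then (δ * Real.exp (δ * u)) * q v else 0 with hF
  have hmeasset : MeasurableSet {z : ℝ × ℝ | z.2 ≤ z.1} :=
    measurableSet_le measurable_snd measurable_fst
  have hfull : Integrable (fun z : ℝ × ℝ => (δ * Real.exp (δ * z.1)) * q z.2) (m.prod m) :=
    Integrable.mul_prod (f := fun u : ℝ => δ * Real.exp (δ * u)) (g := q)
      (Continuous.integrableOn_Ioc (by continuity)) hqi
  have hFint : Integrable (Function.uncurry F) (m.prod m) := by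
    have : Function.uncurry F = {z : ℝ × ℝ | z.2 ≤ z.1}.indicator
        (fun z : ℝ × ℝ => (δ * Real.exp (δ * z.1)) * q z.2) := by
      ext z
      simp only [Function.uncurry, hF, indicator, mem_setOf_eq]
    rw [this]
    exact hfull.indicator hmeasset
  have swap := integral_integral_swap hFint
  have hLHS : (∫ u, ∫ v, F u v ∂m ∂m)
      = ∫ u in Ioc T t, (δ * Real.exp (δ * u)) * (∫ v in Ioc T u, q v) := by
    apply setIntegral_congr_fun measurableSet_Ioc
    intro u hu
    dsimp only
    have : (fun v => F u v) = (Iic u).indicator (fun v => (δ * Real.exp (δ * u)) * q v) := by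
      ext v; simp only [hF, indicator, mem_Iic]
    rw [this, hm, setIntegral_indicator measurableSet_Iic]
    rw [Ioc_inter_Iic, min_eq_right hu.2]
    rw [integral_const_mul]
  have hRHS : (∫ v, ∫ u, F u v ∂m ∂m)
      = ∫ v in Ioc T t, (Real.exp (δ * t) - Real.exp (δ * v)) * q v := by
    apply setIntegral_congr_fun measurableSet_Ioc
    intro v hv
    dsimp only
    have h1 : (fun u => F u v) = (Ici v).indicator (fun u => (δ * Real.exp (δ * u)) * q v) := by
      ext u; simp only [hF, indicator, mem_Ici]
    rw [h1, hm, setIntegral_indicator measurableSet_Ici]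
    have h2 : Ioc T t ∩ Ici v = Icc v t := by
      ext u
      simp only [mem_inter_iff, mem_Ioc, mem_Ici, mem_Icc]
      constructor
      · rintro ⟨⟨_, h2⟩, h3⟩; exact ⟨h3, h2⟩
      · rintro ⟨h1', h2⟩; exact ⟨⟨lt_of_lt_of_le hv.1 h1', h2⟩, h1'⟩
    rw [h2, integral_Icc_eq_integral_Ioc]
    have h3 : ∫ u in Ioc v t, (δ * Real.exp (δ * u)) * q v
        = (∫ u in Ioc v t, δ * Real.exp (δ * u)) * q v := by
      rw [integral_mul_const]
    rw [h3, exp_deriv_integral δ v t hv.2]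
  rw [← hLHS, ← hRHS]
  exact swap

private lemma f_le_inv {a y : ℝ} (ha : 0 < a) :
    y * Real.exp (-(a * y)) ≤ 1 / (a * Real.exp 1) := by
  have hE : (0:ℝ) < Real.exp 1 := Real.exp_pos 1
  rcases le_or_gt y 0 with hy | hy
  · have h1 : y * Real.exp (-(a * y)) ≤ 0 :=
      mul_nonpos_iff.2 (Or.inr ⟨hy, (Real.exp_pos _).le⟩)
    have h2 : (0:ℝ) ≤ 1 / (a * Real.exp 1) := by positivity
    linarith
  · have hkey : a * y * Real.exp 1 ≤ Real.exp (a * y) := by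
      have h1 : a * y ≤ Real.exp (a * y - 1) := by
        have := Real.add_one_le_exp (a * y - 1)
        linarith
      have h2 : Real.exp (a * y - 1) * Real.exp 1 = Real.exp (a * y) := by
        rw [← Real.exp_add]
        ring_nf
      calc a * y * Real.exp 1 ≤ Real.exp (a * y - 1) * Real.exp 1 :=
            mul_le_mul_of_nonneg_right h1 hE.le
        _ = Real.exp (a * y) := h2
    have hep : (0:ℝ) < Real.exp (a * y) := Real.exp_pos _
    rw [le_div_iff₀ (by positivity : (0:ℝ) < a * Real.exp 1), Real.exp_neg]
    have heq : y * (Real.exp (a * y))⁻¹ * (a * Real.exp 1)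
        = (a * y * Real.exp 1) / Real.exp (a * y) := by
      field_simp
    rw [heq, div_le_one hep]
    exact hkey

private lemma f_le_frac {a y c : ℝ} (ha : 0 < a) (hy : 0 ≤ y) (hyc : y ≤ c) :
    y * Real.exp (-(a * y)) ≤ c / (1 + a * c) := by
  have hc : 0 ≤ c := hy.trans hyc
  have hd1 : (0:ℝ) < 1 + a * y := by positivity
  have hd2 : (0:ℝ) < 1 + a * c := by positivity
  have h1 : Real.exp (-(a * y)) ≤ 1 / (1 + a * y) := by
    rw [Real.exp_neg, inv_eq_one_div]
    apply one_div_le_one_div_of_le hd1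
    have := Real.add_one_le_exp (a * y)
    linarith
  calc y * Real.exp (-(a * y)) ≤ y * (1 / (1 + a * y)) :=
        mul_le_mul_of_nonneg_left h1 hy
    _ = y / (1 + a * y) := by ring
    _ ≤ c / (1 + a * c) := by
        rw [div_le_div_iff₀ hd1 hd2]
        nlinarith

set_option maxHeartbeats 3200000 in
theorem nicholson_extinction
    (δ p a : ℝ) (hδ : 0 < δ) (hp : 0 < p) (ha : 0 < a)
    (h : ℝ → ℝ) (μ : ℝ → Measure ℝ) (φ : ℝ → ℝ)
    (hh_meas : Measurable h)
    (hh_le : ∀ t : ℝ, 0 ≤ t → h t ≤ t)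
    (hh_tend : Tendsto h atTop atTop)
    (hμ_prob : ∀ t : ℝ, 0 ≤ t → IsProbabilityMeasure (μ t))
    (hμ_supp : ∀ t : ℝ, 0 ≤ t → μ t (Icc (h t) t)ᶜ = 0)
    (hμ_meas : ∀ g : ℝ → ℝ, Measurable g → (∃ C : ℝ, ∀ y : ℝ, |g y| ≤ C) →
      Measurable (fun t => ∫ s, g s ∂(μ t)))
    (hφ_cont : ContinuousOn φ (Iic (0 : ℝ)))
    (hφ_bdd : ∃ C : ℝ, ∀ t : ℝ, t ≤ 0 → |φ t| ≤ C)
    (hφ_nonneg : ∀ t : ℝ, t ≤ 0 → 0 ≤ φ t)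
    (hφ_pos : 0 < φ 0)
    (x : ℝ → ℝ)
    (hx_cont : Continuous x)
    (hx_init : ∀ t : ℝ, t ≤ 0 → x t = φ t)
    (hx_sol : ∀ t : ℝ, 0 ≤ t →
      x t = φ 0 + ∫ u in (0:ℝ)..t,
        (-(δ * x u) + p * ∫ s, x s * Real.exp (-(a * x s)) ∂(μ u)))
    (hpδ : p ≤ δ) :
    Tendsto x atTop (nhds 0) := by
  have hE1 : (0:ℝ) < Real.exp 1 := Real.exp_pos 1
  have hexpc : Continuous fun u : ℝ => Real.exp (δ * u) := by fun_prop
  set G : ℝ → ℝ := fun u => ∫ s, x s * Real.exp (-(a * x s)) ∂(μ u) with hG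
  have hsol : ∀ t : ℝ, 0 ≤ t →
      x t = φ 0 + ∫ u in (0:ℝ)..t, (-(δ * x u) + p * G u) := by
    simp only [hG]
    exact hx_sol
  have hx0 : x 0 = φ 0 := by simpa using hsol 0 le_rfl
  -- boundedness of x on (-∞, t]
  have hbd : ∀ t : ℝ, ∃ M : ℝ, 0 ≤ M ∧ ∀ s : ℝ, s ≤ t → |x s| ≤ M := by
    intro t
    obtain ⟨C, hC⟩ := hφ_bdd
    rcases le_or_gt t 0 with ht | ht
    · refine ⟨|C|, abs_nonneg _, fun s hs => ?_⟩
      rw [hx_init s (hs.trans ht)]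
      exact (hC s (hs.trans ht)).trans (le_abs_self C)
    · obtain ⟨M2, hM2⟩ := (isCompact_Icc (a := (0:ℝ)) (b := t)).exists_bound_of_continuousOn
        hx_cont.continuousOn
      refine ⟨max |C| M2, le_max_of_le_left (abs_nonneg _), fun s hs => ?_⟩
      rcases le_or_gt s 0 with hs0 | hs0
      · rw [hx_init s hs0]
        exact le_trans (le_trans (hC s hs0) (le_abs_self C)) (le_max_left _ _)
      · exact le_trans (by simpa using hM2 s ⟨hs0.le, hs⟩) (le_max_right _ _)
  -- a.e. facts for μ u
  have hae : ∀ u : ℝ, 0 ≤ u → ∀ P : ℝ → Prop,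
      (∀ s ∈ Icc (h u) u, P s) → ∀ᵐ s ∂(μ u), P s := by
    intro u hu P hP
    rw [ae_iff]
    refine measure_mono_null (fun s hs => ?_) (hμ_supp u hu)
    simp only [mem_compl_iff]
    exact fun hmem => hs (hP s hmem)
  -- integrability of integrand w.r.t. μ u
  have hmu_int : ∀ u : ℝ, 0 ≤ u →
      Integrable (fun s => x s * Real.exp (-(a * x s))) (μ u) := by
    intro u hu
    haveI := hμ_prob u hu
    obtain ⟨M, hM0, hM⟩ := hbd u
    set gbar : ℝ → ℝ := fun s => x (min s u) * Real.exp (-(a * x (min s u))) with hgbar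
    have hmin : Continuous fun s : ℝ => x (min s u) :=
      hx_cont.comp (continuous_id.min continuous_const)
    have hgc : Continuous gbar := by
      rw [hgbar]
      exact hmin.mul (Real.continuous_exp.comp (continuous_const.mul hmin).neg)
    have hgbd : ∀ s, |gbar s| ≤ M * Real.exp (a * M) := by
      intro s
      have hxm : |x (min s u)| ≤ M := hM _ (min_le_right s u)
      simp only [hgbar]
      rw [abs_mul, Real.abs_exp]
      apply mul_le_mul hxm _ (Real.exp_pos _).le hM0
      apply Real.exp_le_exp.2
      have h1 : -M ≤ x (min s u) := neg_le_of_abs_le hxm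
      nlinarith
    have hgint : Integrable gbar (μ u) := by
      apply Integrable.mono' (integrable_const (M * Real.exp (a * M)))
        hgc.aestronglyMeasurable
      exact Eventually.of_forall fun s => by simpa using hgbd s
    apply hgint.congr
    apply hae u hu
    intro s hs
    have : min s u = s := min_eq_left hs.2
    simp only [hgbar, this]
  -- truncated version of G
  have htrunc : ∀ t : ℝ, 0 ≤ t → ∃ gb : ℝ → ℝ, ∃ D : ℝ, Measurable gb ∧ 0 ≤ D ∧
      (∀ u : ℝ, 0 ≤ u → |gb u| ≤ D) ∧ (∀ u ∈ Icc (0:ℝ) t, G u = gb u) := by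
    intro t ht
    obtain ⟨M, hM0, hM⟩ := hbd t
    set gbar : ℝ → ℝ := fun s => x (min s t) * Real.exp (-(a * x (min s t))) with hgbar
    have hmin : Continuous fun s : ℝ => x (min s t) :=
      hx_cont.comp (continuous_id.min continuous_const)
    have hgc : Continuous gbar := by
      rw [hgbar]
      exact hmin.mul (Real.continuous_exp.comp (continuous_const.mul hmin).neg)
    have hgbd : ∀ s, |gbar s| ≤ M * Real.exp (a * M) := by
      intro s
      have hxm : |x (min s t)| ≤ M := hM _ (min_le_right s t)
      simp only [hgbar]
      rw [abs_mul, Real.abs_exp]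
      apply mul_le_mul hxm _ (Real.exp_pos _).le hM0
      apply Real.exp_le_exp.2
      have h1 : -M ≤ x (min s t) := neg_le_of_abs_le hxm
      nlinarith
    refine ⟨fun u => ∫ s, gbar s ∂(μ u), M * Real.exp (a * M),
      hμ_meas gbar hgc.measurable ⟨_, hgbd⟩, by positivity, ?_, ?_⟩
    · intro u hu
      haveI := hμ_prob u hu
      have hb := norm_integral_le_of_norm_le_const (μ := μ u) (f := gbar)
        (C := M * Real.exp (a * M)) (Eventually.of_forall fun s => by simpa using hgbd s)
      simpa [measure_univ] using hb
    · intro u hu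
      simp only [hG]
      apply integral_congr_ae
      apply hae u hu.1
      intro s hs
      have hst : min s t = s := min_eq_left (hs.2.trans hu.2)
      simp only [hgbar, hst]
  -- integrability of F on Ioc 0 t
  have hFi : ∀ t : ℝ, 0 ≤ t →
      IntegrableOn (fun u => -(δ * x u) + p * G u) (Ioc 0 t) volume := by
    intro t ht
    obtain ⟨gb, D, hgbm, hD0, hgbD, hgbeq⟩ := htrunc t ht
    obtain ⟨M, hM0, hM⟩ := hbd t
    have h1 : IntegrableOn (fun u => -(δ * x u) + p * gb u) (Ioc 0 t) volume := by
      apply Measure.integrableOn_of_bounded (M := δ * M + p * D) measure_Ioc_lt_top.ne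
      · exact (((hx_cont.measurable.const_mul δ).neg).add
          (hgbm.const_mul p)).aestronglyMeasurable
      · refine (ae_restrict_iff' measurableSet_Ioc).2 (Eventually.of_forall fun u hu => ?_)
        have hxu : |x u| ≤ M := hM u hu.2
        have hgu : |gb u| ≤ D := hgbD u hu.1.le
        rw [Real.norm_eq_abs]
        calc |(-(δ * x u) + p * gb u)| ≤ |(-(δ * x u))| + |p * gb u| := abs_add_le _ _
          _ = δ * |x u| + p * |gb u| := by
              rw [abs_neg, abs_mul, abs_mul, abs_of_pos hδ, abs_of_pos hp]
          _ ≤ δ * M + p * D := by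
              apply add_le_add
              · exact mul_le_mul_of_nonneg_left hxu hδ.le
              · exact mul_le_mul_of_nonneg_left hgu hp.le
    apply h1.congr_fun _ measurableSet_Ioc
    intro u hu
    dsimp only
    rw [hgbeq u ⟨hu.1.le, hu.2⟩]
  -- integrability of the exponential-weighted forcing
  have hEi : ∀ T t : ℝ, 0 ≤ T → T ≤ t →
      IntegrableOn (fun u => Real.exp (δ * u) * (p * G u)) (Ioc T t) volume := by
    intro T t hT hTt
    obtain ⟨gb, D, hgbm, hD0, hgbD, hgbeq⟩ := htrunc t (hT.trans hTt)
    have h1 : IntegrableOn (fun u => Real.exp (δ * u) * (p * gb u)) (Ioc T t) volume := by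
      apply Measure.integrableOn_of_bounded (M := Real.exp (δ * t) * (p * D))
        measure_Ioc_lt_top.ne
      · exact (hexpc.measurable.mul (hgbm.const_mul p)).aestronglyMeasurable
      · refine (ae_restrict_iff' measurableSet_Ioc).2 (Eventually.of_forall fun u hu => ?_)
        have h0u : 0 ≤ u := hT.trans hu.1.le
        have hgu : |gb u| ≤ D := hgbD u h0u
        rw [Real.norm_eq_abs, abs_mul, Real.abs_exp, abs_mul, abs_of_pos hp]
        apply mul_le_mul
        · exact Real.exp_le_exp.2 (mul_le_mul_of_nonneg_left hu.2 hδ.le)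
        · exact mul_le_mul_of_nonneg_left hgu hp.le
        · positivity
        · positivity
    apply h1.congr_fun _ measurableSet_Ioc
    intro u hu
    dsimp only
    rw [hgbeq u ⟨hT.trans hu.1.le, hu.2⟩]
  -- the key variation-of-constants identity
  have key : ∀ T t : ℝ, 0 ≤ T → T ≤ t →
      Real.exp (δ * t) * x t = Real.exp (δ * T) * x T
        + ∫ u in Ioc T t, Real.exp (δ * u) * (p * G u) := by
    intro T t hT hTt
    have h0t : (0:ℝ) ≤ t := hT.trans hTt
    obtain ⟨gb, D, hgbm, hD0, hgbD, hgbeq⟩ := htrunc t h0t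
    obtain ⟨M, hM0, hM⟩ := hbd t
    set qb : ℝ → ℝ := fun u => -(δ * x u) + p * gb u with hqb
    have hqbm : Measurable qb := ((hx_cont.measurable.const_mul δ).neg).add (hgbm.const_mul p)
    have hFeq : EqOn (fun u => -(δ * x u) + p * G u) qb (Icc 0 t) := by
      intro u hu
      simp only [hqb]
      rw [hgbeq u hu]
    have hqbi : IntegrableOn qb (Ioc 0 t) volume :=
      (hFi t h0t).congr_fun (hFeq.mono Ioc_subset_Icc_self) measurableSet_Ioc
    have hqbiTt : IntegrableOn qb (Ioc T t) volume :=
      hqbi.mono_set (Ioc_subset_Ioc hT le_rfl)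
    have hqbbd : ∀ u : ℝ, 0 ≤ u → u ≤ t → |qb u| ≤ δ * M + p * D := by
      intro u h0u hut
      have hxu : |x u| ≤ M := hM u hut
      have hgu : |gb u| ≤ D := hgbD u h0u
      simp only [hqb]
      calc |(-(δ * x u) + p * gb u)| ≤ |(-(δ * x u))| + |p * gb u| := abs_add_le _ _
        _ = δ * |x u| + p * |gb u| := by
            rw [abs_neg, abs_mul, abs_mul, abs_of_pos hδ, abs_of_pos hp]
        _ ≤ δ * M + p * D := add_le_add (mul_le_mul_of_nonneg_left hxu hδ.le)
            (mul_le_mul_of_nonneg_left hgu hp.le)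
    -- A1 : integrated equation from T to u
    have hA1 : ∀ u : ℝ, T ≤ u → u ≤ t → x u = x T + ∫ v in Ioc T u, qb v := by
      intro u hTu hut
      have h0u : 0 ≤ u := hT.trans hTu
      have e1 := hsol u h0u
      have e2 := hsol T hT
      have hi1 : IntervalIntegrable (fun w => -(δ * x w) + p * G w) volume 0 T := by
        rw [intervalIntegrable_iff_integrableOn_Ioc_of_le hT]
        exact (hFi t h0t).mono_set (Ioc_subset_Ioc le_rfl hTt)
      have hi2 : IntervalIntegrable (fun w => -(δ * x w) + p * G w) volume T u := by
        rw [intervalIntegrable_iff_integrableOn_Ioc_of_le hTu]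
        exact (hFi t h0t).mono_set (Ioc_subset_Ioc hT hut)
      have hadd := intervalIntegral.integral_add_adjacent_intervals hi1 hi2
      have hcg : ∫ v in T..u, (-(δ * x v) + p * G v)
          = ∫ v in Ioc T u, qb v := by
        rw [intervalIntegral.integral_of_le hTu]
        apply setIntegral_congr_fun measurableSet_Ioc
        exact hFeq.mono (Ioc_subset_Icc_self.trans (Icc_subset_Icc hT hut))
      rw [e1, e2, ← hadd, hcg]
      ring
    -- continuity of the primitive
    have hqbiI : IntegrableOn qb (Icc T t) volume := by
      rw [integrableOn_Icc_iff_integrableOn_Ioc]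
      exact hqbiTt
    have hprim : ContinuousOn (fun u => ∫ v in Ioc T u, qb v) (Icc T t) :=
      intervalIntegral.continuousOn_primitive hqbiI
    -- integrabilities
    have I1 : IntegrableOn (fun u => (δ * Real.exp (δ * u)) * x u) (Ioc T t) volume :=
      Continuous.integrableOn_Ioc ((continuous_const.mul hexpc).mul hx_cont)
    have I2 : IntegrableOn (fun u => Real.exp (δ * u) * qb u) (Ioc T t) volume := by
      apply Measure.integrableOn_of_bounded (M := Real.exp (δ * t) * (δ * M + p * D))
        measure_Ioc_lt_top.ne
      · exact (hexpc.measurable.mul hqbm).aestronglyMeasurable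
      · refine (ae_restrict_iff' measurableSet_Ioc).2 (Eventually.of_forall fun u hu => ?_)
        have h0u : 0 ≤ u := hT.trans hu.1.le
        rw [Real.norm_eq_abs, abs_mul, Real.abs_exp]
        apply mul_le_mul
        · exact Real.exp_le_exp.2 (mul_le_mul_of_nonneg_left hu.2 hδ.le)
        · exact hqbbd u h0u hu.2
        · exact abs_nonneg _
        · exact (Real.exp_pos _).le
    have I3 : IntegrableOn
        (fun u => (δ * Real.exp (δ * u)) * (∫ v in Ioc T u, qb v)) (Ioc T t) volume := by
      have hc : ContinuousOn
          (fun u => (δ * Real.exp (δ * u)) * (∫ v in Ioc T u, qb v)) (Icc T t) :=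
        ((continuous_const.mul hexpc).continuousOn).mul hprim
      exact (hc.integrableOn_Icc).mono_set Ioc_subset_Icc_self
    have I4 : IntegrableOn
        (fun v => (Real.exp (δ * t) - Real.exp (δ * v)) * qb v) (Ioc T t) volume := by
      apply Measure.integrableOn_of_bounded (M := Real.exp (δ * t) * (δ * M + p * D))
        measure_Ioc_lt_top.ne
      · exact (((continuous_const.sub hexpc).measurable).mul hqbm).aestronglyMeasurable
      · refine (ae_restrict_iff' measurableSet_Ioc).2 (Eventually.of_forall fun u hu => ?_)
        have h0u : 0 ≤ u := hT.trans hu.1.le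
        rw [Real.norm_eq_abs, abs_mul]
        apply mul_le_mul
        · have h2 : Real.exp (δ * u) ≤ Real.exp (δ * t) :=
            Real.exp_le_exp.2 (mul_le_mul_of_nonneg_left hu.2 hδ.le)
          have h3 := Real.exp_pos (δ * u)
          rw [abs_of_nonneg (by linarith)]
          linarith
        · exact hqbbd u h0u hu.2
        · exact abs_nonneg _
        · exact (Real.exp_pos _).le
    have I5 : IntegrableOn (fun u => (δ * Real.exp (δ * u)) * x T) (Ioc T t) volume :=
      Continuous.integrableOn_Ioc ((continuous_const.mul hexpc).mul continuous_const)
    -- putting it together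
    have hstep1 : ∫ u in Ioc T t, Real.exp (δ * u) * (p * G u)
        = ∫ u in Ioc T t, ((δ * Real.exp (δ * u)) * x u + Real.exp (δ * u) * qb u) := by
      apply setIntegral_congr_fun measurableSet_Ioc
      intro u hu
      dsimp only
      have h1 : p * G u = δ * x u + qb u := by
        simp only [hqb]
        rw [hgbeq u ⟨hT.trans hu.1.le, hu.2⟩]
        ring
      rw [h1]
      ring
    have hstep2 : ∫ u in Ioc T t, ((δ * Real.exp (δ * u)) * x u + Real.exp (δ * u) * qb u)
        = (∫ u in Ioc T t, (δ * Real.exp (δ * u)) * x u)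
          + ∫ u in Ioc T t, Real.exp (δ * u) * qb u := integral_add I1 I2
    have hstep3 : ∫ u in Ioc T t, (δ * Real.exp (δ * u)) * x u
        = (∫ u in Ioc T t, ((δ * Real.exp (δ * u)) * x T
            + (δ * Real.exp (δ * u)) * (∫ v in Ioc T u, qb v))) := by
      apply setIntegral_congr_fun measurableSet_Ioc
      intro u hu
      dsimp only
      rw [hA1 u hu.1.le hu.2]
      ring
    have hstep4 : (∫ u in Ioc T t, ((δ * Real.exp (δ * u)) * x T
            + (δ * Real.exp (δ * u)) * (∫ v in Ioc T u, qb v)))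
        = (Real.exp (δ * t) - Real.exp (δ * T)) * x T
          + ∫ v in Ioc T t, (Real.exp (δ * t) - Real.exp (δ * v)) * qb v := by
      rw [integral_add I5 I3]
      rw [integral_mul_const, exp_deriv_integral δ T t hTt]
      rw [fubini_ibp hqbm hqbiTt]
    have hstep5 : (∫ v in Ioc T t, (Real.exp (δ * t) - Real.exp (δ * v)) * qb v)
          + (∫ u in Ioc T t, Real.exp (δ * u) * qb u)
        = Real.exp (δ * t) * (x t - x T) := by
      rw [← integral_add I4 I2]
      have hcg : ∫ v in Ioc T t, ((Real.exp (δ * t) - Real.exp (δ * v)) * qb v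
          + Real.exp (δ * v) * qb v) = ∫ v in Ioc T t, Real.exp (δ * t) * qb v := by
        apply setIntegral_congr_fun measurableSet_Ioc
        intro v _
        dsimp only
        ring
      rw [hcg, integral_const_mul]
      have := hA1 t hTt le_rfl
      have h2 : ∫ v in Ioc T t, qb v = x t - x T := by linarith
      rw [h2]
    have htotal : ∫ u in Ioc T t, Real.exp (δ * u) * (p * G u)
        = (Real.exp (δ * t) - Real.exp (δ * T)) * x T + Real.exp (δ * t) * (x t - x T) := by
      rw [hstep1, hstep2, hstep3, hstep4]
      linarith [hstep5]
    rw [htotal]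
    ring
  -- positivity of x on [0, ∞)
  have hpos : ∀ t : ℝ, 0 ≤ t → 0 < x t := by
    by_contra hcon
    push_neg at hcon
    obtain ⟨t1, ht1, hx1⟩ := hcon
    set S : Set ℝ := {t | 0 ≤ t ∧ x t ≤ 0} with hS
    have hSne : S.Nonempty := ⟨t1, ht1, hx1⟩
    have hScl : IsClosed S := by
      have : S = Ici 0 ∩ x ⁻¹' Iic 0 := by
        ext s; simp [hS, mem_Ici, mem_Iic, mem_preimage]
      rw [this]
      exact isClosed_Ici.inter (isClosed_Iic.preimage hx_cont)
    have hbdd : BddBelow S := ⟨0, fun s hs => hs.1⟩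
    set t0 := sInf S with ht0
    have ht0S : t0 ∈ S := hScl.csInf_mem hSne hbdd
    have ht0pos : 0 < t0 := by
      rcases ht0S.1.lt_or_eq with h1 | h1
      · exact h1
      · exfalso
        have : x t0 ≤ 0 := ht0S.2
        rw [← h1, hx0] at this
        linarith
    have hxs : ∀ s : ℝ, s < t0 → 0 ≤ x s := by
      intro s hs
      rcases le_or_gt s 0 with h0 | h0
      · rw [hx_init s h0]; exact hφ_nonneg s h0
      · by_contra hneg
        push_neg at hneg
        have hmem : s ∈ S := ⟨h0.le, hneg.le⟩
        exact absurd (csInf_le hbdd hmem) (not_le.2 hs)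
    have hInt : 0 ≤ ∫ u in Ioc 0 t0, Real.exp (δ * u) * (p * G u) := by
      rw [integral_Ioc_eq_integral_Ioo]
      apply setIntegral_nonneg measurableSet_Ioo
      intro u hu
      have hGu : 0 ≤ G u := by
        simp only [hG]
        apply integral_nonneg_of_ae
        apply hae u hu.1.le
        intro s hs
        have hxs' : 0 ≤ x s := hxs s (lt_of_le_of_lt hs.2 hu.2)
        exact mul_nonneg hxs' (Real.exp_pos _).le
      have := Real.exp_pos (δ * u)
      positivity
    have hkey := key 0 t0 le_rfl ht0S.1
    rw [mul_zero, Real.exp_zero, one_mul, hx0] at hkey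
    have hxt0 : x t0 ≤ 0 := ht0S.2
    nlinarith [Real.exp_pos (δ * t0)]
  have hnn : ∀ t : ℝ, 0 ≤ x t := by
    intro t
    rcases le_or_gt t 0 with ht | ht
    · rw [hx_init t ht]; exact hφ_nonneg t ht
    · exact (hpos t ht.le).le
  -- upper bound on G
  have hGle : ∀ u : ℝ, 0 ≤ u → G u ≤ 1 / (a * Real.exp 1) := by
    intro u hu
    haveI := hμ_prob u hu
    have h1 : ∫ _s : ℝ, (1 / (a * Real.exp 1)) ∂(μ u) = 1 / (a * Real.exp 1) := by
      simp [measure_univ]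
    calc G u ≤ ∫ _s : ℝ, (1 / (a * Real.exp 1)) ∂(μ u) :=
          integral_mono (hmu_int u hu) (integrable_const _) (fun s => f_le_inv ha)
      _ = 1 / (a * Real.exp 1) := h1
  -- uniform upper bound on x
  set c0 : ℝ := p * (1 / (a * Real.exp 1)) / δ with hc0
  have hc0nn : 0 ≤ c0 := by positivity
  set Bnd : ℝ := φ 0 + c0 with hBnd
  have hxle : ∀ t : ℝ, 0 ≤ t → x t ≤ Bnd := by
    intro t ht
    have hkey := key 0 t le_rfl ht
    rw [mul_zero, Real.exp_zero, one_mul, hx0] at hkey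
    have hcomp : ∫ u in Ioc 0 t, Real.exp (δ * u) * (p * G u)
        ≤ ∫ u in Ioc 0 t, Real.exp (δ * u) * (p * (1 / (a * Real.exp 1))) := by
      apply setIntegral_mono_on (hEi 0 t le_rfl ht)
        (Continuous.integrableOn_Ioc (hexpc.mul continuous_const)) measurableSet_Ioc
      intro u hu
      have h1 := hGle u hu.1.le
      have h2 := Real.exp_pos (δ * u)
      exact mul_le_mul_of_nonneg_left (mul_le_mul_of_nonneg_left h1 hp.le) h2.le
    have hval : ∫ u in Ioc 0 t, Real.exp (δ * u) * (p * (1 / (a * Real.exp 1)))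
        = c0 * (Real.exp (δ * t) - 1) := by
      have h2 := exp_deriv_integral δ 0 t ht
      rw [mul_zero, Real.exp_zero] at h2
      have h3 : (fun u => Real.exp (δ * u) * (p * (1 / (a * Real.exp 1))))
          = fun u => c0 * (δ * Real.exp (δ * u)) := by
        ext u
        rw [hc0]
        field_simp
      rw [h3, integral_const_mul, h2]
    rw [hval] at hcomp
    have hE : (0:ℝ) < Real.exp (δ * t) := Real.exp_pos _
    have hE1' : (1:ℝ) ≤ Real.exp (δ * t) := Real.one_le_exp (by positivity)
    have hfinal : Real.exp (δ * t) * x t ≤ Real.exp (δ * t) * Bnd := by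
      rw [hBnd]
      nlinarith
    exact le_of_mul_le_mul_left hfinal hE
  -- filter boundedness facts
  have hevnn : ∀ᶠ t in atTop, 0 ≤ x t := Eventually.of_forall hnn
  have hevB : ∀ᶠ t in atTop, x t ≤ Bnd := by
    filter_upwards [eventually_ge_atTop (0:ℝ)] with t ht using hxle t ht
  have hBddAbove : IsBoundedUnder (· ≤ ·) atTop x := ⟨Bnd, eventually_map.2 hevB⟩
  have hBddBelow : IsBoundedUnder (· ≥ ·) atTop x := ⟨0, eventually_map.2 hevnn⟩
  set L : ℝ := limsup x atTop with hL
  have hL0 : 0 ≤ L :=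
    le_limsup_of_frequently_le (hevnn.frequently) hBddAbove
  -- the main limsup estimate
  have hLK : ∀ ε : ℝ, 0 < ε → L ≤ (L + ε) / (1 + a * (L + ε)) := by
    intro ε hε
    set K : ℝ := (L + ε) / (1 + a * (L + ε)) with hK
    have hLε : 0 < L + ε := by linarith
    have hKnn : 0 ≤ K := by positivity
    have hev : ∀ᶠ s in atTop, x s ≤ L + ε := by
      have := eventually_lt_of_limsup_lt (show L < L + ε by linarith) hBddAbove
      exact this.mono fun s hs => hs.le
    obtain ⟨T₀, hT₀⟩ := eventually_atTop.1 hev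
    obtain ⟨T₁, hT₁⟩ := eventually_atTop.1 (hh_tend.eventually_ge_atTop (max T₀ 0))
    set T2 : ℝ := max T₁ 0 with hT2
    have h0T2 : (0:ℝ) ≤ T2 := le_max_right _ _
    have hGK : ∀ u : ℝ, T2 ≤ u → G u ≤ K := by
      intro u hu
      have h0u : 0 ≤ u := h0T2.trans hu
      haveI := hμ_prob u h0u
      have hKi : ∫ _s : ℝ, K ∂(μ u) = K := by simp [measure_univ]
      simp only [hG]
      rw [← hKi]
      apply integral_mono_ae (hmu_int u h0u) (integrable_const _)
      apply hae u h0u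
      intro s hs
      have hhu : max T₀ 0 ≤ h u := hT₁ u (le_trans (le_max_left _ _) hu)
      have hsT : max T₀ 0 ≤ s := le_trans hhu hs.1
      have hxs1 : x s ≤ L + ε := hT₀ s (le_trans (le_max_left _ _) hsT)
      exact f_le_frac ha (hnn s) hxs1
    have hcomp : ∀ t : ℝ, T2 ≤ t →
        x t ≤ Real.exp (δ * T2) * x T2 / Real.exp (δ * t) + (p / δ) * K := by
      intro t ht
      have hkey := key T2 t h0T2 ht
      have hle : ∫ u in Ioc T2 t, Real.exp (δ * u) * (p * G u)
          ≤ ∫ u in Ioc T2 t, Real.exp (δ * u) * (p * K) := by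
        apply setIntegral_mono_on (hEi T2 t h0T2 ht)
          (Continuous.integrableOn_Ioc (hexpc.mul continuous_const)) measurableSet_Ioc
        intro u hu
        have h1 := hGK u hu.1.le
        have h2 := Real.exp_pos (δ * u)
        exact mul_le_mul_of_nonneg_left (mul_le_mul_of_nonneg_left h1 hp.le) h2.le
      have hval : ∫ u in Ioc T2 t, Real.exp (δ * u) * (p * K)
          = ((p * K) / δ) * (Real.exp (δ * t) - Real.exp (δ * T2)) := by
        have h2 := exp_deriv_integral δ T2 t ht
        have h3 : (fun u => Real.exp (δ * u) * (p * K))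
            = fun u => ((p * K) / δ) * (δ * Real.exp (δ * u)) := by
          ext u
          field_simp
        rw [h3, integral_const_mul, h2]
      rw [hval] at hle
      have hE : (0:ℝ) < Real.exp (δ * t) := Real.exp_pos _
      have hET : (0:ℝ) < Real.exp (δ * T2) := Real.exp_pos _
      have hpKδ : 0 ≤ (p * K) / δ := by positivity
      have h2 : Real.exp (δ * t) * x t
          ≤ Real.exp (δ * T2) * x T2 + ((p / δ) * K) * Real.exp (δ * t) := by
        have : ((p * K) / δ) * (Real.exp (δ * t) - Real.exp (δ * T2))
            ≤ ((p / δ) * K) * Real.exp (δ * t) := by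
          have hrw : (p * K) / δ = (p / δ) * K := by ring
          rw [hrw]
          nlinarith
        linarith
      rw [← mul_le_mul_iff_right₀ hE]
      calc Real.exp (δ * t) * x t
          ≤ Real.exp (δ * T2) * x T2 + ((p / δ) * K) * Real.exp (δ * t) := h2
        _ = Real.exp (δ * t) * (Real.exp (δ * T2) * x T2 / Real.exp (δ * t) + (p / δ) * K) := by
            field_simp
    have htend : Tendsto (fun t => Real.exp (δ * T2) * x T2 / Real.exp (δ * t) + (p / δ) * K)
        atTop (nhds ((p / δ) * K)) := by
      have h1 : Tendsto (fun t : ℝ => Real.exp (δ * T2) * x T2 / Real.exp (δ * t))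
          atTop (nhds 0) := by
        apply Tendsto.div_atTop tendsto_const_nhds
        exact Real.tendsto_exp_atTop.comp (Tendsto.const_mul_atTop hδ tendsto_id)
      simpa using h1.add tendsto_const_nhds
    have hLle : L ≤ (p / δ) * K := by
      have hub : limsup (fun t => Real.exp (δ * T2) * x T2 / Real.exp (δ * t) + (p / δ) * K)
          atTop = (p / δ) * K := htend.limsup_eq
      refine le_trans (limsup_le_limsup ?_ ?_ ?_) hub.le
      · filter_upwards [eventually_ge_atTop T2] with t ht using hcomp t ht
      · exact isCoboundedUnder_le_of_eventually_le atTop hevnn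
      · exact htend.isBoundedUnder_le
    have hpδ1 : p / δ ≤ 1 := by
      rw [div_le_one hδ]
      exact hpδ
    calc L ≤ (p / δ) * K := hLle
      _ ≤ 1 * K := mul_le_mul_of_nonneg_right hpδ1 hKnn
      _ = K := one_mul K
  -- conclude L = 0
  have hLzero : L = 0 := by
    by_contra hne
    have hLpos : 0 < L := lt_of_le_of_ne hL0 (Ne.symm hne)
    have hεpos : 0 < a * L ^ 2 := by positivity
    have h1 := hLK (a * L ^ 2) hεpos
    have hd : (0:ℝ) < 1 + a * (L + a * L ^ 2) := by positivity
    rw [le_div_iff₀ hd] at h1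
    nlinarith
  -- conclude convergence
  have hliminf : liminf x atTop = 0 := by
    apply le_antisymm
    · rw [← hLzero]
      exact liminf_le_limsup hBddAbove hBddBelow
    · exact le_liminf_of_le (isCoboundedUnder_ge_of_eventually_le atTop hevB) hevnn
  exact tendsto_of_liminf_eq_limsup hliminf hLzero hBddAbove hBddBelow
end
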